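/- arXiv:2307.09429 — 4 statements merged into one kernel-verified Lean document; each statement's English description precedes it below -/
import Mathlib

section
/- The simplex S_d = conv{−𝟙, e₁, …, e_d} ⊂ ℝ^d has lattice diameter 1 + 1/d with respect to ℤ^d, and is lattice complete with respect to ℤ^d. -/
open scoped Pointwise

noncomputable section

/-- Standard dot product on `Fin d → ℝ`. -/
def dot {d : ℕ} (x y : Fin d → ℝ) : ℝ := ∑ i, x i * y i

/-- A convex body: convex, compact, with nonempty interior. -/
def IsConvexBody {d : ℕ} (C : Set (Fin d → ℝ)) : Prop :=
  Convex ℝ C ∧ IsCompact C ∧ (interior C).Nonempty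

/-- A full-dimensional lattice: the integer span of a basis of `ℝ^d`. -/
def IsLattice {d : ℕ} (L : Set (Fin d → ℝ)) : Prop :=
  ∃ B : Module.Basis (Fin d) ℝ (Fin d → ℝ),
    L = Set.range (fun z : Fin d → ℤ => ∑ i, (z i : ℝ) • B i)

/-- The dual lattice: vectors pairing integrally with all lattice vectors. -/
def dualLattice {d : ℕ} (L : Set (Fin d → ℝ)) : Set (Fin d → ℝ) :=
  {y | ∀ x ∈ L, ∃ n : ℤ, dot x y = (n : ℝ)}

/-- Width of `C` in direction `y`: `sup_{a,b ∈ C} y·(a-b)`. -/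
def widthDir {d : ℕ} (C : Set (Fin d → ℝ)) (y : Fin d → ℝ) : ℝ :=
  sSup {r | ∃ a ∈ C, ∃ b ∈ C, r = dot y (a - b)}

/-- Lattice width of `C` with respect to a lattice `L`. -/
def latticeWidth {d : ℕ} (C L : Set (Fin d → ℝ)) : ℝ :=
  sInf {w | ∃ y ∈ dualLattice L, y ≠ 0 ∧ w = widthDir C y}

/-- A primitive lattice vector: a nonzero lattice vector such that no proper
fraction of it is a lattice vector. -/
def IsPrimitiveVec {d : ℕ} (L : Set (Fin d → ℝ)) (v : Fin d → ℝ) : Prop :=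
  v ∈ L ∧ v ≠ 0 ∧ ∀ t : ℝ, 0 < t → t < 1 → t • v ∉ L

/-- Lattice diameter of `C` w.r.t. `L`: the supremum of lattice lengths of
lattice segments contained in `C`, a segment of lattice length `t` being one of
the form `[a, a + t • v]` with `v` primitive in `L`. -/
def latticeDiam {d : ℕ} (C L : Set (Fin d → ℝ)) : ℝ :=
  sSup {t : ℝ | 0 ≤ t ∧ ∃ a v, IsPrimitiveVec L v ∧ segment ℝ a (a + t • v) ⊆ C}

/-- The polar body `K* = {y : x·y ≤ 1 ∀ x ∈ K}`. -/
def polarBody {d : ℕ} (K : Set (Fin d → ℝ)) : Set (Fin d → ℝ) :=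
  {y | ∀ x ∈ K, dot x y ≤ 1}

/-- First successive minimum of `K` w.r.t. the lattice `L`. -/
def lambda1 {d : ℕ} (K L : Set (Fin d → ℝ)) : ℝ :=
  sInf {r : ℝ | 0 ≤ r ∧ ∃ x ∈ L, x ≠ 0 ∧ x ∈ r • K}

/-- The difference body `C - C`. -/
def diffBody {d : ℕ} (C : Set (Fin d → ℝ)) : Set (Fin d → ℝ) := C - C

/-- `C` is lattice reduced w.r.t. `L`: it is a convex body and no convex body
properly contained in it has the same lattice width. -/
def IsLatticeReduced {d : ℕ} (C L : Set (Fin d → ℝ)) : Prop :=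
  IsConvexBody C ∧ ∀ C', IsConvexBody C' → C' ⊂ C → latticeWidth C' L ≠ latticeWidth C L

/-- `C` is lattice complete w.r.t. `L`: it is a convex body and no convex body
properly containing it has the same lattice diameter. -/
def IsLatticeComplete {d : ℕ} (C L : Set (Fin d → ℝ)) : Prop :=
  IsConvexBody C ∧ ∀ C', IsConvexBody C' → C ⊂ C' → latticeDiam C' L ≠ latticeDiam C L

/-- A width direction of `C`: a nonzero dual lattice vector realizing the
lattice width. -/
def IsWidthDirection {d : ℕ} (C L : Set (Fin d → ℝ)) (y : Fin d → ℝ) : Prop :=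
  y ∈ dualLattice L ∧ y ≠ 0 ∧ widthDir C y = latticeWidth C L

/-- A diameter direction of `C`: a primitive lattice vector parallel to a
lattice segment in `C` of maximal lattice length. -/
def IsDiameterDirection {d : ℕ} (C L : Set (Fin d → ℝ)) (v : Fin d → ℝ) : Prop :=
  IsPrimitiveVec L v ∧ ∃ a, segment ℝ a (a + latticeDiam C L • v) ⊆ C

/-- A diameter segment of `C`: a lattice segment contained in `C` whose lattice
length equals the lattice diameter of `C`. -/
def IsDiameterSegment {d : ℕ} (C L : Set (Fin d → ℝ)) (a b : Fin d → ℝ) : Prop :=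
  segment ℝ a b ⊆ C ∧ ∃ v, IsPrimitiveVec L v ∧ b = a + latticeDiam C L • v

/-- A polytope: the convex hull of finitely many points. -/
def IsPolytope {d : ℕ} (C : Set (Fin d → ℝ)) : Prop :=
  ∃ V : Finset (Fin d → ℝ), C = convexHull ℝ (V : Set (Fin d → ℝ))

/-- A facet of a `d`-dimensional body: a face (extreme subset) of dimension `d-1`. -/
def IsFacetOf {d : ℕ} (P F : Set (Fin d → ℝ)) : Prop :=
  IsExtreme ℝ P F ∧ Module.finrank ℝ (vectorSpan ℝ F) + 1 = d

/-- The integer lattice `ℤ^d` inside `Fin d → ℝ`. -/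
def intLattice (d : ℕ) : Set (Fin d → ℝ) := {x | ∀ i, ∃ n : ℤ, x i = (n : ℝ)}

/-- The simplex `S_d = conv{-𝟙, e₁, …, e_d}`. -/
def simplexS (d : ℕ) : Set (Fin d → ℝ) :=
  convexHull ℝ (insert (fun _ : Fin d => (-1 : ℝ))
    (Set.range (fun i : Fin d => (Pi.single i (1 : ℝ) : Fin d → ℝ))))

set_option maxHeartbeats 1000000

open Finset in
lemma comb_key (D : ℕ) (hD : 0 < D) (σ : ℤ) (W : Fin (D+1) → ℤ)
    (hdvd : ∀ k, ((D:ℤ)+1) ∣ (W k + σ)) (hsum : ∑ k, W k = 0) (hne : ∃ k, W k ≠ 0) :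
    (D : ℤ) ≤ ∑ k ∈ Finset.univ.filter (fun k => 0 < W k), W k := by
  set m : ℤ := (D:ℤ) + 1 with hm
  have hmpos : (0:ℤ) < m := by positivity
  set r : ℤ := σ % m with hrdef
  have hr0 : 0 ≤ r := Int.emod_nonneg σ (by positivity)
  have hrD : r < m := Int.emod_lt_of_pos σ hmpos
  have hdvdσr : m ∣ σ - r := Int.dvd_self_sub_of_emod_eq rfl
  have hdvd' : ∀ k, m ∣ (W k + r) := by
    intro k
    have : W k + r = (W k + σ) - (σ - r) := by ring
    rw [this]
    exact dvd_sub (hdvd k) hdvdσr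
  have hpos_exists : ∃ k, 0 < W k := by
    by_contra h
    push_neg at h
    obtain ⟨k₀, hk₀⟩ := hne
    have hlt : ∑ k, W k < ∑ k : Fin (D+1), (0:ℤ) :=
      Finset.sum_lt_sum (fun i _ => h i) ⟨k₀, Finset.mem_univ _, lt_of_le_of_ne (h k₀) hk₀⟩
    simp [hsum] at hlt
  have hAnonneg : ∀ k ∈ Finset.univ.filter (fun k => 0 < W k), 0 ≤ W k := by
    intro k hk
    exact le_of_lt (Finset.mem_filter.mp hk).2
  rcases eq_or_lt_of_le hr0 with hr | hr
  · -- r = 0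
    obtain ⟨k, hk⟩ := hpos_exists
    have hdvdk : m ∣ W k := by
      have := hdvd' k; rwa [← hr, add_zero] at this
    have h1 : m ≤ W k := Int.le_of_dvd hk hdvdk
    have h2 : W k ≤ ∑ k ∈ Finset.univ.filter (fun k => 0 < W k), W k :=
      Finset.single_le_sum hAnonneg (Finset.mem_filter.mpr ⟨Finset.mem_univ _, hk⟩)
    linarith
  · -- 0 < r
    have hposge : ∀ k, 0 < W k → m - r ≤ W k := by
      intro k hk
      have := Int.le_of_dvd (by linarith) (hdvd' k)
      linarith
    have hnegle : ∀ k, ¬(0 < W k) → W k ≤ -r := by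
      intro k hk
      push_neg at hk
      by_contra h
      push_neg at h
      have h2 : 0 < W k + r := by linarith
      have := Int.le_of_dvd h2 (hdvd' k)
      linarith
    have hneg_exists : ∃ k, ¬ (0 < W k) := by
      by_contra h
      push_neg at h
      obtain ⟨k₀, hk₀⟩ := hpos_exists
      have hlt : ∑ k : Fin (D+1), (0:ℤ) < ∑ k, W k :=
        Finset.sum_lt_sum (fun i _ => le_of_lt (h i)) ⟨k₀, Finset.mem_univ _, hk₀⟩
      simp [hsum] at hlt
    set A := Finset.univ.filter (fun k => 0 < W k) with hA
    set B := Finset.univ.filter (fun k => ¬ 0 < W k) with hB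
    have hcard : A.card + B.card = D + 1 := by
      rw [hA, hB]
      simpa using Finset.card_filter_add_card_filter_not
        (s := (Finset.univ : Finset (Fin (D+1)))) (p := fun k => 0 < W k)
    have hsplit : ∑ k ∈ A, W k + ∑ k ∈ B, W k = 0 := by
      rw [hA, hB, Finset.sum_filter_add_sum_filter_not, hsum]
    have hA1 : 1 ≤ A.card := by
      obtain ⟨k, hk⟩ := hpos_exists
      exact Finset.card_pos.mpr ⟨k, Finset.mem_filter.mpr ⟨Finset.mem_univ _, hk⟩⟩
    have hB1 : 1 ≤ B.card := by
      obtain ⟨k, hk⟩ := hneg_exists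
      exact Finset.card_pos.mpr ⟨k, Finset.mem_filter.mpr ⟨Finset.mem_univ _, hk⟩⟩
    have bound1 : (A.card : ℤ) * (m - r) ≤ ∑ k ∈ A, W k := by
      have := Finset.card_nsmul_le_sum A W (m - r)
        (fun i hi => hposge i (Finset.mem_filter.mp hi).2)
      simpa [nsmul_eq_mul] using this
    have bound2 : ∑ k ∈ B, W k ≤ (B.card : ℤ) * (-r) := by
      have := Finset.sum_le_card_nsmul B W (-r)
        (fun i hi => hnegle i (Finset.mem_filter.mp hi).2)
      simpa [nsmul_eq_mul] using this
    have hr1 : 1 ≤ r := hr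
    have hrD' : r ≤ (D:ℤ) := by omega
    have hcardZ : (A.card : ℤ) + (B.card : ℤ) = (D:ℤ) + 1 := by exact_mod_cast hcard
    have hA1' : (1:ℤ) ≤ (A.card:ℤ) := by exact_mod_cast hA1
    have hB1' : (1:ℤ) ≤ (B.card:ℤ) := by exact_mod_cast hB1
    nlinarith [mul_nonneg (by linarith : (0:ℤ) ≤ (B.card:ℤ) - 1) (by linarith : (0:ℤ) ≤ r - 1),
      mul_nonneg (by linarith : (0:ℤ) ≤ (A.card:ℤ) - 1) (by linarith : (0:ℤ) ≤ (D:ℤ) - r)]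


/-- H-description of the simplex. -/
def Hset (d : ℕ) : Set (Fin d → ℝ) :=
  {x | (∑ j, x j) ≤ 1 ∧ ∀ i, (∑ j, x j) - 1 ≤ ((d:ℝ) + 1) * x i}

lemma convex_Hset (d : ℕ) : Convex ℝ (Hset d) := by
  intro x hx y hy a b ha hb hab
  have hsum : (∑ j, (a • x + b • y) j) = a * (∑ j, x j) + b * (∑ j, y j) := by
    simp [Finset.mul_sum, Finset.sum_add_distrib, mul_comm]
  constructor
  · rw [hsum]; nlinarith [hx.1, hy.1]
  · intro i
    rw [hsum]
    have h1 := hx.2 i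
    have h2 := hy.2 i
    have : (a • x + b • y) i = a * x i + b * y i := by simp
    rw [this]
    nlinarith [hx.2 i, hy.2 i]

lemma simplex_eq_Hset (d : ℕ) : simplexS d = Hset d := by
  apply le_antisymm
  · apply convexHull_min _ (convex_Hset d)
    rintro x (rfl | ⟨i, rfl⟩)
    · have hdnn : (0:ℝ) ≤ d := Nat.cast_nonneg d
      constructor
      · simp; linarith
      · intro i; simp; linarith
    · constructor
      · simp [Finset.sum_pi_single']
      · intro k
        rw [Finset.sum_pi_single']
        simp only [Finset.mem_univ, if_true]
        rcases eq_or_ne k i with rfl | h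
        · simp; positivity
        · rw [Pi.single_apply, if_neg h]; simp
  · intro x hx
    obtain ⟨hx1, hx2⟩ := hx
    set S := ∑ j, x j with hS
    set w : Fin (d+1) → ℝ :=
      Fin.cons ((1 - S)/((d:ℝ)+1)) (fun i => (((d:ℝ)+1) * x i - S + 1)/((d:ℝ)+1)) with hw
    set z : Fin (d+1) → (Fin d → ℝ) :=
      Fin.cons (fun _ => (-1:ℝ)) (fun i => Pi.single i (1:ℝ)) with hz
    have hd1 : ((d:ℝ)+1) ≠ 0 := by positivity
    have hwnn : ∀ k ∈ Finset.univ, 0 ≤ w k := by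
      intro k _
      refine Fin.cases ?_ ?_ k
      · simp only [hw, Fin.cons_zero]
        apply div_nonneg (by linarith) (by positivity)
      · intro i
        simp only [hw, Fin.cons_succ]
        apply div_nonneg (by linarith [hx2 i]) (by positivity)
    have hwsum : ∑ k, w k = 1 := by
      rw [hw, Fin.sum_cons]
      have : ∑ i : Fin d, (((d:ℝ)+1) * x i - S + 1)/((d:ℝ)+1)
          = (((d:ℝ)+1) * S - (d:ℝ) * S + (d:ℝ))/((d:ℝ)+1) := by
        rw [← Finset.sum_div]
        congr 1
        rw [Finset.sum_add_distrib, Finset.sum_sub_distrib, ← Finset.mul_sum]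
        simp [hS]
      rw [this]
      field_simp
      ring
    have hzmem : ∀ k ∈ Finset.univ, z k ∈
        (insert (fun _ : Fin d => (-1 : ℝ))
          (Set.range (fun i : Fin d => (Pi.single i (1 : ℝ) : Fin d → ℝ)))) := by
      intro k _
      refine Fin.cases ?_ ?_ k
      · simp only [hz, Fin.cons_zero]; exact Set.mem_insert _ _
      · intro i
        simp only [hz, Fin.cons_succ]
        exact Set.mem_insert_of_mem _ ⟨i, rfl⟩
    have hcomb : ∑ k, w k • z k = x := by
      funext j
      have happ : (∑ k, w k • z k) j = ∑ k, w k * z k j := by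
        rw [Finset.sum_apply]; simp
      rw [happ, Fin.sum_univ_succ]
      simp only [hw, hz, Fin.cons_zero, Fin.cons_succ]
      have hterm : ∀ i : Fin d, (((d:ℝ)+1) * x i - S + 1)/((d:ℝ)+1) * (Pi.single i (1:ℝ) : Fin d → ℝ) j
          = if j = i then (((d:ℝ)+1) * x i - S + 1)/((d:ℝ)+1) else 0 := by
        intro i
        rw [Pi.single_apply]
        split <;> simp
      simp_rw [hterm]
      rw [Finset.sum_ite_eq]
      simp only [Finset.mem_univ, if_true]
      field_simp
      ring
    rw [← hcomb, simplexS]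
    exact Convex.sum_mem (convex_convexHull ℝ _) hwnn hwsum
      (fun k hk => subset_convexHull ℝ _ (hzmem k hk))


lemma diam_upper (d : ℕ) (hd : 0 < d) (t : ℝ) (ht : 0 ≤ t) (a v : Fin d → ℝ)
    (hv : v ∈ intLattice d) (hv0 : v ≠ 0) (ha : a ∈ Hset d) (hb : a + t • v ∈ Hset d) :
    t ≤ 1 + 1/(d:ℝ) := by
  choose n hn using hv
  set σ : ℤ := ∑ i, n i with hσ
  set W : Fin (d+1) → ℤ := Fin.cons (-σ) (fun i => ((d:ℤ)+1) * n i - σ) with hW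
  have hdvd : ∀ k, ((d:ℤ)+1) ∣ (W k + σ) := by
    intro k
    refine Fin.cases ?_ ?_ k
    · simp [hW]
    · intro i
      simp only [hW, Fin.cons_succ]
      have : ((d:ℤ)+1) * n i - σ + σ = ((d:ℤ)+1) * n i := by ring
      rw [this]
      exact dvd_mul_right _ _
  have hsumconst : ∑ _i : Fin d, σ = (d:ℤ) * σ := by
    simp [mul_comm]
  have hsum : ∑ k, W k = 0 := by
    rw [hW, Fin.sum_cons, Finset.sum_sub_distrib, ← Finset.mul_sum, hsumconst, ← hσ]
    ring
  have hne : ∃ k, W k ≠ 0 := by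
    by_contra h
    push_neg at h
    have h0 : σ = 0 := by
      have := h 0
      simp [hW] at this
      exact this
    apply hv0
    funext i
    have hi := h i.succ
    simp only [hW, Fin.cons_succ, h0, sub_zero, mul_eq_zero] at hi
    rcases hi with hi | hi
    · exfalso; omega
    · have : v i = ((0:ℤ):ℝ) := by rw [hn i, hi]
      simpa using this
  set A := Finset.univ.filter (fun k => 0 < W k) with hA
  have key : (d:ℤ) ≤ ∑ k ∈ A, W k := comb_key d hd σ W hdvd hsum hne
  -- functionals
  set F : Fin (d+1) → (Fin d → ℝ) → ℝ :=
    Fin.cons (fun x => 1 - ∑ j, x j) (fun i x => ((d:ℝ)+1) * x i - (∑ j, x j) + 1) with hF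
  have hFnonneg : ∀ k, ∀ x ∈ Hset d, 0 ≤ F k x := by
    intro k
    refine Fin.cases ?_ ?_ k
    · intro x hx; simp only [hF, Fin.cons_zero]; linarith [hx.1]
    · intro i x hx; simp only [hF, Fin.cons_succ]; linarith [hx.2 i]
  have hFsum : ∀ x : Fin d → ℝ, ∑ k, F k x = (d:ℝ)+1 := by
    intro x
    rw [Fin.sum_univ_succ]
    simp only [hF, Fin.cons_zero, Fin.cons_succ]
    have : ∑ i : Fin d, (((d:ℝ)+1) * x i - (∑ j, x j) + 1)
        = ((d:ℝ)+1) * (∑ j, x j) - (d:ℝ) * (∑ j, x j) + (d:ℝ) := by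
      rw [Finset.sum_add_distrib, Finset.sum_sub_distrib, ← Finset.mul_sum]
      simp [mul_comm]
    rw [this]
    ring
  have hsv : ∑ j, v j = ((σ:ℤ):ℝ) := by
    rw [hσ]
    push_cast
    exact Finset.sum_congr rfl (fun j _ => hn j)
  have hsab : ∑ j, (a + t • v) j = (∑ j, a j) + t * ((σ:ℤ):ℝ) := by
    simp only [Pi.add_apply, Pi.smul_apply, smul_eq_mul]
    rw [Finset.sum_add_distrib, ← Finset.mul_sum, hsv]
  have hFdiff : ∀ k, t * ((W k : ℤ) : ℝ) = F k (a + t • v) - F k a := by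
    intro k
    refine Fin.cases ?_ ?_ k
    · simp only [hW, hF, Fin.cons_zero]
      rw [hsab]
      push_cast
      ring
    · intro i
      simp only [hW, hF, Fin.cons_succ]
      rw [hsab]
      simp only [Pi.add_apply, Pi.smul_apply, smul_eq_mul, hn i]
      push_cast
      ring
  have e2 : ∑ k ∈ A, F k (a + t • v) ≤ (d:ℝ)+1 := by
    calc ∑ k ∈ A, F k (a + t • v) ≤ ∑ k, F k (a + t • v) :=
          Finset.sum_le_sum_of_subset_of_nonneg (Finset.filter_subset _ _)
            (fun k _ _ => hFnonneg k _ hb)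
      _ = (d:ℝ)+1 := hFsum _
  have e3 : (0:ℝ) ≤ ∑ k ∈ A, F k a := Finset.sum_nonneg (fun k _ => hFnonneg k _ ha)
  have e1 : t * ((∑ k ∈ A, W k : ℤ):ℝ) = ∑ k ∈ A, F k (a + t • v) - ∑ k ∈ A, F k a := by
    rw [← Finset.sum_sub_distrib]
    push_cast
    rw [Finset.mul_sum]
    exact Finset.sum_congr rfl (fun k _ => hFdiff k)
  have hP : t * ((∑ k ∈ A, W k : ℤ):ℝ) ≤ (d:ℝ)+1 := by rw [e1]; linarith
  have hdR : (0:ℝ) < d := by exact_mod_cast hd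
  have keyR : (d:ℝ) ≤ ((∑ k ∈ A, W k : ℤ):ℝ) := by exact_mod_cast key
  have htd : t * (d:ℝ) ≤ (d:ℝ) + 1 := by
    calc t * (d:ℝ) ≤ t * ((∑ k ∈ A, W k : ℤ):ℝ) := mul_le_mul_of_nonneg_left keyR ht
      _ ≤ (d:ℝ)+1 := hP
  rw [show (1:ℝ) + 1/(d:ℝ) = ((d:ℝ)+1)/(d:ℝ) by field_simp]
  rw [le_div_iff₀ hdR]
  linarith


lemma no_int_between (t : ℝ) (h0 : 0 < t) (h1 : t < 1) (n : ℤ) : t ≠ (n:ℝ) := by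
  intro h
  have hn0 : (0:ℤ) < n := by exact_mod_cast h ▸ h0
  have hn1 : n < (1:ℤ) := by exact_mod_cast h ▸ h1
  omega

lemma prim_one (d : ℕ) (hd : 0 < d) :
    IsPrimitiveVec (intLattice d) (fun _ : Fin d => (1:ℝ)) := by
  refine ⟨fun i => ⟨1, by norm_num⟩, ?_, ?_⟩
  · intro h
    have := congrFun h ⟨0, hd⟩
    norm_num at this
  · intro t ht0 ht1 hmem
    obtain ⟨m, hm⟩ := hmem ⟨0, hd⟩
    simp only [Pi.smul_apply, smul_eq_mul, mul_one] at hm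
    exact no_int_between t ht0 ht1 m hm

lemma prim_neg_single (d : ℕ) (i : Fin d) :
    IsPrimitiveVec (intLattice d) (-(Pi.single i (1:ℝ) : Fin d → ℝ)) := by
  refine ⟨?_, ?_, ?_⟩
  · intro j
    refine ⟨if j = i then -1 else 0, ?_⟩
    simp only [Pi.neg_apply, Pi.single_apply]
    split <;> simp
  · intro h
    have := congrFun h i
    simp at this
  · intro t ht0 ht1 hmem
    obtain ⟨m, hm⟩ := hmem i
    simp only [Pi.smul_apply, Pi.neg_apply, Pi.single_eq_same, smul_eq_mul,
      mul_neg, mul_one] at hm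
    have : t = ((-m : ℤ):ℝ) := by push_cast; linarith
    exact no_int_between t ht0 ht1 (-m) this

lemma Hset_div (d : ℕ) (μ : ℝ) (hμ : μ < 1) (N : Fin d → ℝ)
    (h1 : ∑ j, N j ≤ 1 - μ) (h2 : ∀ jj, (∑ j, N j) - (1-μ) ≤ ((d:ℝ)+1) * N jj) :
    (fun j => N j / (1-μ)) ∈ Hset d := by
  have h1μ : 0 < 1 - μ := by linarith
  constructor
  · rw [← Finset.sum_div, div_le_one h1μ]
    exact h1
  · intro i
    rw [← Finset.sum_div]
    have e1 : (∑ j, N j)/(1-μ) - 1 = ((∑ j, N j) - (1-μ))/(1-μ) := by field_simp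
    have e2 : ((d:ℝ)+1) * (N i / (1-μ)) = (((d:ℝ)+1) * N i)/(1-μ) := by ring
    rw [e1, e2]
    exact (div_le_div_iff_of_pos_right h1μ).mpr (h2 i)

lemma bdd_diam_set (d : ℕ) (C : Set (Fin d → ℝ)) (hC : IsCompact C) :
    BddAbove {t : ℝ | 0 ≤ t ∧ ∃ a v, IsPrimitiveVec (intLattice d) v ∧
      segment ℝ a (a + t • v) ⊆ C} := by
  obtain ⟨R, hR⟩ := isBounded_iff_forall_norm_le.mp hC.isBounded
  refine ⟨2*R, ?_⟩
  rintro t ⟨ht, a, v, ⟨hvL, hv0, -⟩, hseg⟩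
  have ha : a ∈ C := hseg (left_mem_segment ℝ _ _)
  have hb : a + t • v ∈ C := hseg (right_mem_segment ℝ _ _)
  obtain ⟨i, hi⟩ := Function.ne_iff.mp hv0
  obtain ⟨n, hn⟩ := hvL i
  have hnz : n ≠ 0 := by
    intro h; apply hi; rw [hn, h, Int.cast_zero]; rfl
  have h1n : (1:ℝ) ≤ |(n:ℝ)| := by exact_mod_cast Int.one_le_abs hnz
  have hv1 : (1:ℝ) ≤ ‖v‖ := by
    calc (1:ℝ) ≤ |(n:ℝ)| := h1n
      _ = ‖v i‖ := by rw [hn]; simp [Real.norm_eq_abs]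
      _ ≤ ‖v‖ := norm_le_pi_norm v i
  have htv : ‖t • v‖ ≤ 2*R := by
    have : t • v = (a + t • v) - a := by abel
    rw [this]
    calc ‖(a + t • v) - a‖ ≤ ‖a + t • v‖ + ‖a‖ := norm_sub_le _ _
      _ ≤ R + R := add_le_add (hR _ hb) (hR _ ha)
      _ = 2*R := by ring
  calc t = t * 1 := by ring
    _ ≤ t * ‖v‖ := mul_le_mul_of_nonneg_left hv1 ht
    _ = ‖t • v‖ := by rw [norm_smul, Real.norm_eq_abs, abs_of_nonneg ht]
    _ ≤ 2*R := htv


lemma neg_one_mem_Hset (d : ℕ) : (fun _ : Fin d => (-1:ℝ)) ∈ Hset d := by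
  have hdnn : (0:ℝ) ≤ d := Nat.cast_nonneg d
  constructor
  · simp; linarith
  · intro i; simp; linarith

lemma single_mem_Hset (d : ℕ) (i : Fin d) :
    (Pi.single i (1:ℝ) : Fin d → ℝ) ∈ Hset d := by
  constructor
  · simp [Finset.sum_pi_single']
  · intro k
    rw [Finset.sum_pi_single']
    simp only [Finset.mem_univ, if_true]
    rcases eq_or_ne k i with rfl | h
    · simp; positivity
    · rw [Pi.single_apply, if_neg h]; simp



lemma extend_lemma (d : ℕ) (hd : 0 < d) (p : Fin d → ℝ) (hp : p ∉ Hset d) :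
    ∃ ε : ℝ, 0 < ε ∧ ∃ a v q : Fin d → ℝ, ∃ μ : ℝ,
      IsPrimitiveVec (intLattice d) v ∧ a ∈ Hset d ∧ q ∈ Hset d ∧
      0 ≤ μ ∧ μ ≤ 1 ∧ a + (1 + 1/(d:ℝ) + ε) • v = (1-μ) • q + μ • p := by
  have hdR : (0:ℝ) < d := by exact_mod_cast hd
  have hdR1 : (1:ℝ) ≤ d := by exact_mod_cast hd
  have hd1d : (0:ℝ) < 1/(d:ℝ) := by positivity
  set M : ℝ := 1 + ∑ j, |p j| with hM
  have hM1 : 1 ≤ M := by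
    have : 0 ≤ ∑ j, |p j| := Finset.sum_nonneg (fun j _ => abs_nonneg _)
    linarith
  have hpj : ∀ j, |p j| ≤ M := by
    intro j
    have := Finset.single_le_sum (f := fun j => |p j|) (fun j _ => abs_nonneg _)
      (Finset.mem_univ j)
    linarith
  have hsp : |∑ j, p j| ≤ M := by
    have := Finset.abs_sum_le_sum_abs p Finset.univ
    linarith
  set K : ℝ := ((d:ℝ)+3) * M with hK
  have hKpos : 0 < K := by positivity
  have hK4 : 4 ≤ K := by nlinarith
  set μ : ℝ := 1/(2*(d:ℝ)*K) with hμdef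
  have hμpos : 0 < μ := by positivity
  have hμK : μ * K = 1/(2*(d:ℝ)) := by
    rw [hμdef]; field_simp
  have hμhalf : μ ≤ 1/2 := by
    rw [hμdef, div_le_div_iff₀ (by positivity) (by norm_num)]
    nlinarith
  have h1μ : 0 < 1 - μ := by linarith
  have hμM : μ * M ≤ 1/(2*(d:ℝ)) := by
    rw [← hμK]
    apply mul_le_mul_of_nonneg_left _ (le_of_lt hμpos)
    nlinarith
  have h2d : 1/(2*(d:ℝ)) ≤ 1/2 := by
    rw [div_le_div_iff₀ (by positivity) (by norm_num)]
    linarith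
  have h2dd : 1/(2*(d:ℝ)) < 1/(d:ℝ) := by
    rw [div_lt_div_iff₀ (by positivity) hdR]
    nlinarith
  have hμsp : |μ * ∑ j, p j| ≤ 1/(2*(d:ℝ)) := by
    rw [abs_mul, abs_of_pos hμpos]
    calc μ * |∑ j, p j| ≤ μ * M := mul_le_mul_of_nonneg_left hsp (le_of_lt hμpos)
      _ ≤ 1/(2*(d:ℝ)) := hμM
  have hμpj : ∀ j, |μ * p j| ≤ 1/(2*(d:ℝ)) := by
    intro j
    rw [abs_mul, abs_of_pos hμpos]
    calc μ * |p j| ≤ μ * M := mul_le_mul_of_nonneg_left (hpj j) (le_of_lt hμpos)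
      _ ≤ 1/(2*(d:ℝ)) := hμM
  have hμdpj : ∀ j, |μ * (((d:ℝ)+1) * p j)| ≤ 1/(2*(d:ℝ)) := by
    intro j
    rw [abs_mul, abs_mul, abs_of_pos hμpos, abs_of_pos (by linarith : (0:ℝ) < (d:ℝ)+1)]
    calc μ * (((d:ℝ)+1) * |p j|) ≤ μ * K := by
          apply mul_le_mul_of_nonneg_left _ (le_of_lt hμpos)
          rw [hK]
          nlinarith [hpj j, abs_nonneg (p j)]
      _ = 1/(2*(d:ℝ)) := hμK
  have hcd : (d:ℝ) * (1/(d:ℝ)) = 1 := by field_simp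
  simp only [Hset, Set.mem_setOf_eq, not_and_or, not_forall, not_le] at hp
  rcases hp with h1 | ⟨i, hi⟩
  · -- case 1 : 1 < ∑ p
    set ε : ℝ := μ * ((∑ j, p j) - 1) / d with hε
    have hεpos : 0 < ε := by
      rw [hε]
      have : 0 < (∑ j, p j) - 1 := by linarith
      positivity
    have hdε : (d:ℝ) * ε = μ * ((∑ j, p j) - 1) := by
      rw [hε]; field_simp
    set N : Fin d → ℝ := fun j => 1/(d:ℝ) + ε - μ * p j with hN
    have hSN : ∑ j, N j = 1 - μ := by
      simp only [hN]
      rw [Finset.sum_sub_distrib, Finset.sum_const, Finset.card_univ, Fintype.card_fin,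
        nsmul_eq_mul, ← Finset.mul_sum]
      linear_combination hdε + hcd
    refine ⟨ε, hεpos, (fun _ => (-1:ℝ)), (fun _ => (1:ℝ)), fun j => N j / (1-μ), μ,
      prim_one d hd, neg_one_mem_Hset d, ?_, le_of_lt hμpos, by linarith, ?_⟩
    · apply Hset_div d μ (by linarith) N (le_of_eq hSN)
      intro jj
      rw [hSN]
      have hNjj : 0 ≤ N jj := by
        have h2 := (abs_le.mp (hμpj jj)).2
        simp only [hN]
        linarith
      have := mul_nonneg (show (0:ℝ) ≤ (d:ℝ)+1 by linarith) hNjj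
      linarith
    · funext j
      simp only [Pi.add_apply, Pi.smul_apply, smul_eq_mul, mul_one]
      have hfs : (1-μ) * (N j / (1-μ)) = N j := by field_simp
      rw [hfs]
      simp only [hN]
      ring
  · -- case 2 : (d+1) * p i < ∑ p - 1
    set e : ℝ := (∑ j, p j) - 1 - ((d:ℝ)+1) * p i with he
    have hepos : 0 < e := by rw [he]; linarith
    set ε : ℝ := μ * e / d with hε
    have hεpos : 0 < ε := by rw [hε]; positivity
    have hdε : (d:ℝ) * ε = μ * e := by rw [hε]; field_simp
    set N : Fin d → ℝ :=
      fun j => -(1/(d:ℝ)+ε) * (Pi.single i (1:ℝ) : Fin d → ℝ) j - μ * p j with hN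
    have hSN : ∑ j, N j = -(1/(d:ℝ)+ε) - μ * ∑ j, p j := by
      simp only [hN]
      rw [Finset.sum_sub_distrib, ← Finset.mul_sum, ← Finset.mul_sum,
        Finset.sum_pi_single']
      simp
    refine ⟨ε, hεpos, (Pi.single i (1:ℝ) : Fin d → ℝ), -(Pi.single i (1:ℝ) : Fin d → ℝ),
      fun j => N j / (1-μ), μ, prim_neg_single d i, single_mem_Hset d i, ?_,
      le_of_lt hμpos, by linarith, ?_⟩
    · apply Hset_div d μ (by linarith) N
      · rw [hSN]
        have b2 := (abs_le.mp hμsp).1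
        linarith
      · intro jj
        rw [hSN]
        rcases eq_or_ne jj i with rfl | hjj
        · have hNi : N jj = -(1/(d:ℝ)+ε) - μ * p jj := by
            simp only [hN, Pi.single_eq_same]
            ring
          rw [hNi]
          rw [show (∑ j, p j) = e + 1 + ((d:ℝ)+1) * p jj from by rw [he]; ring]
          apply le_of_eq
          linear_combination hdε + hcd
        · have hNj : N jj = -(μ * p jj) := by
            simp only [hN]
            rw [Pi.single_apply, if_neg hjj]
            ring
          rw [hNj]
          rw [show ((d:ℝ)+1) * -(μ * p jj) = -(μ * (((d:ℝ)+1) * p jj)) from by ring]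
          have b1 := (abs_le.mp (hμdpj jj)).2
          have b2 := (abs_le.mp hμsp).1
          linarith
    · funext j
      simp only [Pi.add_apply, Pi.smul_apply, Pi.neg_apply, smul_eq_mul]
      have hfs : (1-μ) * (N j / (1-μ)) = N j := by field_simp
      rw [hfs]
      simp only [hN]
      ring


lemma simplex_diam (d : ℕ) (hd : 0 < d) :
    latticeDiam (simplexS d) (intLattice d) = 1 + 1 / (d : ℝ) := by
  have hsh := simplex_eq_Hset d
  have hdR : (0:ℝ) < d := by exact_mod_cast hd
  have hmem : (1 + 1/(d:ℝ)) ∈ {t : ℝ | 0 ≤ t ∧ ∃ a v, IsPrimitiveVec (intLattice d) v ∧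
      segment ℝ a (a + t • v) ⊆ simplexS d} := by
    refine ⟨by positivity, (fun _ => (-1:ℝ)), (fun _ => (1:ℝ)), prim_one d hd, ?_⟩
    apply (convex_convexHull ℝ _).segment_subset
    · exact subset_convexHull ℝ _ (Set.mem_insert _ _)
    · have hpt : (fun _ => (-1:ℝ)) + (1+1/(d:ℝ)) • (fun _ => (1:ℝ))
          = fun _ : Fin d => 1/(d:ℝ) := by
        funext j
        simp only [Pi.add_apply, Pi.smul_apply, smul_eq_mul, mul_one]
        ring
      have hsum1 : ∑ _j : Fin d, (1/(d:ℝ)) = 1 := by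
        rw [Finset.sum_const, Finset.card_univ, Fintype.card_fin, nsmul_eq_mul,
          mul_one_div, div_self (ne_of_gt hdR)]
      have hmem2 : (fun _ : Fin d => 1/(d:ℝ)) ∈ Hset d := by
        constructor
        · have hinv : (d:ℝ) * (d:ℝ)⁻¹ = 1 := mul_inv_cancel₀ (ne_of_gt hdR)
          simp [hsum1, hinv]
        · intro i
          rw [hsum1]
          have : 0 ≤ ((d:ℝ)+1) * (1/(d:ℝ)) := by positivity
          linarith
      rw [← hsh] at hmem2
      rw [hpt]
      exact hmem2
  have hub : ∀ t ∈ {t : ℝ | 0 ≤ t ∧ ∃ a v, IsPrimitiveVec (intLattice d) v ∧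
      segment ℝ a (a + t • v) ⊆ simplexS d}, t ≤ 1 + 1/(d:ℝ) := by
    rintro t ⟨ht0, a, v, hprim, hseg⟩
    have ha : a ∈ Hset d := by
      have := hseg (left_mem_segment ℝ a _)
      rwa [hsh] at this
    have hb : a + t • v ∈ Hset d := by
      have := hseg (right_mem_segment ℝ a _)
      rwa [hsh] at this
    exact diam_upper d hd t ht0 a v hprim.1 hprim.2.1 ha hb
  exact le_antisymm (csSup_le ⟨_, hmem⟩ hub) (le_csSup ⟨_, hub⟩ hmem)

lemma simplex_body (d : ℕ) (hd : 0 < d) : IsConvexBody (simplexS d) := by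
  have hdR : (0:ℝ) < d := by exact_mod_cast hd
  refine ⟨convex_convexHull ℝ _, Set.Finite.isCompact_convexHull ℝ
    (((Set.finite_range _).insert _)), ?_⟩
  refine ⟨0, ?_⟩
  rw [mem_interior]
  set ε : ℝ := 1/(2*((d:ℝ)+1)) with hε
  have hεpos : 0 < ε := by positivity
  refine ⟨Metric.ball 0 ε, ?_, Metric.isOpen_ball, Metric.mem_ball_self hεpos⟩
  intro x hx
  have hnorm : ‖x‖ < ε := mem_ball_zero_iff.mp hx
  have hn0 : 0 ≤ ‖x‖ := norm_nonneg x
  have hxj : ∀ j, |x j| ≤ ‖x‖ := by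
    intro j
    rw [← Real.norm_eq_abs]
    exact norm_le_pi_norm x j
  have hsum : ∑ j, x j ≤ (d:ℝ) * ‖x‖ := by
    have := Finset.sum_le_card_nsmul Finset.univ x ‖x‖
      (fun j _ => le_trans (le_abs_self _) (hxj j))
    simpa [Finset.card_univ, nsmul_eq_mul] using this
  have hεd : (d:ℝ) * ε ≤ 1/2 := by
    rw [hε, mul_one_div, div_le_div_iff₀ (by positivity) (by norm_num)]
    linarith
  have hεd1 : ((d:ℝ)+1) * ε = 1/2 := by
    rw [hε]; field_simp
  have hd1 : (d:ℝ)*‖x‖ ≤ (d:ℝ) * ε :=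
    mul_le_mul_of_nonneg_left (le_of_lt hnorm) (le_of_lt hdR)
  have hd2 : ((d:ℝ)+1)*‖x‖ ≤ ((d:ℝ)+1) * ε :=
    mul_le_mul_of_nonneg_left (le_of_lt hnorm) (by linarith)
  rw [simplex_eq_Hset]
  constructor
  · linarith
  · intro i
    have h3 : ((d:ℝ)+1)*(-‖x‖) ≤ ((d:ℝ)+1)*(x i) :=
      mul_le_mul_of_nonneg_left (abs_le.mp (hxj i)).1 (by linarith)
    nlinarith
  
theorem simplex_complete (d : ℕ) (hd : 0 < d) :
    IsLatticeComplete (simplexS d) (intLattice d) := by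
  refine ⟨simplex_body d hd, ?_⟩
  intro C' hC' hsub heq
  have hdR : (0:ℝ) < d := by exact_mod_cast hd
  obtain ⟨p, hpC, hpS⟩ := Set.exists_of_ssubset hsub
  rw [simplex_eq_Hset] at hpS
  obtain ⟨ε, hε, a, v, q, μ, hprim, haH, hqH, hμ0, hμ1, heqn⟩ := extend_lemma d hd p hpS
  have hsubset : simplexS d ⊆ C' := subset_of_ssubset hsub
  have haC : a ∈ C' := hsubset (by rw [simplex_eq_Hset]; exact haH)
  have hqC : q ∈ C' := hsubset (by rw [simplex_eq_Hset]; exact hqH)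
  have hbC : a + (1+1/(d:ℝ)+ε) • v ∈ C' := by
    rw [heqn]
    exact hC'.1 hqC hpC (by linarith) hμ0 (by ring)
  have hseg : segment ℝ a (a + (1+1/(d:ℝ)+ε) • v) ⊆ C' := hC'.1.segment_subset haC hbC
  have hmem : (1+1/(d:ℝ)+ε) ∈ {t : ℝ | 0 ≤ t ∧ ∃ a v, IsPrimitiveVec (intLattice d) v ∧
      segment ℝ a (a + t • v) ⊆ C'} := by
    refine ⟨by positivity, a, v, hprim, hseg⟩
  have hle : (1+1/(d:ℝ)+ε) ≤ latticeDiam C' (intLattice d) :=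
    le_csSup (bdd_diam_set d C' hC'.2.1) hmem
  rw [heq, simplex_diam d hd] at hle
  linarith


/-- `S_d` has lattice diameter `1 + 1/d` w.r.t. `ℤ^d` and is
lattice complete w.r.t. `ℤ^d`. -/
theorem simplexS_diam_and_complete (d : ℕ) (hd : 0 < d) :
    latticeDiam (simplexS d) (intLattice d) = 1 + 1 / (d : ℝ) ∧
    IsLatticeComplete (simplexS d) (intLattice d) :=
  ⟨simplex_diam d hd, simplex_complete d hd⟩
end
end

section
/- Let P ⊂ ℝ^k and Q ⊂ ℝ^l be full-dimensional polytopes that are lattice complete with respect to ℤ^k and ℤ^l respectively, with diam_{ℤ^k}(P) = diam_{ℤ^l}(Q). Then the Cartesian product P × Q ⊂ ℝ^{k+l} is lattice complete with respect to ℤ^{k+l}, and diam_{ℤ^{k+l}}(P×Q) = diam_{ℤ^k}(P). -/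
open scoped Pointwise

noncomputable section

/-- The Cartesian product `P × Q ⊆ ℝ^(k+l)` of `P ⊆ ℝ^k` and `Q ⊆ ℝ^l`. -/
def prodSet {k l : ℕ} (P : Set (Fin k → ℝ)) (Q : Set (Fin l → ℝ)) :
    Set (Fin (k + l) → ℝ) :=
  {x | (fun i : Fin k => x (Fin.castAdd l i)) ∈ P ∧
       (fun j : Fin l => x (Fin.natAdd k j)) ∈ Q}

section AuxForProd

open Set

variable {d k l : ℕ}

/-- The defining set of the lattice diameter. -/
def diamSet (C L : Set (Fin d → ℝ)) : Set ℝ :=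
  {t : ℝ | 0 ≤ t ∧ ∃ a v, IsPrimitiveVec L v ∧ segment ℝ a (a + t • v) ⊆ C}

lemma latticeDiam_def (C L : Set (Fin d → ℝ)) : latticeDiam C L = sSup (diamSet C L) := rfl

lemma latticeDiam_nonneg (C L : Set (Fin d → ℝ)) : 0 ≤ latticeDiam C L :=
  Real.sSup_nonneg fun _ ht => ht.1

lemma diamSet_bddAbove {C : Set (Fin d → ℝ)} (hC : IsCompact C) :
    BddAbove (diamSet C (intLattice d)) := by
  refine ⟨Metric.diam C, fun t ht => ?_⟩
  obtain ⟨ht0, a, v, ⟨hvL, hv0, -⟩, hseg⟩ := ht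
  have ha : a ∈ C := hseg (left_mem_segment ℝ a _)
  have hb : a + t • v ∈ C := hseg (right_mem_segment ℝ a _)
  obtain ⟨i, hvi⟩ : ∃ i, v i ≠ 0 := Function.ne_iff.mp hv0
  obtain ⟨n, hn⟩ := hvL i
  have hn0 : n ≠ 0 := by rintro rfl; exact hvi (by simpa using hn)
  have h1 : (1 : ℝ) ≤ |v i| := by
    rw [hn]
    exact_mod_cast Int.one_le_abs hn0
  calc t = t * 1 := by ring
    _ ≤ t * |v i| := by nlinarith
    _ = ‖(t • v) i‖ := by simp [Real.norm_eq_abs, abs_mul, abs_of_nonneg ht0]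
    _ ≤ ‖t • v‖ := norm_le_pi_norm _ i
    _ = dist (a + t • v) a := by rw [dist_eq_norm]; congr 1; abel
    _ ≤ Metric.diam C := Metric.dist_le_diam_of_mem hC.isBounded hb ha

lemma latticeDiam_mono {C C' L : Set (Fin d → ℝ)} (hsub : C ⊆ C')
    (hbdd : BddAbove (diamSet C' L)) : latticeDiam C L ≤ latticeDiam C' L := by
  refine Real.sSup_le (fun t ht => le_csSup hbdd ?_) (latticeDiam_nonneg _ _)
  obtain ⟨ht0, a, v, hv, hseg⟩ := ht
  exact ⟨ht0, a, v, hv, hseg.trans hsub⟩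

lemma exists_primitive_scale {u : Fin d → ℝ} (hu : u ∈ intLattice d) (hne : u ≠ 0) :
    ∃ t₀ : ℝ, 0 < t₀ ∧ t₀ ≤ 1 ∧ IsPrimitiveVec (intLattice d) (t₀ • u) := by
  obtain ⟨i₀, hi₀⟩ : ∃ i, u i ≠ 0 := Function.ne_iff.mp hne
  have habs : (1:ℝ) ≤ |u i₀| := by
    obtain ⟨n, hn⟩ := hu i₀
    have hn0 : n ≠ 0 := by rintro rfl; exact hi₀ (by simpa using hn)
    rw [hn]
    exact_mod_cast Int.one_le_abs hn0
  have hpos0 : (0:ℝ) < |u i₀| := lt_of_lt_of_le one_pos habs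
  set T : Set ℝ := {t : ℝ | |u i₀|⁻¹ ≤ t ∧ ∀ i, ∃ n : ℤ, t * u i = (n:ℝ)} with hT
  have key : ∀ t : ℝ, 0 < t → (∀ i, ∃ n : ℤ, t * u i = (n:ℝ)) → t ∈ T := by
    intro t ht hint
    refine ⟨?_, hint⟩
    obtain ⟨m, hm⟩ := hint i₀
    have hm0 : m ≠ 0 := by
      rintro rfl
      rcases (by simpa using hm : t = 0 ∨ u i₀ = 0) with h | h
      exacts [ht.ne' h, hi₀ h]
    have h1m : (1:ℝ) ≤ |(m:ℝ)| := by exact_mod_cast Int.one_le_abs hm0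
    have hkey : 1 ≤ t * |u i₀| := by
      calc (1:ℝ) ≤ |(m:ℝ)| := h1m
        _ = |t * u i₀| := by rw [hm]
        _ = t * |u i₀| := by rw [abs_mul, abs_of_pos ht]
    rw [inv_eq_one_div, div_le_iff₀ hpos0]
    linarith
  have h1T : (1:ℝ) ∈ T := key 1 one_pos (by simpa [intLattice] using hu)
  have hTbdd : BddBelow T := ⟨|u i₀|⁻¹, fun t ht => ht.1⟩
  have hTclosed : IsClosed T := by
    have h2 : ∀ i : Fin d, IsClosed {t : ℝ | ∃ n : ℤ, t * u i = (n:ℝ)} := by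
      intro i
      have heq : {t : ℝ | ∃ n : ℤ, t * u i = (n:ℝ)} =
          (fun t : ℝ => t * u i) ⁻¹' (Set.range ((↑) : ℤ → ℝ)) := by
        ext t; simp [eq_comm]
      rw [heq]
      exact Int.isClosedEmbedding_coe_real.isClosed_range.preimage (continuous_mul_right _)
    have heq : T = {t : ℝ | |u i₀|⁻¹ ≤ t} ∩ ⋂ i, {t : ℝ | ∃ n : ℤ, t * u i = (n:ℝ)} := by
      ext t; simp [hT, Set.mem_iInter]
    rw [heq]
    exact isClosed_Ici.inter (isClosed_iInter h2)
  have ht₀T : sInf T ∈ T := hTclosed.csInf_mem ⟨1, h1T⟩ hTbdd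
  have ht₀pos : 0 < sInf T := lt_of_lt_of_le (inv_pos.mpr hpos0) ht₀T.1
  have ht₀le1 : sInf T ≤ 1 := csInf_le hTbdd h1T
  refine ⟨sInf T, ht₀pos, ht₀le1, ⟨?_, ?_, ?_⟩⟩
  · intro i; obtain ⟨n, hn⟩ := ht₀T.2 i; exact ⟨n, hn⟩
  · exact smul_ne_zero ht₀pos.ne' hne
  · intro s hs0 hs1 hmem
    have hmul : s * sInf T ∈ T := by
      apply key _ (mul_pos hs0 ht₀pos)
      intro i; obtain ⟨n, hn⟩ := hmem i
      refine ⟨n, ?_⟩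
      rw [← hn]
      simp [smul_smul, mul_assoc]
    have := csInf_le hTbdd hmul
    nlinarith

lemma append_eq_self (x : Fin (k + l) → ℝ) :
    Fin.append (fun i => x (Fin.castAdd l i)) (fun j => x (Fin.natAdd k j)) = x := by
  funext i
  cases i using Fin.addCases with
  | left i => simp [Fin.append_left]
  | right j => simp [Fin.append_right]

lemma append_mem_prodSet {P : Set (Fin k → ℝ)} {Q : Set (Fin l → ℝ)}
    {p : Fin k → ℝ} {q : Fin l → ℝ} (hp : p ∈ P) (hq : q ∈ Q) :
    Fin.append p q ∈ prodSet P Q := by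
  constructor
  · have h : (fun i => Fin.append p q (Fin.castAdd l i)) = p := by
      funext i; simp [Fin.append_left]
    rw [h]; exact hp
  · have h : (fun j => Fin.append p q (Fin.natAdd k j)) = q := by
      funext j; simp [Fin.append_right]
    rw [h]; exact hq

lemma primitive_append_left {u : Fin k → ℝ} (hu : IsPrimitiveVec (intLattice k) u) :
    IsPrimitiveVec (intLattice (k + l)) (Fin.append u (0 : Fin l → ℝ)) := by
  obtain ⟨huL, hu0, hup⟩ := hu
  refine ⟨?_, ?_, ?_⟩
  · intro i
    cases i using Fin.addCases with
    | left i => simpa [Fin.append_left] using huL i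
    | right j => exact ⟨0, by simp [Fin.append_right]⟩
  · intro h
    apply hu0; funext i
    have := congrFun h (Fin.castAdd l i)
    simpa [Fin.append_left] using this
  · intro t ht0 ht1 hmem
    apply hup t ht0 ht1
    intro i
    have := hmem (Fin.castAdd l i)
    simpa [Fin.append_left] using this

lemma primitive_append_right {v : Fin l → ℝ} (hv : IsPrimitiveVec (intLattice l) v) :
    IsPrimitiveVec (intLattice (k + l)) (Fin.append (0 : Fin k → ℝ) v) := by
  obtain ⟨hvL, hv0, hvp⟩ := hv
  refine ⟨?_, ?_, ?_⟩
  · intro i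
    cases i using Fin.addCases with
    | left i => exact ⟨0, by simp [Fin.append_left]⟩
    | right j => simpa [Fin.append_right] using hvL j
  · intro h
    apply hv0; funext j
    have := congrFun h (Fin.natAdd k j)
    simpa [Fin.append_right] using this
  · intro t ht0 ht1 hmem
    apply hvp t ht0 ht1
    intro j
    have := hmem (Fin.natAdd k j)
    simpa [Fin.append_right] using this

lemma proj_primitive {w : Fin (k + l) → ℝ} (hw : IsPrimitiveVec (intLattice (k + l)) w)
    (hl0 : (fun i => w (Fin.castAdd l i)) = 0) :
    IsPrimitiveVec (intLattice l) (fun j => w (Fin.natAdd k j)) := by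
  obtain ⟨hwL, hw0, hwp⟩ := hw
  refine ⟨fun j => hwL (Fin.natAdd k j), ?_, ?_⟩
  · intro h
    apply hw0; funext i
    cases i using Fin.addCases with
    | left i => simpa using congrFun hl0 i
    | right j => simpa using congrFun h j
  · intro t ht0 ht1 hmem
    apply hwp t ht0 ht1
    intro i
    cases i using Fin.addCases with
    | left i =>
      refine ⟨0, ?_⟩
      have := congrFun hl0 i
      simp only [Pi.zero_apply] at this
      simp [this]
    | right j => simpa using hmem j

end AuxForProd
section AuxForProd2

open Set

variable {k l : ℕ}

lemma append_mem_of_hullP {P : Set (Fin k → ℝ)} {Q : Set (Fin l → ℝ)}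
    {C : Set (Fin (k + l) → ℝ)}
    (hPc : Convex ℝ P) (hPne : P.Nonempty) (hC : Convex ℝ C) (hsub : prodSet P Q ⊆ C)
    {xp : Fin k → ℝ} {r : Fin l → ℝ} (hr : r ∈ Q) (hx : Fin.append xp r ∈ C)
    {b : Fin k → ℝ} (hb : b ∈ convexHull ℝ (insert xp P)) : Fin.append b r ∈ C := by
  rw [convexHull_insert hPne, mem_convexJoin] at hb
  obtain ⟨x', hx', z, hz, hbseg⟩ := hb
  rw [Set.mem_singleton_iff, eq_comm] at hx'
  subst hx'
  rw [hPc.convexHull_eq] at hz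
  obtain ⟨c, e, hc, he, hce, hb'⟩ := hbseg
  have hkey : Fin.append b r = c • Fin.append xp r + e • Fin.append z r := by
    funext i
    cases i using Fin.addCases with
    | left i =>
      have := congrFun hb' i
      simp only [Pi.add_apply, Pi.smul_apply, smul_eq_mul] at this ⊢
      simp [Fin.append_left, ← this]
    | right j =>
      simp only [Pi.add_apply, Pi.smul_apply, smul_eq_mul, Fin.append_right]
      have he' : e = 1 - c := by linarith
      rw [he']; ring
  rw [hkey]
  exact hC hx (hsub (append_mem_prodSet hz hr)) hc he hce

lemma append_mem_of_hullQ {P : Set (Fin k → ℝ)} {Q : Set (Fin l → ℝ)}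
    {C : Set (Fin (k + l) → ℝ)}
    (hQc : Convex ℝ Q) (hQne : Q.Nonempty) (hC : Convex ℝ C) (hsub : prodSet P Q ⊆ C)
    {xq : Fin l → ℝ} {r : Fin k → ℝ} (hr : r ∈ P) (hx : Fin.append r xq ∈ C)
    {b : Fin l → ℝ} (hb : b ∈ convexHull ℝ (insert xq Q)) : Fin.append r b ∈ C := by
  rw [convexHull_insert hQne, mem_convexJoin] at hb
  obtain ⟨x', hx', z, hz, hbseg⟩ := hb
  rw [Set.mem_singleton_iff, eq_comm] at hx'
  subst hx'
  rw [hQc.convexHull_eq] at hz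
  obtain ⟨c, e, hc, he, hce, hb'⟩ := hbseg
  have hkey : Fin.append r b = c • Fin.append r xq + e • Fin.append r z := by
    funext i
    cases i using Fin.addCases with
    | left i =>
      simp only [Pi.add_apply, Pi.smul_apply, smul_eq_mul, Fin.append_left]
      have he' : e = 1 - c := by linarith
      rw [he']; ring
    | right j =>
      have := congrFun hb' j
      simp only [Pi.add_apply, Pi.smul_apply, smul_eq_mul] at this ⊢
      simp [Fin.append_right, ← this]
  rw [hkey]
  exact hC hx (hsub (append_mem_prodSet hr hz)) hc he hce

lemma isCompact_hull_insert {d : ℕ} {P : Set (Fin d → ℝ)} (hPcpt : IsCompact P)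
    (hPconv : Convex ℝ P) (hPne : P.Nonempty) (xp : Fin d → ℝ) :
    IsCompact (convexHull ℝ (insert xp P)) := by
  have himg : convexHull ℝ (insert xp P) =
      (fun ce : ℝ × (Fin d → ℝ) => ce.1 • xp + (1 - ce.1) • ce.2) ''
      (Set.Icc (0:ℝ) 1 ×ˢ P) := by
    rw [convexHull_insert hPne, hPconv.convexHull_eq]
    ext b
    rw [mem_convexJoin]
    simp only [Set.mem_image, Set.mem_prod, Set.mem_Icc, Set.mem_singleton_iff]
    constructor
    · rintro ⟨x', rfl, z, hz, c, e, hc, he, hce, hb⟩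
      refine ⟨(c, z), ⟨⟨hc, by linarith⟩, hz⟩, ?_⟩
      have he' : (1:ℝ) - c = e := by linarith
      rw [he']
      exact hb
    · rintro ⟨⟨c, z⟩, ⟨⟨hc0, hc1⟩, hz⟩, hb⟩
      exact ⟨xp, rfl, z, hz, c, 1 - c, hc0, by linarith, by ring, hb⟩
  rw [himg]
  refine (isCompact_Icc.prod hPcpt).image ?_
  exact ((continuous_fst.smul continuous_const).add
    ((continuous_const.sub continuous_fst).smul continuous_snd))

lemma oneSided_P {P : Set (Fin k → ℝ)} {Q : Set (Fin l → ℝ)} {C : Set (Fin (k + l) → ℝ)}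
    (hPbody : IsConvexBody P) (hPcomp : IsLatticeComplete P (intLattice k))
    (hC : Convex ℝ C) (hCcpt : IsCompact C) (hsub : prodSet P Q ⊆ C)
    {xp : Fin k → ℝ} {r : Fin l → ℝ} (hxp : xp ∉ P) (hr : r ∈ Q)
    (hx : Fin.append xp r ∈ C) :
    latticeDiam P (intLattice k) < latticeDiam C (intLattice (k + l)) := by
  obtain ⟨hPconv, hPcpt, hPint⟩ := hPbody
  have hPne : P.Nonempty := hPint.mono interior_subset
  set P' := convexHull ℝ (insert xp P) with hP'
  have hPP' : P ⊆ P' := (Set.subset_insert _ _).trans (subset_convexHull ℝ _)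
  have hxP' : xp ∈ P' := subset_convexHull ℝ _ (Set.mem_insert _ _)
  have hP'cpt : IsCompact P' := isCompact_hull_insert hPcpt hPconv hPne xp
  have hP'body : IsConvexBody P' :=
    ⟨convex_convexHull ℝ _, hP'cpt, hPint.mono (interior_mono hPP')⟩
  have hssub : P ⊂ P' := ⟨hPP', fun h => hxp (h hxP')⟩
  have hne : latticeDiam P' (intLattice k) ≠ latticeDiam P (intLattice k) :=
    hPcomp.2 P' hP'body hssub
  have hbddP' : BddAbove (diamSet P' (intLattice k)) := diamSet_bddAbove hP'cpt
  have hlt : latticeDiam P (intLattice k) < latticeDiam P' (intLattice k) :=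
    lt_of_le_of_ne (latticeDiam_mono hPP' hbddP') (Ne.symm hne)
  have hSne : (diamSet P' (intLattice k)).Nonempty := by
    by_contra h
    rw [Set.not_nonempty_iff_eq_empty] at h
    have h0 : latticeDiam P' (intLattice k) = 0 := by
      rw [latticeDiam_def, h, Real.sSup_empty]
    rw [h0] at hlt
    exact (latticeDiam_nonneg P (intLattice k)).not_gt hlt
  rw [latticeDiam_def P' (intLattice k)] at hlt
  obtain ⟨t, ht, hDt⟩ := exists_lt_of_lt_csSup hSne hlt
  obtain ⟨ht0, a, u, hu, hseg⟩ := ht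
  have hA : Fin.append a r ∈ C :=
    append_mem_of_hullP hPconv hPne hC hsub hr hx (hseg (left_mem_segment ℝ _ _))
  have hB : Fin.append (a + t • u) r ∈ C :=
    append_mem_of_hullP hPconv hPne hC hsub hr hx (hseg (right_mem_segment ℝ _ _))
  have hmemt : t ∈ diamSet C (intLattice (k + l)) := by
    refine ⟨ht0, Fin.append a r, Fin.append u 0, primitive_append_left hu, ?_⟩
    have heq : Fin.append a r + t • Fin.append u (0 : Fin l → ℝ) =
        Fin.append (a + t • u) r := by
      funext i
      cases i using Fin.addCases with
      | left i => simp [Fin.append_left]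
      | right j => simp [Fin.append_right]
    rw [heq]
    exact hC.segment_subset hA hB
  exact lt_of_lt_of_le hDt (le_csSup (diamSet_bddAbove hCcpt) hmemt)

lemma oneSided_Q {P : Set (Fin k → ℝ)} {Q : Set (Fin l → ℝ)} {C : Set (Fin (k + l) → ℝ)}
    (hQbody : IsConvexBody Q) (hQcomp : IsLatticeComplete Q (intLattice l))
    (hC : Convex ℝ C) (hCcpt : IsCompact C) (hsub : prodSet P Q ⊆ C)
    {xq : Fin l → ℝ} {r : Fin k → ℝ} (hxq : xq ∉ Q) (hr : r ∈ P)
    (hx : Fin.append r xq ∈ C) :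
    latticeDiam Q (intLattice l) < latticeDiam C (intLattice (k + l)) := by
  obtain ⟨hQconv, hQcpt, hQint⟩ := hQbody
  have hQne : Q.Nonempty := hQint.mono interior_subset
  set Q' := convexHull ℝ (insert xq Q) with hQ'
  have hQQ' : Q ⊆ Q' := (Set.subset_insert _ _).trans (subset_convexHull ℝ _)
  have hxQ' : xq ∈ Q' := subset_convexHull ℝ _ (Set.mem_insert _ _)
  have hQ'cpt : IsCompact Q' := isCompact_hull_insert hQcpt hQconv hQne xq
  have hQ'body : IsConvexBody Q' :=
    ⟨convex_convexHull ℝ _, hQ'cpt, hQint.mono (interior_mono hQQ')⟩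
  have hssub : Q ⊂ Q' := ⟨hQQ', fun h => hxq (h hxQ')⟩
  have hne : latticeDiam Q' (intLattice l) ≠ latticeDiam Q (intLattice l) :=
    hQcomp.2 Q' hQ'body hssub
  have hbddQ' : BddAbove (diamSet Q' (intLattice l)) := diamSet_bddAbove hQ'cpt
  have hlt : latticeDiam Q (intLattice l) < latticeDiam Q' (intLattice l) :=
    lt_of_le_of_ne (latticeDiam_mono hQQ' hbddQ') (Ne.symm hne)
  have hSne : (diamSet Q' (intLattice l)).Nonempty := by
    by_contra h
    rw [Set.not_nonempty_iff_eq_empty] at h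
    have h0 : latticeDiam Q' (intLattice l) = 0 := by
      rw [latticeDiam_def, h, Real.sSup_empty]
    rw [h0] at hlt
    exact (latticeDiam_nonneg Q (intLattice l)).not_gt hlt
  rw [latticeDiam_def Q' (intLattice l)] at hlt
  obtain ⟨t, ht, hDt⟩ := exists_lt_of_lt_csSup hSne hlt
  obtain ⟨ht0, a, v, hv, hseg⟩ := ht
  have hA : Fin.append r a ∈ C :=
    append_mem_of_hullQ hQconv hQne hC hsub hr hx (hseg (left_mem_segment ℝ _ _))
  have hB : Fin.append r (a + t • v) ∈ C :=
    append_mem_of_hullQ hQconv hQne hC hsub hr hx (hseg (right_mem_segment ℝ _ _))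
  have hmemt : t ∈ diamSet C (intLattice (k + l)) := by
    refine ⟨ht0, Fin.append r a, Fin.append 0 v, primitive_append_right hv, ?_⟩
    have heq : Fin.append r a + t • Fin.append (0 : Fin k → ℝ) v =
        Fin.append r (a + t • v) := by
      funext i
      cases i using Fin.addCases with
      | left i => simp [Fin.append_left]
      | right j => simp [Fin.append_right]
    rw [heq]
    exact hC.segment_subset hA hB
  exact lt_of_lt_of_le hDt (le_csSup (diamSet_bddAbove hCcpt) hmemt)

end AuxForProd2
section AuxForProd3

open Set

variable {k l : ℕ}

lemma escape {P : Set (Fin k → ℝ)} {Q : Set (Fin l → ℝ)} {C : Set (Fin (k + l) → ℝ)}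
    (hPbody : IsConvexBody P) (hQbody : IsConvexBody Q)
    (hC : Convex ℝ C) (hsub : prodSet P Q ⊆ C)
    {x : Fin (k + l) → ℝ} (hx : x ∈ C)
    (hxp : (fun i => x (Fin.castAdd l i)) ∉ P) (hxq : (fun j => x (Fin.natAdd k j)) ∉ Q) :
    ∃ y ∈ C, ((fun i => y (Fin.castAdd l i)) ∉ P ∧ (fun j => y (Fin.natAdd k j)) ∈ Q) ∨
             ((fun i => y (Fin.castAdd l i)) ∈ P ∧ (fun j => y (Fin.natAdd k j)) ∉ Q) := by
  obtain ⟨hPconv, hPcpt, hPint⟩ := hPbody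
  obtain ⟨hQconv, hQcpt, hQint⟩ := hQbody
  obtain ⟨q0, hq0⟩ := hQint
  have hq0Q : q0 ∈ Q := interior_subset hq0
  set xp : Fin k → ℝ := fun i => x (Fin.castAdd l i) with hxpdef
  set xq : Fin l → ℝ := fun j => x (Fin.natAdd k j) with hxqdef
  set TQ : Set ℝ := {s : ℝ | s ∈ Set.Icc (0:ℝ) 1 ∧ (1 - s) • xq + s • q0 ∈ Q} with hTQ
  have hcont : Continuous fun s : ℝ => (1 - s) • xq + s • q0 :=
    ((continuous_const.sub continuous_id).smul continuous_const).add
      (continuous_id.smul continuous_const)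
  have hTQc : IsClosed TQ := by
    have heq : TQ = Set.Icc (0:ℝ) 1 ∩ (fun s : ℝ => (1 - s) • xq + s • q0) ⁻¹' Q := rfl
    rw [heq]
    exact isClosed_Icc.inter (hQcpt.isClosed.preimage hcont)
  have h1TQ : (1:ℝ) ∈ TQ := by
    refine ⟨⟨zero_le_one, le_refl 1⟩, ?_⟩
    simpa using hq0Q
  have hTQbdd : BddBelow TQ := ⟨0, fun s hs => hs.1.1⟩
  set σ := sInf TQ with hσdef
  have hσT : σ ∈ TQ := hTQc.csInf_mem ⟨1, h1TQ⟩ hTQbdd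
  have hσ0 : 0 ≤ σ := hσT.1.1
  have hσ1 : σ ≤ 1 := hσT.1.2
  have hσpos : 0 < σ := by
    rcases hσ0.lt_or_eq with h | h
    · exact h
    · exfalso
      apply hxq
      have hthis := hσT.2
      rw [← h] at hthis
      simpa using hthis
  have hbefore : ∀ s : ℝ, 0 ≤ s → s < σ → (1 - s) • xq + s • q0 ∉ Q := by
    intro s h0 hs hmem
    exact absurd (csInf_le hTQbdd ⟨⟨h0, hs.le.trans hσ1⟩, hmem⟩) (not_le.mpr hs)
  have hafter : ∀ s : ℝ, σ ≤ s → s ≤ 1 → (1 - s) • xq + s • q0 ∈ Q := by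
    intro s hσs hs1
    rcases eq_or_lt_of_le hσ1 with h | h
    · have hs : s = 1 := le_antisymm hs1 (h ▸ hσs)
      rw [hs]
      simpa using hq0Q
    · have h1σ : (0:ℝ) < 1 - σ := by linarith
      have h1σ' : (1:ℝ) - σ ≠ 0 := h1σ.ne'
      set μ := (s - σ) / (1 - σ) with hμdef
      have hμ0 : 0 ≤ μ := div_nonneg (by linarith) h1σ.le
      have hμ1 : μ ≤ 1 := by
        rw [hμdef, div_le_one h1σ]; linarith
      have hptwise : (1 - s) • xq + s • q0 =
          (1 - μ) • ((1 - σ) • xq + σ • q0) + μ • q0 := by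
        funext j
        simp only [Pi.add_apply, Pi.smul_apply, smul_eq_mul, hμdef]
        field_simp
        ring
      rw [hptwise]
      exact hQconv hσT.2 hq0Q (by linarith) hμ0 (by ring)
  by_cases H : ∃ p0 ∈ interior P, (1 - σ) • xp + σ • p0 ∈ interior P
  · obtain ⟨p0, hp0, hep0⟩ := H
    have hgc : Continuous fun s : ℝ => (1 - s) • xp + s • p0 :=
      ((continuous_const.sub continuous_id).smul continuous_const).add
        (continuous_id.smul continuous_const)
    have hnh : (fun s : ℝ => (1 - s) • xp + s • p0) ⁻¹' interior P ∈ nhds σ :=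
      hgc.continuousAt.preimage_mem_nhds (isOpen_interior.mem_nhds hep0)
    obtain ⟨ε, hε, hball⟩ := Metric.mem_nhds_iff.mp hnh
    set s := σ - min σ ε / 2 with hsdef
    have hmin : 0 < min σ ε := lt_min hσpos hε
    have hminσ : min σ ε ≤ σ := min_le_left _ _
    have hminε : min σ ε ≤ ε := min_le_right _ _
    have hs0 : 0 ≤ s := by rw [hsdef]; linarith
    have hsσ : s < σ := by rw [hsdef]; linarith
    have hgs : (1 - s) • xp + s • p0 ∈ interior P := by
      apply hball
      rw [Metric.mem_ball, Real.dist_eq, hsdef]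
      rw [abs_of_nonpos (by linarith)]
      linarith
    refine ⟨(1 - s) • x + s • Fin.append p0 q0, ?_, Or.inr ⟨?_, ?_⟩⟩
    · exact hC hx (hsub (append_mem_prodSet (interior_subset hp0) hq0Q))
        (by linarith) hs0 (by ring)
    · have hproj : (fun i => ((1 - s) • x + s • Fin.append p0 q0) (Fin.castAdd l i)) =
          (1 - s) • xp + s • p0 := by
        funext i
        simp [Fin.append_left, hxpdef]
      rw [hproj]
      exact interior_subset hgs
    · have hproj : (fun j => ((1 - s) • x + s • Fin.append p0 q0) (Fin.natAdd k j)) =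
          (1 - s) • xq + s • q0 := by
        funext j
        simp [Fin.append_right, hxqdef]
      rw [hproj]
      exact hbefore s hs0 hsσ
  · have hσ0' : σ ≠ 0 := hσpos.ne'
    have hEP : ∃ p0 ∈ interior P, (1 - σ) • xp + σ • p0 ∉ P := by
      by_contra h
      push_neg at h
      obtain ⟨p₁, hp₁⟩ := hPint
      set φ : (Fin k → ℝ) → (Fin k → ℝ) := fun z => σ⁻¹ • (z - (1 - σ) • xp) with hφdef
      have hφc : Continuous φ := by rw [hφdef]; fun_prop
      have hVopen : IsOpen (φ ⁻¹' interior P) := isOpen_interior.preimage hφc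
      have hVP : φ ⁻¹' interior P ⊆ P := by
        intro z hz
        have hze : (1 - σ) • xp + σ • φ z = z := by
          funext i
          simp only [hφdef, Pi.add_apply, Pi.smul_apply, Pi.sub_apply, smul_eq_mul]
          field_simp
          ring
        rw [← hze]
        exact h (φ z) hz
      have hVint : φ ⁻¹' interior P ⊆ interior P := interior_maximal hVP hVopen
      have hmem : (1 - σ) • xp + σ • p₁ ∈ φ ⁻¹' interior P := by
        have hφe : φ ((1 - σ) • xp + σ • p₁) = p₁ := by
          funext i
          simp only [hφdef, Pi.add_apply, Pi.smul_apply, Pi.sub_apply, smul_eq_mul]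
          field_simp
          ring
        rw [Set.mem_preimage, hφe]
        exact hp₁
      exact H ⟨p₁, hp₁, hVint hmem⟩
    obtain ⟨p0, hp0, hep0⟩ := hEP
    refine ⟨(1 - σ) • x + σ • Fin.append p0 q0, ?_, Or.inl ⟨?_, ?_⟩⟩
    · exact hC hx (hsub (append_mem_prodSet (interior_subset hp0) hq0Q))
        (by linarith) hσ0 (by ring)
    · have hproj : (fun i => ((1 - σ) • x + σ • Fin.append p0 q0) (Fin.castAdd l i)) =
          (1 - σ) • xp + σ • p0 := by
        funext i
        simp [Fin.append_left, hxpdef]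
      rw [hproj]
      exact hep0
    · have hproj : (fun j => ((1 - σ) • x + σ • Fin.append p0 q0) (Fin.natAdd k j)) =
          (1 - σ) • xq + σ • q0 := by
        funext j
        simp [Fin.append_right, hxqdef]
      rw [hproj]
      exact hafter σ le_rfl hσ1

def appendLinear (k l : ℕ) : ((Fin k → ℝ) × (Fin l → ℝ)) →ₗ[ℝ] (Fin (k + l) → ℝ) where
  toFun pq := Fin.append pq.1 pq.2
  map_add' a b := by
    funext i
    cases i using Fin.addCases with
    | left i => simp [Fin.append_left]
    | right j => simp [Fin.append_right]
  map_smul' c a := by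
    funext i
    cases i using Fin.addCases with
    | left i => simp [Fin.append_left]
    | right j => simp [Fin.append_right]

lemma prodSet_eq_image (P : Set (Fin k → ℝ)) (Q : Set (Fin l → ℝ)) :
    prodSet P Q = (appendLinear k l) '' (P ×ˢ Q) := by
  ext x
  constructor
  · rintro ⟨h1, h2⟩
    exact ⟨(fun i => x (Fin.castAdd l i), fun j => x (Fin.natAdd k j)), ⟨h1, h2⟩,
      append_eq_self x⟩
  · rintro ⟨⟨p, q⟩, ⟨hp, hq⟩, rfl⟩
    exact append_mem_prodSet hp hq

lemma prodSet_isConvexBody {P : Set (Fin k → ℝ)} {Q : Set (Fin l → ℝ)}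
    (hPbody : IsConvexBody P) (hQbody : IsConvexBody Q) :
    IsConvexBody (prodSet P Q) := by
  obtain ⟨hPconv, hPcpt, hPint⟩ := hPbody
  obtain ⟨hQconv, hQcpt, hQint⟩ := hQbody
  refine ⟨?_, ?_, ?_⟩
  · intro x hx y hy a b ha hb hab
    constructor
    · have h : (fun i => (a • x + b • y) (Fin.castAdd l i)) =
          a • (fun i => x (Fin.castAdd l i)) + b • (fun i => y (Fin.castAdd l i)) := rfl
      rw [h]
      exact hPconv hx.1 hy.1 ha hb hab
    · have h : (fun j => (a • x + b • y) (Fin.natAdd k j)) =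
          a • (fun j => x (Fin.natAdd k j)) + b • (fun j => y (Fin.natAdd k j)) := rfl
      rw [h]
      exact hQconv hx.2 hy.2 ha hb hab
  · rw [prodSet_eq_image]
    exact (hPcpt.prod hQcpt).image (appendLinear k l).continuous_of_finiteDimensional
  · obtain ⟨p0, hp0⟩ := hPint
    obtain ⟨q0, hq0⟩ := hQint
    have hc1 : Continuous fun x : Fin (k + l) → ℝ => (fun i => x (Fin.castAdd l i)) :=
      continuous_pi fun i => continuous_apply _
    have hc2 : Continuous fun x : Fin (k + l) → ℝ => (fun j => x (Fin.natAdd k j)) :=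
      continuous_pi fun j => continuous_apply _
    set U := ((fun x : Fin (k + l) → ℝ => (fun i => x (Fin.castAdd l i))) ⁻¹' interior P) ∩
        ((fun x : Fin (k + l) → ℝ => (fun j => x (Fin.natAdd k j))) ⁻¹' interior Q) with hU
    have hUopen : IsOpen U :=
      (isOpen_interior.preimage hc1).inter (isOpen_interior.preimage hc2)
    have hUsub : U ⊆ prodSet P Q := fun z hz => ⟨interior_subset hz.1, interior_subset hz.2⟩
    have hmem : Fin.append p0 q0 ∈ U := by
      constructor
      · have h : (fun i => Fin.append p0 q0 (Fin.castAdd l i)) = p0 := by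
          funext i; simp [Fin.append_left]
        rw [Set.mem_preimage, h]
        exact hp0
      · have h : (fun j => Fin.append p0 q0 (Fin.natAdd k j)) = q0 := by
          funext j; simp [Fin.append_right]
        rw [Set.mem_preimage, h]
        exact hq0
    exact ⟨Fin.append p0 q0, interior_maximal hUsub hUopen hmem⟩

lemma prod_latticeDiam_eq {P : Set (Fin k → ℝ)} {Q : Set (Fin l → ℝ)}
    (hPcpt : IsCompact P) (hQcpt : IsCompact Q) (hQne : Q.Nonempty)
    (hPQcpt : IsCompact (prodSet P Q))
    (hdiam : latticeDiam P (intLattice k) = latticeDiam Q (intLattice l)) :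
    latticeDiam (prodSet P Q) (intLattice (k + l)) = latticeDiam P (intLattice k) := by
  apply le_antisymm
  · refine Real.sSup_le ?_ (latticeDiam_nonneg _ _)
    rintro t ⟨ht0, a, w, hw, hseg⟩
    by_cases hu : (fun i => w (Fin.castAdd l i)) = 0
    · have hv := proj_primitive hw hu
      have hsegQ : segment ℝ (fun j => a (Fin.natAdd k j))
          ((fun j => a (Fin.natAdd k j)) + t • fun j => w (Fin.natAdd k j)) ⊆ Q := by
        rintro z ⟨c, e, hc, he, hce, hz⟩
        have hmem : c • a + e • (a + t • w) ∈ prodSet P Q :=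
          hseg ⟨c, e, hc, he, hce, rfl⟩
        have hz' : z = fun j => (c • a + e • (a + t • w)) (Fin.natAdd k j) := by
          funext j
          rw [← hz]
          simp
        rw [hz']
        exact hmem.2
      have hmemQ : t ∈ diamSet Q (intLattice l) := ⟨ht0, _, _, hv, hsegQ⟩
      rw [hdiam]
      exact le_csSup (diamSet_bddAbove hQcpt) hmemQ
    · have huL : (fun i => w (Fin.castAdd l i)) ∈ intLattice k :=
        fun i => hw.1 (Fin.castAdd l i)
      obtain ⟨t₀, ht₀pos, ht₀le, hprim⟩ := exists_primitive_scale huL hu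
      have ht₀ne : t₀ ≠ 0 := ht₀pos.ne'
      have hsegP : segment ℝ (fun i => a (Fin.castAdd l i))
          ((fun i => a (Fin.castAdd l i)) +
            (t * t₀⁻¹) • (t₀ • fun i => w (Fin.castAdd l i))) ⊆ P := by
        rintro z ⟨c, e, hc, he, hce, hz⟩
        have hmem : c • a + e • (a + t • w) ∈ prodSet P Q :=
          hseg ⟨c, e, hc, he, hce, rfl⟩
        have hz' : z = fun i => (c • a + e • (a + t • w)) (Fin.castAdd l i) := by
          funext i
          rw [← hz]
          simp only [Pi.add_apply, Pi.smul_apply, smul_eq_mul]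
          field_simp
        rw [hz']
        exact hmem.1
      have hmemP : t * t₀⁻¹ ∈ diamSet P (intLattice k) :=
        ⟨mul_nonneg ht0 (inv_nonneg.mpr ht₀pos.le), _, _, hprim, hsegP⟩
      have h1 : t * t₀⁻¹ ≤ latticeDiam P (intLattice k) :=
        le_csSup (diamSet_bddAbove hPcpt) hmemP
      have hinv : 1 ≤ t₀⁻¹ := (one_le_inv₀ ht₀pos).mpr ht₀le
      nlinarith
  · refine Real.sSup_le ?_ (latticeDiam_nonneg _ _)
    rintro t ⟨ht0, a, u, hu, hseg⟩
    obtain ⟨r, hr⟩ := hQne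
    have heq : Fin.append a r + t • Fin.append u (0 : Fin l → ℝ) =
        Fin.append (a + t • u) r := by
      funext i
      cases i using Fin.addCases with
      | left i => simp [Fin.append_left]
      | right j => simp [Fin.append_right]
    have hsegPQ : segment ℝ (Fin.append a r)
        (Fin.append a r + t • Fin.append u (0 : Fin l → ℝ)) ⊆ prodSet P Q := by
      rw [heq]
      rintro z ⟨c, e, hc, he, hce, hz⟩
      constructor
      · have hz' : (fun i => z (Fin.castAdd l i)) = c • a + e • (a + t • u) := by
          funext i
          rw [← hz]
          simp only [Pi.add_apply, Pi.smul_apply, smul_eq_mul, Fin.append_left]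
        rw [hz']
        exact hseg ⟨c, e, hc, he, hce, rfl⟩
      · have hz' : (fun j => z (Fin.natAdd k j)) = r := by
          funext j
          rw [← hz]
          simp only [Pi.add_apply, Pi.smul_apply, smul_eq_mul, Fin.append_right]
          have he' : e = 1 - c := by linarith
          rw [he']; ring
        rw [hz']
        exact hr
    exact le_csSup (diamSet_bddAbove hPQcpt)
      ⟨ht0, _, _, primitive_append_left hu, hsegPQ⟩

end AuxForProd3
/-- the product of two full-dimensional lattice complete
polytopes with the same lattice diameter is lattice complete, with the same
lattice diameter. -/
theorem prod_latticeComplete {k l : ℕ} (P : Set (Fin k → ℝ)) (Q : Set (Fin l → ℝ))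
    (hPbody : IsConvexBody P) (hQbody : IsConvexBody Q)
    (hPpoly : IsPolytope P) (hQpoly : IsPolytope Q)
    (hPcomp : IsLatticeComplete P (intLattice k))
    (hQcomp : IsLatticeComplete Q (intLattice l))
    (hdiam : latticeDiam P (intLattice k) = latticeDiam Q (intLattice l)) :
    IsLatticeComplete (prodSet P Q) (intLattice (k + l)) ∧
    latticeDiam (prodSet P Q) (intLattice (k + l)) = latticeDiam P (intLattice k) := by
  have hPQbody := prodSet_isConvexBody hPbody hQbody
  have hQne : Q.Nonempty := hQbody.2.2.mono interior_subset
  have hEq := prod_latticeDiam_eq hPbody.2.1 hQbody.2.1 hQne hPQbody.2.1 hdiam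
  refine ⟨⟨hPQbody, ?_⟩, hEq⟩
  intro C' hC'body hss
  obtain ⟨x, hxC', hxPQ⟩ := Set.exists_of_ssubset hss
  rw [hEq]
  have hC'conv := hC'body.1
  have hC'cpt := hC'body.2.1
  have hsub : prodSet P Q ⊆ C' := hss.subset
  have hgoal : latticeDiam P (intLattice k) < latticeDiam C' (intLattice (k + l)) := by
    by_cases h1 : (fun i => x (Fin.castAdd l i)) ∈ P
    · by_cases h2 : (fun j => x (Fin.natAdd k j)) ∈ Q
      · exact absurd (⟨h1, h2⟩ : x ∈ prodSet P Q) hxPQ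
      · have hlt := oneSided_Q hQbody hQcomp hC'conv hC'cpt hsub h2 h1
          (by rw [append_eq_self x]; exact hxC')
        rw [hdiam]
        exact hlt
    · by_cases h2 : (fun j => x (Fin.natAdd k j)) ∈ Q
      · exact oneSided_P hPbody hPcomp hC'conv hC'cpt hsub h1 h2
          (by rw [append_eq_self x]; exact hxC')
      · obtain ⟨y, hyC', hy⟩ := escape hPbody hQbody hC'conv hsub hxC' h1 h2
        rcases hy with ⟨hyP, hyQ⟩ | ⟨hyP, hyQ⟩
        · exact oneSided_P hPbody hPcomp hC'conv hC'cpt hsub hyP hyQ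
            (by rw [append_eq_self y]; exact hyC')
        · have hlt := oneSided_Q hQbody hQcomp hC'conv hC'cpt hsub hyQ hyP
            (by rw [append_eq_self y]; exact hyC')
          rw [hdiam]
          exact hlt
  exact hgoal.ne'
end
end

section
/- Let P ⊂ ℝ^d be a d-dimensional polytope and Λ ⊂ ℝ^d a full-dimensional lattice. Then there exists a lattice reduced d-dimensional polytope Q ⊆ P with wdt_Λ(Q) = wdt_Λ(P) and with at most as many vertices as P. -/
open scoped Pointwise

noncomputable section

section A
variable {d : ℕ}

lemma dot_comm (x y : Fin d → ℝ) : dot x y = dot y x := by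
  unfold dot; exact Finset.sum_congr rfl fun i _ => mul_comm _ _

lemma dot_eq_inner (x y : Fin d → ℝ) :
    dot x y = inner ℝ ((WithLp.equiv 2 (Fin d → ℝ)).symm x) ((WithLp.equiv 2 (Fin d → ℝ)).symm y) := by
  rw [PiLp.inner_apply]; unfold dot; exact Finset.sum_congr rfl fun i _ => by simp [mul_comm]

/-- Euclidean norm on `Fin d → ℝ`. -/
def eN (x : Fin d → ℝ) : ℝ := ‖(WithLp.equiv 2 (Fin d → ℝ)).symm x‖

lemma eN_nonneg (x : Fin d → ℝ) : 0 ≤ eN x := norm_nonneg _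

lemma dot_le_eN (x y : Fin d → ℝ) : dot x y ≤ eN x * eN y := by
  rw [dot_eq_inner]; exact real_inner_le_norm _ _

lemma abs_dot_le_eN (x y : Fin d → ℝ) : |dot x y| ≤ eN x * eN y := by
  rw [dot_eq_inner]; exact abs_real_inner_le_norm _ _

lemma dot_self_eq (x : Fin d → ℝ) : dot x x = eN x * eN x := by
  rw [dot_eq_inner]; exact real_inner_self_eq_norm_mul_norm _

lemma eN_smul (c : ℝ) (x : Fin d → ℝ) : eN (c • x) = |c| * eN x := by
  unfold eN
  rw [show (WithLp.equiv 2 (Fin d → ℝ)).symm (c • x) = c • (WithLp.equiv 2 (Fin d → ℝ)).symm x from rfl]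
  rw [norm_smul, Real.norm_eq_abs]

lemma eN_add_le (x y : Fin d → ℝ) : eN (x + y) ≤ eN x + eN y := by
  unfold eN
  rw [show (WithLp.equiv 2 (Fin d → ℝ)).symm (x + y) = (WithLp.equiv 2 (Fin d → ℝ)).symm x + (WithLp.equiv 2 (Fin d → ℝ)).symm y from rfl]
  exact norm_add_le _ _

lemma eN_sub_le (x y : Fin d → ℝ) : eN (x - y) ≤ eN x + eN y := by
  have := eN_add_le x (-y)
  have h2 : eN (-y) = eN y := by
    have := eN_smul (-1) y; simpa using this
  simpa [sub_eq_add_neg, h2] using this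

lemma eN_eq_zero {x : Fin d → ℝ} : eN x = 0 ↔ x = 0 := by
  unfold eN
  rw [norm_eq_zero]
  constructor
  · intro h; exact congrArg (WithLp.equiv 2 (Fin d → ℝ)) h
  · intro h; rw [h]; rfl

lemma eN_pos {x : Fin d → ℝ} (hx : x ≠ 0) : 0 < eN x :=
  lt_of_le_of_ne (eN_nonneg x) (fun h => hx (eN_eq_zero.mp h.symm))

lemma dot_add_right (y a b : Fin d → ℝ) : dot y (a + b) = dot y a + dot y b := by
  unfold dot; rw [← Finset.sum_add_distrib]
  exact Finset.sum_congr rfl fun i _ => by simp [mul_add]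

lemma dot_sub_right (y a b : Fin d → ℝ) : dot y (a - b) = dot y a - dot y b := by
  unfold dot; rw [← Finset.sum_sub_distrib]
  exact Finset.sum_congr rfl fun i _ => by simp [mul_sub]

lemma dot_smul_right (y : Fin d → ℝ) (c : ℝ) (a : Fin d → ℝ) : dot y (c • a) = c * dot y a := by
  unfold dot; rw [Finset.mul_sum]
  exact Finset.sum_congr rfl fun i _ => by simp [Pi.smul_apply]; ring

lemma dot_smul_left (c : ℝ) (y a : Fin d → ℝ) : dot (c • y) a = c * dot y a := by
  rw [dot_comm, dot_smul_right, dot_comm]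

lemma dot_add_left (x y a : Fin d → ℝ) : dot (x + y) a = dot x a + dot y a := by
  rw [dot_comm, dot_add_right, dot_comm a x, dot_comm a y]

lemma dot_sum_right {ι : Type*} (s : Finset ι) (y : Fin d → ℝ) (f : ι → Fin d → ℝ) :
    dot y (∑ i ∈ s, f i) = ∑ i ∈ s, dot y (f i) := by
  classical
  induction s using Finset.induction with
  | empty => simp [dot]
  | insert _ _ h ih =>
      rw [Finset.sum_insert h, Finset.sum_insert h, dot_add_right, ih]

lemma dot_sum_left {ι : Type*} (s : Finset ι) (y : Fin d → ℝ) (f : ι → Fin d → ℝ) :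
    dot (∑ i ∈ s, f i) y = ∑ i ∈ s, dot (f i) y := by
  rw [dot_comm, dot_sum_right]
  exact Finset.sum_congr rfl fun i _ => dot_comm _ _

lemma dot_single (x : Fin d → ℝ) (i : Fin d) : dot x (Pi.single i 1) = x i := by
  unfold dot
  rw [Finset.sum_eq_single i]
  · simp
  · intro j _ hj; simp [Pi.single_apply, hj]
  · intro h; exact absurd (Finset.mem_univ i) h

lemma eN_single (i : Fin d) : eN (Pi.single i (1:ℝ)) = 1 := by
  have h := dot_self_eq (Pi.single i (1:ℝ))
  rw [dot_single] at h
  simp at h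
  nlinarith [eN_nonneg (Pi.single i (1:ℝ)), h]

lemma abs_apply_le_eN (x : Fin d → ℝ) (i : Fin d) : |x i| ≤ eN x := by
  have := abs_dot_le_eN x (Pi.single i 1)
  rw [dot_single, eN_single] at this
  simpa using this

lemma eN_sum_le {ι : Type*} (s : Finset ι) (f : ι → Fin d → ℝ) :
    eN (∑ i ∈ s, f i) ≤ ∑ i ∈ s, eN (f i) := by
  classical
  induction s using Finset.induction with
  | empty => simp [show eN (0 : Fin d → ℝ) = 0 from eN_eq_zero.mpr rfl]
  | insert _ _ h ih =>
      rw [Finset.sum_insert h, Finset.sum_insert h]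
      exact le_trans (eN_add_le _ _) (by linarith)

/-- standard basis as explicit family -/
def sing {d : ℕ} : Fin d → (Fin d → ℝ) := fun i => Pi.single i 1

lemma sing_apply (i j : Fin d) : sing i j = if j = i then (1:ℝ) else 0 := by
  simp [sing, Pi.single_apply]

lemma dot_sing (x : Fin d → ℝ) (i : Fin d) : dot x (sing i) = x i := dot_single x i

lemma eN_sing (i : Fin d) : eN (sing (d := d) i) = 1 := eN_single i

lemma sum_smul_sing (x : Fin d → ℝ) : ∑ i, x i • sing i = x := by
  funext j
  rw [Finset.sum_apply]
  rw [Finset.sum_eq_single j]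
  · simp [sing]
  · intro i _ hi
    simp [sing_apply]
    intro h; exact absurd h.symm hi
  · intro h; exact absurd (Finset.mem_univ j) h

lemma eN_le_sum_abs (x : Fin d → ℝ) : eN x ≤ ∑ i, |x i| := by
  calc eN x = eN (∑ i, x i • sing i) := by rw [sum_smul_sing]
    _ ≤ ∑ i, eN (x i • sing i) := eN_sum_le _ _
    _ = ∑ i, |x i| := Finset.sum_congr rfl fun i _ => by rw [eN_smul, eN_sing, mul_one]

end A
section B
variable {d : ℕ} {C D : Set (Fin d → ℝ)} {y : Fin d → ℝ}

lemma continuous_dot_right (y : Fin d → ℝ) : Continuous fun x : Fin d → ℝ => dot y x := by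
  unfold dot
  exact continuous_finset_sum _ fun i _ => continuous_const.mul (continuous_apply i)

lemma widthDir_spec (hC : IsCompact C) (hne : C.Nonempty) (y : Fin d → ℝ) :
    ∃ a ∈ C, ∃ b ∈ C, (∀ x ∈ C, dot y x ≤ dot y a) ∧ (∀ x ∈ C, dot y b ≤ dot y x) ∧
      widthDir C y = dot y a - dot y b := by
  obtain ⟨a, haC, ha⟩ := hC.exists_isMaxOn hne (continuous_dot_right y).continuousOn
  obtain ⟨b, hbC, hb⟩ := hC.exists_isMinOn hne (continuous_dot_right y).continuousOn
  refine ⟨a, haC, b, hbC, fun x hx => ha hx, fun x hx => hb hx, ?_⟩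
  have hg : IsGreatest {r | ∃ u ∈ C, ∃ v ∈ C, r = dot y (u - v)} (dot y a - dot y b) := by
    constructor
    · exact ⟨a, haC, b, hbC, (dot_sub_right y a b).symm⟩
    · rintro r ⟨u, hu, v, hv, rfl⟩
      rw [dot_sub_right]
      exact sub_le_sub (ha hu) (hb hv)
  exact hg.csSup_eq

lemma widthDir_nonneg (hC : IsCompact C) (hne : C.Nonempty) (y : Fin d → ℝ) :
    0 ≤ widthDir C y := by
  obtain ⟨a, ha, b, hb, hmax, hmin, heq⟩ := widthDir_spec hC hne y
  rw [heq]
  have := hmin a ha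
  linarith

lemma widthDir_bddAbove (hC : IsCompact C) (hne : C.Nonempty) (y : Fin d → ℝ) :
    BddAbove {r | ∃ a ∈ C, ∃ b ∈ C, r = dot y (a - b)} := by
  obtain ⟨a, ha, b, hb, hmax, hmin, heq⟩ := widthDir_spec hC hne y
  refine ⟨dot y a - dot y b, ?_⟩
  rintro r ⟨u, hu, v, hv, rfl⟩
  rw [dot_sub_right]
  exact sub_le_sub (hmax u hu) (hmin v hv)

lemma widthDir_mono (hD : IsCompact D) (hDne : D.Nonempty) (hsub : C ⊆ D) (hCne : C.Nonempty)
    (y : Fin d → ℝ) : widthDir C y ≤ widthDir D y := by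
  apply csSup_le_csSup (widthDir_bddAbove hD hDne y)
  · obtain ⟨c, hc⟩ := hCne
    exact ⟨0, c, hc, c, hc, by rw [sub_self]; simp [dot]⟩
  · rintro r ⟨u, hu, v, hv, rfl⟩
    exact ⟨u, hsub hu, v, hsub hv, rfl⟩

variable {ι : Type*} [Fintype ι] [Nonempty ι]

/-- max of `dot y` over the points of a tuple. -/
def maxF (y : Fin d → ℝ) (q : ι → (Fin d → ℝ)) : ℝ :=
  Finset.univ.sup' Finset.univ_nonempty (fun e => dot y (q e))

def minF (y : Fin d → ℝ) (q : ι → (Fin d → ℝ)) : ℝ :=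
  Finset.univ.inf' Finset.univ_nonempty (fun e => dot y (q e))

lemma dot_le_maxF (y : Fin d → ℝ) (q : ι → (Fin d → ℝ)) {x : Fin d → ℝ}
    (hx : x ∈ convexHull ℝ (Set.range q)) : dot y x ≤ maxF y q := by
  have hlin : IsLinearMap ℝ (fun x : Fin d → ℝ => dot y x) :=
    ⟨fun a b => dot_add_right y a b, fun c a => dot_smul_right y c a⟩
  have : convexHull ℝ (Set.range q) ⊆ {x | dot y x ≤ maxF y q} := by
    apply convexHull_min _ (convex_halfSpace_le hlin _)
    rintro x ⟨e, rfl⟩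
    show dot y (q e) ≤ maxF y q
    unfold maxF
    exact Finset.le_sup' (fun e => dot y (q e)) (Finset.mem_univ e)
  exact this hx

lemma minF_le_dot (y : Fin d → ℝ) (q : ι → (Fin d → ℝ)) {x : Fin d → ℝ}
    (hx : x ∈ convexHull ℝ (Set.range q)) : minF y q ≤ dot y x := by
  have hlin : IsLinearMap ℝ (fun x : Fin d → ℝ => dot y x) :=
    ⟨fun a b => dot_add_right y a b, fun c a => dot_smul_right y c a⟩
  have : convexHull ℝ (Set.range q) ⊆ {x | minF y q ≤ dot y x} := by
    apply convexHull_min _ (convex_halfSpace_ge hlin _)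
    rintro x ⟨e, rfl⟩
    show minF y q ≤ dot y (q e)
    unfold minF
    exact Finset.inf'_le (fun e => dot y (q e)) (Finset.mem_univ e)
  exact this hx

lemma exists_maxF (y : Fin d → ℝ) (q : ι → (Fin d → ℝ)) : ∃ e, maxF y q = dot y (q e) := by
  obtain ⟨e, _, he⟩ := Finset.exists_mem_eq_sup' (Finset.univ_nonempty) (fun e => dot y (q e))
  exact ⟨e, he⟩

lemma exists_minF (y : Fin d → ℝ) (q : ι → (Fin d → ℝ)) : ∃ e, minF y q = dot y (q e) := by
  obtain ⟨e, _, he⟩ := Finset.exists_mem_eq_inf' (Finset.univ_nonempty) (fun e => dot y (q e))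
  exact ⟨e, he⟩

lemma widthDir_polytope (y : Fin d → ℝ) (q : ι → (Fin d → ℝ)) :
    widthDir (convexHull ℝ (Set.range q)) y = maxF y q - minF y q := by
  have hg : IsGreatest {r | ∃ a ∈ convexHull ℝ (Set.range q), ∃ b ∈ convexHull ℝ (Set.range q),
      r = dot y (a - b)} (maxF y q - minF y q) := by
    constructor
    · obtain ⟨e1, he1⟩ := exists_maxF y q
      obtain ⟨e2, he2⟩ := exists_minF y q
      exact ⟨q e1, subset_convexHull ℝ _ ⟨e1, rfl⟩, q e2, subset_convexHull ℝ _ ⟨e2, rfl⟩,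
        by rw [dot_sub_right, he1, he2]⟩
    · rintro r ⟨u, hu, v, hv, rfl⟩
      rw [dot_sub_right]
      exact sub_le_sub (dot_le_maxF y q hu) (minF_le_dot y q hv)
  exact hg.csSup_eq

lemma continuous_maxF (y : Fin d → ℝ) : Continuous fun q : ι → (Fin d → ℝ) => maxF y q := by
  unfold maxF
  exact Continuous.finset_sup'_apply (f := fun (e : ι) (q : ι → (Fin d → ℝ)) => dot y (q e))
    Finset.univ_nonempty
    (fun e _ => (continuous_dot_right y).comp (continuous_apply e))

lemma continuous_minF (y : Fin d → ℝ) : Continuous fun q : ι → (Fin d → ℝ) => minF y q := by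
  unfold minF
  exact Continuous.finset_inf'_apply (f := fun (e : ι) (q : ι → (Fin d → ℝ)) => dot y (q e))
    Finset.univ_nonempty
    (fun e _ => (continuous_dot_right y).comp (continuous_apply e))

end B
section C
variable {d : ℕ} {L : Set (Fin d → ℝ)}

lemma dot_self_nonneg (y : Fin d → ℝ) : 0 ≤ dot y y :=
  Finset.sum_nonneg fun i _ => mul_self_nonneg _

lemma eq_zero_of_dot_self {y : Fin d → ℝ} (h : dot y y = 0) : y = 0 := by
  have h2 : ∀ i ∈ Finset.univ, y i * y i = 0 := by
    rw [← Finset.sum_eq_zero_iff_of_nonneg (fun i _ => mul_self_nonneg (y i))]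
    exact h
  funext i
  exact mul_self_eq_zero.mp (h2 i (Finset.mem_univ i))

lemma exists_dualBasis (B : Module.Basis (Fin d) ℝ (Fin d → ℝ)) :
    ∃ Db : Module.Basis (Fin d) ℝ (Fin d → ℝ), ∀ i j, dot (B i) (Db j) = if i = j then 1 else 0 := by
  classical
  let φ : (Fin d → ℝ) →ₗ[ℝ] (Fin d → ℝ) :=
    { toFun := fun y => fun i => dot (B i) y
      map_add' := fun a b => by funext i; exact dot_add_right _ a b
      map_smul' := fun c a => by funext i; exact dot_smul_right _ c a }
  have hinj : Function.Injective φ := by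
    rw [injective_iff_map_eq_zero]
    intro y hy
    have hz : ∀ i, dot (B i) y = 0 := fun i => congrFun hy i
    have hdy : dot y y = 0 := by
      have hrepr : dot y y = dot (∑ i, B.repr y i • B i) y := by rw [B.sum_repr]
      rw [hrepr, dot_sum_left]
      apply Finset.sum_eq_zero
      intro i _
      rw [dot_smul_left, hz i, mul_zero]
    exact eq_zero_of_dot_self hdy
  have hbij : Function.Bijective φ :=
    ⟨hinj, LinearMap.injective_iff_surjective.mp hinj⟩
  let e := LinearEquiv.ofBijective φ hbij
  refine ⟨(Pi.basisFun ℝ (Fin d)).map e.symm, fun i j => ?_⟩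
  rw [Module.Basis.map_apply]
  have : dot (B i) (e.symm ((Pi.basisFun ℝ (Fin d)) j)) =
      (e (e.symm ((Pi.basisFun ℝ (Fin d)) j))) i := rfl
  rw [this, e.apply_symm_apply, Pi.basisFun_apply, Pi.single_apply]

variable (B Db : Module.Basis (Fin d) ℝ (Fin d → ℝ))
  (hB : L = Set.range fun z : Fin d → ℤ => ∑ i, (z i : ℝ) • B i)
  (hdot : ∀ i j, dot (B i) (Db j) = if i = j then 1 else 0)

include hB in
lemma basis_mem_lattice (i : Fin d) : B i ∈ L := by
  classical
  rw [hB]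
  refine ⟨Pi.single i 1, ?_⟩
  show (∑ j, ((Pi.single i 1 : Fin d → ℤ) j : ℝ) • B j) = B i
  rw [Finset.sum_eq_single i]
  · simp
  · intro j _ hj; simp [Pi.single_apply, hj]
  · intro h; exact absurd (Finset.mem_univ i) h

include hdot in
lemma dot_sum_Db (z : Fin d → ℝ) (i : Fin d) :
    dot (B i) (∑ j, z j • Db j) = z i := by
  rw [dot_sum_right]
  rw [Finset.sum_eq_single i]
  · rw [dot_smul_right, hdot i i]; simp
  · intro j _ hj; rw [dot_smul_right, hdot i j, if_neg (Ne.symm hj), mul_zero]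
  · intro h; exact absurd (Finset.mem_univ i) h

include hdot in
lemma dot_B_eq_repr (y : Fin d → ℝ) (i : Fin d) : dot (B i) y = Db.repr y i := by
  conv_lhs => rw [← Db.sum_repr y]
  exact dot_sum_Db B Db hdot _ i

include hB hdot in
lemma dualLattice_eq :
    dualLattice L = Set.range fun z : Fin d → ℤ => ∑ i, (z i : ℝ) • Db i := by
  ext y
  constructor
  · intro hy
    have h1 : ∀ i, ∃ n : ℤ, dot (B i) y = n := fun i => hy _ (basis_mem_lattice B hB i)
    choose n hn using h1
    refine ⟨n, ?_⟩
    have h2 : ∀ i, Db.repr y i = ((n i : ℝ)) := fun i => by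
      rw [← dot_B_eq_repr B Db hdot y i]; exact hn i
    show (∑ i, (n i : ℝ) • Db i) = y
    conv_rhs => rw [← Db.sum_repr y]
    exact Finset.sum_congr rfl fun i _ => by rw [h2 i]
  · rintro ⟨z, rfl⟩
    intro x hx
    rw [hB] at hx
    obtain ⟨m, rfl⟩ := hx
    refine ⟨∑ i, m i * z i, ?_⟩
    rw [dot_sum_left]
    push_cast
    refine Finset.sum_congr rfl fun i _ => ?_
    rw [dot_smul_left, dot_sum_Db B Db hdot (fun j => (z j : ℝ)) i]

include hB hdot in
lemma dualLattice_finite (R : ℝ) : {y | y ∈ dualLattice L ∧ eN y ≤ R}.Finite := by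
  classical
  have hsub : {y | y ∈ dualLattice L ∧ eN y ≤ R} ⊆
      (fun z : Fin d → ℤ => ∑ i, (z i : ℝ) • Db i) ''
        (Set.pi Set.univ (fun i => {k : ℤ | |(k : ℝ)| ≤ eN (B i) * R})) := by
    rintro y ⟨hy, hyR⟩
    rw [dualLattice_eq B Db hB hdot] at hy
    obtain ⟨z, rfl⟩ := hy
    refine ⟨z, ?_, rfl⟩
    intro i _
    have h1 : dot (B i) (∑ j, (z j : ℝ) • Db j) = z i :=
      dot_sum_Db B Db hdot (fun j => (z j : ℝ)) i
    have h2 : |(z i : ℝ)| ≤ eN (B i) * eN (∑ j, (z j : ℝ) • Db j) := by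
      rw [← h1]; exact abs_dot_le_eN _ _
    exact h2.trans (mul_le_mul_of_nonneg_left hyR (eN_nonneg _))
  refine Set.Finite.subset (Set.Finite.image _ (Set.Finite.pi fun i => ?_)) hsub
  have : {k : ℤ | |(k : ℝ)| ≤ eN (B i) * R} ⊆ Set.Icc (-(⌈eN (B i) * R⌉)) ⌈eN (B i) * R⌉ := by
    intro k hk
    simp only [Set.mem_setOf_eq] at hk
    rw [abs_le] at hk
    constructor
    · have := hk.1
      have h3 : ((-(⌈eN (B i) * R⌉) : ℤ) : ℝ) ≤ (k : ℝ) := by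
        push_cast
        linarith [Int.le_ceil (eN (B i) * R)]
      exact_mod_cast h3
    · have h3 : ((k : ℤ) : ℝ) ≤ ((⌈eN (B i) * R⌉ : ℤ) : ℝ) := by
        push_cast
        linarith [Int.le_ceil (eN (B i) * R)]
      exact_mod_cast h3
  exact (Set.finite_Icc _ _).subset this

include hB hdot in
lemma Db_mem_dual (j : Fin d) : Db j ∈ dualLattice L := by
  classical
  rw [dualLattice_eq B Db hB hdot]
  refine ⟨Pi.single j 1, ?_⟩
  show (∑ i, ((Pi.single j 1 : Fin d → ℤ) i : ℝ) • Db i) = Db j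
  rw [Finset.sum_eq_single j]
  · simp
  · intro i _ hi; simp [Pi.single_apply, hi]
  · intro h; exact absurd (Finset.mem_univ j) h

include hB hdot in
lemma exists_min_norm_dual [Nonempty (Fin d)] :
    ∃ m : ℝ, 0 < m ∧ ∀ y ∈ dualLattice L, y ≠ 0 → m ≤ eN y := by
  classical
  set j0 : Fin d := Classical.arbitrary _
  set y0 := Db j0 with hy0
  have hy0d : y0 ∈ dualLattice L := Db_mem_dual B Db hB hdot j0
  have hy0ne : y0 ≠ 0 := Db.ne_zero j0
  set A := {y | (y ∈ dualLattice L ∧ eN y ≤ eN y0) ∧ y ≠ 0} with hA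
  have hAfin : A.Finite := by
    apply Set.Finite.subset (dualLattice_finite B Db hB hdot (eN y0))
    rintro y ⟨⟨h1, h2⟩, _⟩; exact ⟨h1, h2⟩
  have hAne : A.Nonempty := ⟨y0, ⟨hy0d, le_refl _⟩, hy0ne⟩
  obtain ⟨ymin, hyminA, hymin⟩ :=
    Set.exists_min_image A eN hAfin hAne
  refine ⟨eN ymin, eN_pos hyminA.2, fun y hy hyne => ?_⟩
  by_cases hc : eN y ≤ eN y0
  · exact hymin y ⟨⟨hy, hc⟩, hyne⟩
  · exact le_trans (hymin y0 ⟨⟨hy0d, le_refl _⟩, hy0ne⟩) (by linarith)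

end C
section C2
variable {d : ℕ} {L : Set (Fin d → ℝ)}
variable (B Db : Module.Basis (Fin d) ℝ (Fin d → ℝ))
  (hB : L = Set.range fun z : Fin d → ℤ => ∑ i, (z i : ℝ) • B i)
  (hdot : ∀ i j, dot (B i) (Db j) = if i = j then 1 else 0)

include hB hdot in
lemma exists_dual_near_line (u : Fin d → ℝ) (hu : u ≠ 0) {ε : ℝ} (hε : 0 < ε) :
    ∃ y ∈ dualLattice L, y ≠ 0 ∧ ∃ m : ℝ, eN (y - m • u) < ε := by
  classical
  set c : Fin d → ℝ := fun i => Db.repr u i with hc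
  set CD : ℝ := ∑ i, eN (Db i) with hCD
  have hCD0 : 0 ≤ CD := Finset.sum_nonneg fun i _ => eN_nonneg _
  set δ : ℝ := min ε (eN u) with hδ
  have hδ0 : 0 < δ := lt_min hε (eN_pos hu)
  obtain ⟨N, hN⟩ := exists_nat_gt (CD / δ)
  have hN0 : 0 < N := by
    have : (0:ℝ) ≤ CD / δ := div_nonneg hCD0 hδ0.le
    exact_mod_cast lt_of_le_of_lt this hN
  have hCDN : CD / N < δ := by
    rw [div_lt_iff₀ (by exact_mod_cast hN0)]
    rw [div_lt_iff₀ hδ0] at hN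
    linarith [hN]
  -- pigeonhole
  have hfin : Finite (Fin d → Fin N) := by infer_instance
  set f : ℕ → (Fin d → Fin N) := fun T => fun i =>
    ⟨⌊Int.fract ((T : ℝ) * c i) * N⌋₊, by
      apply Nat.floor_lt (mul_nonneg (Int.fract_nonneg _) (Nat.cast_nonneg _)) |>.mpr
      have h1 : Int.fract ((T : ℝ) * c i) < 1 := Int.fract_lt_one _
      have hN0' : (0:ℝ) < N := by exact_mod_cast hN0
      nlinarith⟩ with hf
  obtain ⟨T₁, T₂, hTne, hTeq⟩ := Finite.exists_ne_map_eq_of_infinite f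
  -- wlog T₁ < T₂
  obtain ⟨S₁, S₂, hS, hSeq⟩ : ∃ S₁ S₂ : ℕ, S₁ < S₂ ∧ f S₁ = f S₂ := by
    rcases lt_or_gt_of_ne hTne with h | h
    · exact ⟨T₁, T₂, h, hTeq⟩
    · exact ⟨T₂, T₁, h, hTeq.symm⟩
  -- fractional parts are close
  have hfrac : ∀ i, |Int.fract ((S₂ : ℝ) * c i) - Int.fract ((S₁ : ℝ) * c i)| < 1 / N := by
    intro i
    have hkey : ⌊Int.fract ((S₁ : ℝ) * c i) * N⌋₊ = ⌊Int.fract ((S₂ : ℝ) * c i) * N⌋₊ := by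
      have := congrFun hSeq i
      simpa [hf] using congrArg Fin.val this
    have hN0' : (0:ℝ) < N := by exact_mod_cast hN0
    set x := Int.fract ((S₁ : ℝ) * c i) * N with hx
    set y := Int.fract ((S₂ : ℝ) * c i) * N with hy
    have hx0 : 0 ≤ x := mul_nonneg (Int.fract_nonneg _) (Nat.cast_nonneg _)
    have hy0 : 0 ≤ y := mul_nonneg (Int.fract_nonneg _) (Nat.cast_nonneg _)
    have h1 : x < ⌊x⌋₊ + 1 := Nat.lt_floor_add_one x
    have h2 : (⌊x⌋₊ : ℝ) ≤ x := Nat.floor_le hx0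
    have h3 : y < ⌊y⌋₊ + 1 := Nat.lt_floor_add_one y
    have h4 : (⌊y⌋₊ : ℝ) ≤ y := Nat.floor_le hy0
    rw [hkey] at h1 h2
    have h5 : |y - x| < 1 := by rw [abs_lt]; constructor <;> linarith
    have h6 : Int.fract ((S₂ : ℝ) * c i) - Int.fract ((S₁ : ℝ) * c i) = (y - x) / N := by
      field_simp [hx, hy]
      rw [hx, hy, mul_comm (c i)]; ring
    rw [h6, abs_div, abs_of_pos hN0']
    exact (div_lt_div_iff_of_pos_right hN0').mpr h5
  -- construct the dual vector
  set m : ℝ := (S₂ : ℝ) - (S₁ : ℝ) with hm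
  have hm1 : 1 ≤ m := by
    have : S₁ + 1 ≤ S₂ := hS
    have h' : ((S₁ : ℝ) + 1) ≤ (S₂ : ℝ) := by exact_mod_cast this
    linarith
  set z : Fin d → ℤ := fun i => ⌊(S₂ : ℝ) * c i⌋ - ⌊(S₁ : ℝ) * c i⌋ with hz
  set y : Fin d → ℝ := ∑ i, (z i : ℝ) • Db i with hy
  have hydual : y ∈ dualLattice L := by
    rw [dualLattice_eq B Db hB hdot]; exact ⟨z, rfl⟩
  have hru : u = ∑ i, c i • Db i := (Db.sum_repr u).symm
  have hmu : m • u = ∑ i, (m * c i) • Db i := by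
    conv_lhs => rw [hru]
    rw [Finset.smul_sum]
    exact Finset.sum_congr rfl fun i _ => (smul_smul m (c i) (Db i))
  have hdiff : y - m • u = ∑ i, ((z i : ℝ) - m * c i) • Db i := by
    rw [hmu, hy, ← Finset.sum_sub_distrib]
    exact Finset.sum_congr rfl fun i _ => (sub_smul _ _ _).symm
  have hcoef : ∀ i, |(z i : ℝ) - m * c i| < 1 / N := by
    intro i
    have e1 : (S₁ : ℝ) * c i - ⌊(S₁ : ℝ) * c i⌋ = Int.fract ((S₁ : ℝ) * c i) :=
      Int.self_sub_floor _
    have e2 : (S₂ : ℝ) * c i - ⌊(S₂ : ℝ) * c i⌋ = Int.fract ((S₂ : ℝ) * c i) :=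
      Int.self_sub_floor _
    have e3 : (z i : ℝ) - m * c i
        = -(Int.fract ((S₂ : ℝ) * c i) - Int.fract ((S₁ : ℝ) * c i)) := by
      have hzc : (z i : ℝ) = (⌊(S₂ : ℝ) * c i⌋ : ℝ) - (⌊(S₁ : ℝ) * c i⌋ : ℝ) := by
        rw [hz]; push_cast; ring
      rw [hzc, hm]
      linarith [e1, e2]
    rw [e3, abs_neg]
    exact hfrac i
  have hbound : eN (y - m • u) < ε := by
    have h1 : eN (y - m • u) ≤ ∑ i, |(z i : ℝ) - m * c i| * eN (Db i) := by
      rw [hdiff]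
      refine le_trans (eN_sum_le _ _) ?_
      exact Finset.sum_le_sum fun i _ => le_of_eq (eN_smul _ _)
    have h2 : ∑ i, |(z i : ℝ) - m * c i| * eN (Db i) ≤ ∑ i, (1 / N) * eN (Db i) :=
      Finset.sum_le_sum fun i _ =>
        mul_le_mul_of_nonneg_right (hcoef i).le (eN_nonneg _)
    have h3 : ∑ i, (1 / (N:ℝ)) * eN (Db i) = CD / N := by
      rw [eq_comm, Finset.sum_div]
      exact Finset.sum_congr rfl fun i _ => by ring
    have h4 : CD / N < ε := lt_of_lt_of_le hCDN (min_le_left _ _)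
    linarith
  have hbound' : eN (y - m • u) < eN u := by
    have h4 : CD / N < eN u := lt_of_lt_of_le hCDN (min_le_right _ _)
    have h1 : eN (y - m • u) ≤ CD / N := by
      have h1 : eN (y - m • u) ≤ ∑ i, |(z i : ℝ) - m * c i| * eN (Db i) := by
        rw [hdiff]
        refine le_trans (eN_sum_le _ _) ?_
        exact Finset.sum_le_sum fun i _ => le_of_eq (eN_smul _ _)
      have h2 : ∑ i, |(z i : ℝ) - m * c i| * eN (Db i) ≤ ∑ i, (1 / N) * eN (Db i) :=
        Finset.sum_le_sum fun i _ =>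
          mul_le_mul_of_nonneg_right (hcoef i).le (eN_nonneg _)
      have h3 : ∑ i, (1 / (N:ℝ)) * eN (Db i) = CD / N := by
        rw [eq_comm, Finset.sum_div]
        exact Finset.sum_congr rfl fun i _ => by ring
      linarith
    linarith
  have hyne : y ≠ 0 := by
    intro h0
    have h1 : eN (m • u) ≤ eN y + eN (y - m • u) := by
      have e : y - (y - m • u) = m • u := by abel
      calc eN (m • u) = eN (y - (y - m • u)) := by rw [e]
        _ ≤ eN y + eN (y - m • u) := eN_sub_le _ _
    have h2 : eN (m • u) = |m| * eN u := eN_smul _ _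
    have h3 : |m| = m := abs_of_pos (by linarith)
    have h4 : eN y = 0 := by rw [h0]; exact eN_eq_zero.mpr rfl
    have h5 : eN u ≤ eN (m • u) := by
      rw [h2, h3]
      nlinarith [eN_nonneg u]
    linarith
  exact ⟨y, hydual, hyne, m, hbound⟩

end C2
section D
variable {d : ℕ} {L C D : Set (Fin d → ℝ)}

lemma widthDir_zero_nonneg (hCne : C.Nonempty) (hC : IsCompact C) :
    ∀ y, 0 ≤ widthDir C y := widthDir_nonneg hC hCne

lemma latticeWidth_bddBelow (hC : IsCompact C) (hCne : C.Nonempty) :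
    BddBelow {w | ∃ y ∈ dualLattice L, y ≠ 0 ∧ w = widthDir C y} := by
  refine ⟨0, ?_⟩
  rintro w ⟨y, hy, hyne, rfl⟩
  exact widthDir_nonneg hC hCne y

lemma latticeWidth_le (hC : IsCompact C) (hCne : C.Nonempty) {y : Fin d → ℝ}
    (hy : y ∈ dualLattice L) (hyne : y ≠ 0) : latticeWidth C L ≤ widthDir C y :=
  csInf_le (latticeWidth_bddBelow hC hCne) ⟨y, hy, hyne, rfl⟩

lemma le_latticeWidth {w : ℝ} {y₀ : Fin d → ℝ} (hy₀ : y₀ ∈ dualLattice L) (hy₀ne : y₀ ≠ 0)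
    (h : ∀ y ∈ dualLattice L, y ≠ 0 → w ≤ widthDir C y) : w ≤ latticeWidth C L := by
  refine le_csInf ⟨widthDir C y₀, y₀, hy₀, hy₀ne, rfl⟩ ?_
  rintro b ⟨y, hy, hyne, rfl⟩
  exact h y hy hyne

lemma latticeWidth_mono (hC : IsCompact C) (hCne : C.Nonempty) (hD : IsCompact D)
    (hDne : D.Nonempty) (hsub : C ⊆ D) {y₀ : Fin d → ℝ} (hy₀ : y₀ ∈ dualLattice L)
    (hy₀ne : y₀ ≠ 0) : latticeWidth C L ≤ latticeWidth D L := by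
  refine le_csInf ⟨widthDir D y₀, y₀, hy₀, hy₀ne, rfl⟩ ?_
  rintro b ⟨y, hy, hyne, rfl⟩
  exact le_trans (latticeWidth_le hC hCne hy hyne) (widthDir_mono hD hDne hsub hCne y)

lemma widthDir_ge_of_ball {x₀ : Fin d → ℝ} {ρ : ℝ} (hρ : 0 < ρ) (hC : IsCompact C)
    (hball : Metric.ball x₀ ρ ⊆ C) (y : Fin d → ℝ) : ρ * eN y ≤ widthDir C y := by
  have hx₀ : x₀ ∈ C := hball (Metric.mem_ball_self hρ)
  by_cases hy : y = 0
  · rw [hy]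
    rw [show eN (0 : Fin d → ℝ) = 0 from eN_eq_zero.mpr rfl, mul_zero]
    exact widthDir_nonneg hC ⟨x₀, hx₀⟩ 0
  have hey : 0 < eN y := eN_pos hy
  set c : ℝ := ρ / (2 * eN y) with hcdef
  have hc : 0 < c := by positivity
  have hnorm : ‖c • y‖ ≤ ρ / 2 := by
    rw [norm_smul, Real.norm_eq_abs, abs_of_pos hc]
    have h1 : ‖y‖ ≤ eN y := by
      apply (pi_norm_le_iff_of_nonneg (eN_nonneg y)).mpr
      intro i
      rw [Real.norm_eq_abs]
      exact abs_apply_le_eN y i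
    calc c * ‖y‖ ≤ c * eN y := by nlinarith
      _ = ρ / 2 := by rw [hcdef]; field_simp
  have ha : x₀ + c • y ∈ C := by
    apply hball
    rw [Metric.mem_ball, dist_eq_norm]
    have : x₀ + c • y - x₀ = c • y := by abel
    rw [this]
    linarith
  have hb : x₀ - c • y ∈ C := by
    apply hball
    rw [Metric.mem_ball, dist_eq_norm]
    have : x₀ - c • y - x₀ = -(c • y) := by abel
    rw [this, norm_neg]
    linarith
  have hval : dot y ((x₀ + c • y) - (x₀ - c • y)) = ρ * eN y := by
    have h1 : (x₀ + c • y) - (x₀ - c • y) = (2 * c) • y := by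
      rw [two_mul, add_smul]; abel
    rw [h1, dot_smul_right, dot_self_eq]
    rw [hcdef]
    field_simp
  have hmem : ρ * eN y ∈ {r | ∃ a ∈ C, ∃ b ∈ C, r = dot y (a - b)} :=
    ⟨x₀ + c • y, ha, x₀ - c • y, hb, hval.symm⟩
  exact le_csSup (widthDir_bddAbove hC ⟨x₀, hx₀⟩ y) hmem

lemma exists_width_ball (hC : IsCompact C) (hint : (interior C).Nonempty) :
    ∃ ρ : ℝ, 0 < ρ ∧ ∀ y : Fin d → ℝ, ρ * eN y ≤ widthDir C y := by
  obtain ⟨x₀, hx₀⟩ := hint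
  obtain ⟨ρ, hρ, hball⟩ := Metric.isOpen_iff.mp isOpen_interior x₀ hx₀
  exact ⟨ρ, hρ, fun y => widthDir_ge_of_ball hρ hC (hball.trans interior_subset) y⟩

lemma continuous_eN : Continuous (eN (d := d)) :=
  ((PiLp.continuousLinearEquiv 2 ℝ (fun _ : Fin d => ℝ)).symm.continuous).norm

lemma exists_eN_bound (hC : IsCompact C) (hCne : C.Nonempty) :
    ∃ R : ℝ, 0 ≤ R ∧ ∀ x ∈ C, eN x ≤ R := by
  obtain ⟨x, hx, hmax⟩ := hC.exists_isMaxOn hCne continuous_eN.continuousOn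
  exact ⟨eN x, eN_nonneg x, fun z hz => hmax hz⟩

/-- A compact convex set whose width in every nonzero dual lattice direction is at least
`w > 0` has nonempty interior. -/
lemma interior_nonempty_of_width (B Db : Module.Basis (Fin d) ℝ (Fin d → ℝ))
    (hB : L = Set.range fun z : Fin d → ℤ => ∑ i, (z i : ℝ) • B i)
    (hdot : ∀ i j, dot (B i) (Db j) = if i = j then 1 else 0)
    (hC : IsCompact C) (hconv : Convex ℝ C) (hCne : C.Nonempty) {w : ℝ} (hw : 0 < w)
    (hwid : ∀ y ∈ dualLattice L, y ≠ 0 → w ≤ widthDir C y) :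
    (interior C).Nonempty := by
  by_contra hint
  -- C lies in a proper affine subspace, get a normal direction u
  have hspan : affineSpan ℝ C ≠ ⊤ := by
    intro htop
    exact hint (hconv.interior_nonempty_iff_affineSpan_eq_top.mpr htop)
  have hvspan : vectorSpan ℝ C ≠ ⊤ := by
    intro htop
    exact hspan ((AffineSubspace.affineSpan_eq_top_iff_vectorSpan_eq_top_of_nonempty ℝ (Fin d → ℝ) (Fin d → ℝ) hCne).mpr htop)
  -- move to EuclideanSpace to get an orthogonal vector
  set ψ := WithLp.linearEquiv 2 ℝ (Fin d → ℝ) with hψ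
  set W' : Submodule ℝ (EuclideanSpace ℝ (Fin d)) := (vectorSpan ℝ C).map ψ.symm.toLinearMap
    with hW'
  have hW'ne : W' ≠ ⊤ := by
    intro htop
    apply hvspan
    rw [Submodule.eq_top_iff']
    intro x
    have hx : ψ.symm x ∈ W' := htop ▸ Submodule.mem_top
    obtain ⟨v, hv, hvx⟩ := hx
    have : v = x := by
      have := congrArg ψ.symm.symm hvx
      simpa using this
    rwa [← this]
  have hWbot : W'ᗮ ≠ ⊥ := by
    intro hbot
    exact hW'ne (Submodule.orthogonal_eq_bot_iff.mp hbot)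
  obtain ⟨u', hu'W, hu'ne⟩ := Submodule.exists_mem_ne_zero_of_ne_bot hWbot
  set u : Fin d → ℝ := ψ u' with hu
  have hune : u ≠ 0 := by
    intro h0
    apply hu'ne
    have := congrArg ψ.symm h0
    rw [hu] at this; simpa using this
  have hortho : ∀ a ∈ C, ∀ b ∈ C, dot u (a - b) = 0 := by
    intro a ha b hb
    have hmem : a - b ∈ vectorSpan ℝ C := by
      have := vsub_mem_vectorSpan ℝ ha hb
      simpa using this
    have hmem' : ψ.symm (a - b) ∈ W' := ⟨a - b, hmem, rfl⟩
    have := (Submodule.mem_orthogonal W' u').mp hu'W _ hmem'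
    rw [dot_comm, dot_eq_inner]
    have heq : (WithLp.equiv 2 (Fin d → ℝ)).symm (a - b) = ψ.symm (a - b) := rfl
    have heq2 : (WithLp.equiv 2 (Fin d → ℝ)).symm u = u' := rfl
    rw [heq, heq2]
    exact this
  -- bound the diameter
  obtain ⟨R, hR0, hR⟩ := exists_eN_bound hC hCne
  set ε : ℝ := w / (2 * R + 1) with hε
  have hε0 : 0 < ε := by positivity
  obtain ⟨y, hydual, hyne, m, hym⟩ := exists_dual_near_line B Db hB hdot u hune hε0
  -- width in direction y is small
  obtain ⟨a, ha, b, hb, hmax, hmin, heq⟩ := widthDir_spec hC hCne y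
  have hsmall : widthDir C y < w := by
    rw [heq, ← dot_sub_right]
    have h1 : dot y (a - b) = dot (m • u) (a - b) + dot (y - m • u) (a - b) := by
      rw [← dot_add_left]
      congr 1
      abel
    rw [h1, dot_smul_left, hortho a ha b hb, mul_zero, zero_add]
    have h2 : dot (y - m • u) (a - b) ≤ eN (y - m • u) * eN (a - b) := dot_le_eN _ _
    have h3 : eN (a - b) ≤ 2 * R := by
      calc eN (a - b) ≤ eN a + eN b := eN_sub_le a b
        _ ≤ 2 * R := by linarith [hR a ha, hR b hb]
    have h4 : eN (y - m • u) * eN (a - b) ≤ ε * (2 * R) := by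
      apply mul_le_mul hym.le h3 (eN_nonneg _) hε0.le
    have h5 : ε * (2 * R) < w := by
      rw [hε]
      rw [div_mul_eq_mul_div, div_lt_iff₀ (by positivity)]
      nlinarith
    linarith
  exact absurd (hwid y hydual hyne) (not_le.mpr hsmall)

end D
section E
variable {d : ℕ}

/-- Encodable instance for rational direction tuples. -/
noncomputable instance : Encodable (Fin d → ℚ) := (Encodable.fintypePi (Fin d) (fun _ => ℚ)).out

/-- A countable sequence of directions that is dense in `ℝ^d`. -/
def dirSeq (d : ℕ) : ℕ → (Fin d → ℝ) := fun n =>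
  match Encodable.decode (α := Fin d → ℚ) n with
  | some c => fun i => (c i : ℝ)
  | none => 0

lemma dirSeq_dense (w : Fin d → ℝ) {δ : ℝ} (hδ : 0 < δ) :
    ∃ n, eN (dirSeq d n - w) < δ := by
  have hδ' : 0 < δ / (d + 1) := by positivity
  have hq : ∀ i : Fin d, ∃ q : ℚ, w i < q ∧ (q : ℝ) < w i + δ / (d + 1) := by
    intro i
    exact exists_rat_btwn (by linarith)
  choose c hc1 hc2 using hq
  refine ⟨Encodable.encode c, ?_⟩
  have hdec : dirSeq d (Encodable.encode c) = fun i => (c i : ℝ) := by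
    unfold dirSeq
    rw [Encodable.encodek]
  rw [hdec]
  calc eN ((fun i => (c i : ℝ)) - w) ≤ ∑ i, |(c i : ℝ) - w i| := eN_le_sum_abs _
    _ ≤ ∑ _i : Fin d, δ / (d + 1) := by
        apply Finset.sum_le_sum
        intro i _
        rw [abs_le]
        constructor <;> [linarith [hc1 i]; linarith [hc2 i]]
    _ = d * (δ / (d + 1)) := by rw [Finset.sum_const, Finset.card_univ]; simp [mul_comm]
    _ < δ := by
        rw [mul_div_assoc'] ; rw [div_lt_iff₀ (by positivity)]
        nlinarith [Nat.cast_nonneg (α := ℝ) d]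

lemma eN_sub_symm (x y : Fin d → ℝ) : eN (x - y) = eN (y - x) := by
  have : x - y = (-1 : ℝ) • (y - x) := by simp
  rw [this, eN_smul]; simp

variable {ι : Type*} [Fintype ι] [Nonempty ι]

lemma maxF_perturb {R : ℝ} (u w : Fin d → ℝ) (q : ι → (Fin d → ℝ)) (hR : ∀ e, eN (q e) ≤ R) :
    maxF u q ≤ maxF w q + eN (u - w) * R := by
  obtain ⟨e, he⟩ := exists_maxF u q
  rw [he]
  have h1 : dot u (q e) = dot w (q e) + dot (u - w) (q e) := by
    rw [← dot_add_left]; congr 1; abel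
  rw [h1]
  have h2 : dot w (q e) ≤ maxF w q :=
    dot_le_maxF w q (subset_convexHull ℝ _ ⟨e, rfl⟩)
  have h3 : dot (u - w) (q e) ≤ eN (u - w) * R := by
    calc dot (u - w) (q e) ≤ eN (u - w) * eN (q e) := dot_le_eN _ _
      _ ≤ eN (u - w) * R := mul_le_mul_of_nonneg_left (hR e) (eN_nonneg _)
  linarith

/-- The strictly monotone functional used to find a minimal polytope. -/
def Vfun (q : ι → (Fin d → ℝ)) : ℝ :=
  ∑' n, (1 / 2 : ℝ) ^ n * (Real.arctan (maxF (dirSeq d n) q) + 2)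

lemma arctan_bounds (x : ℝ) : |Real.arctan x + 2| ≤ 4 := by
  have h1 := Real.arctan_lt_pi_div_two x
  have h2 := Real.neg_pi_div_two_lt_arctan x
  have hπ : Real.pi < 4 := by linarith [Real.pi_lt_d2]
  rw [abs_le]
  constructor <;> nlinarith

lemma arctan_term_nonneg (x : ℝ) : 0 ≤ Real.arctan x + 2 := by
  have h2 := Real.neg_pi_div_two_lt_arctan x
  have hπ : Real.pi < 4 := by linarith [Real.pi_lt_d2]
  nlinarith

lemma norm_term_le (n : ℕ) (x : ℝ) :
    ‖(1 / 2 : ℝ) ^ n * (Real.arctan x + 2)‖ ≤ (1 / 2 : ℝ) ^ n * 4 := by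
  rw [norm_mul, Real.norm_eq_abs, Real.norm_eq_abs, abs_of_pos (by positivity : (0:ℝ) < (1/2:ℝ)^n)]
  exact mul_le_mul_of_nonneg_left (arctan_bounds x) (by positivity)

lemma Vfun_summable (q : ι → (Fin d → ℝ)) :
    Summable fun n => (1 / 2 : ℝ) ^ n * (Real.arctan (maxF (dirSeq d n) q) + 2) := by
  apply Summable.of_norm_bounded (g := fun n => (1 / 2 : ℝ) ^ n * 4)
  · exact (summable_geometric_of_lt_one (by norm_num) (by norm_num)).mul_right 4
  · intro n
    exact norm_term_le n _

lemma Vfun_continuous : Continuous (Vfun (d := d) (ι := ι)) := by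
  apply continuous_tsum (u := fun n => (1 / 2 : ℝ) ^ n * 4)
  · intro n
    exact (continuous_const.mul
      ((Real.continuous_arctan.comp (continuous_maxF (dirSeq d n))).add continuous_const))
  · exact (summable_geometric_of_lt_one (by norm_num) (by norm_num)).mul_right 4
  · intro n q
    exact norm_term_le n _

lemma Vfun_lt {q q' : ι → (Fin d → ℝ)}
    (hle : ∀ n, maxF (dirSeq d n) q' ≤ maxF (dirSeq d n) q)
    (hstrict : ∃ n, maxF (dirSeq d n) q' < maxF (dirSeq d n) q) :
    Vfun q' < Vfun q := by
  obtain ⟨n, hn⟩ := hstrict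
  apply Summable.tsum_lt_tsum_of_nonneg (i := n)
  · intro b
    exact mul_nonneg (by positivity) (arctan_term_nonneg _)
  · intro b
    apply mul_le_mul_of_nonneg_left _ (by positivity)
    have := Real.arctan_strictMono.monotone (hle b)
    linarith
  · apply mul_lt_mul_of_pos_left _ (by positivity)
    have := Real.arctan_strictMono hn
    linarith
  · exact Vfun_summable q

lemma exists_strict_dir {R : ℝ} {q q' : ι → (Fin d → ℝ)} (hR : ∀ e, eN (q e) ≤ R)
    (hR' : ∀ e, eN (q' e) ≤ R) (hR0 : 0 ≤ R) {v : Fin d → ℝ}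
    (hvQ : v ∈ convexHull ℝ (Set.range q)) (hvQ' : v ∉ convexHull ℝ (Set.range q')) :
    ∃ n, maxF (dirSeq d n) q' < maxF (dirSeq d n) q := by
  have hQ'cl : IsClosed (convexHull ℝ (Set.range q')) :=
    ((Set.finite_range q').isCompact_convexHull ℝ).isClosed
  obtain ⟨f, s, hfs, hsv⟩ :=
    geometric_hahn_banach_closed_point (convex_convexHull ℝ _) hQ'cl hvQ'
  set w₀ : Fin d → ℝ := fun i => f (sing i) with hw₀
  have hfdot : ∀ x : Fin d → ℝ, f x = dot w₀ x := by
    intro x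
    conv_lhs => rw [← sum_smul_sing x]
    rw [map_sum]
    unfold dot
    refine Finset.sum_congr rfl fun i _ => ?_
    rw [map_smul]
    simp [hw₀, mul_comm]
  have hq'lt : maxF w₀ q' < s := by
    obtain ⟨e, he⟩ := exists_maxF w₀ q'
    rw [he, ← hfdot]
    exact hfs _ (subset_convexHull ℝ _ ⟨e, rfl⟩)
  have hqgt : s < maxF w₀ q := by
    calc s < f v := hsv
      _ = dot w₀ v := hfdot v
      _ ≤ maxF w₀ q := dot_le_maxF w₀ q hvQ
  set γ : ℝ := maxF w₀ q - maxF w₀ q' with hγ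
  have hγ0 : 0 < γ := by rw [hγ]; linarith
  set δ : ℝ := γ / (2 * R + 2) with hδ
  have hδ0 : 0 < δ := by positivity
  obtain ⟨n, hn⟩ := dirSeq_dense w₀ hδ0
  refine ⟨n, ?_⟩
  have h1 : maxF (dirSeq d n) q' ≤ maxF w₀ q' + eN (dirSeq d n - w₀) * R :=
    maxF_perturb _ _ q' hR'
  have h2 : maxF w₀ q ≤ maxF (dirSeq d n) q + eN (w₀ - dirSeq d n) * R :=
    maxF_perturb _ _ q hR
  rw [eN_sub_symm w₀ (dirSeq d n)] at h2
  have h3 : eN (dirSeq d n - w₀) * R ≤ δ * R :=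
    mul_le_mul_of_nonneg_right hn.le hR0
  have h4 : 2 * (δ * R) < γ := by
    rw [hδ]
    rw [div_mul_eq_mul_div, ← mul_div_assoc, div_lt_iff₀ (by positivity)]
    nlinarith
  linarith

end E
section E2
variable {d : ℕ} {ι : Type*} [Fintype ι] [Nonempty ι]

lemma dot_neg_left (y x : Fin d → ℝ) : dot (-y) x = -(dot y x) := by
  have : (-y : Fin d → ℝ) = (-1 : ℝ) • y := by funext i; simp
  rw [this, dot_smul_left]; ring

lemma maxF_close {c : ℝ} {q q' : ι → (Fin d → ℝ)} (hc : ∀ e, eN (q' e - q e) ≤ c)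
    (y : Fin d → ℝ) : maxF y q' ≤ maxF y q + eN y * c := by
  obtain ⟨e, he⟩ := exists_maxF y q'
  rw [he]
  have h1 : dot y (q' e) = dot y (q e) + dot y (q' e - q e) := by
    rw [← dot_add_right]; congr 1; abel
  rw [h1]
  have h2 : dot y (q e) ≤ maxF y q := dot_le_maxF y q (subset_convexHull ℝ _ ⟨e, rfl⟩)
  have h3 : dot y (q' e - q e) ≤ eN y * c := by
    calc dot y (q' e - q e) ≤ eN y * eN (q' e - q e) := dot_le_eN _ _
      _ ≤ eN y * c := mul_le_mul_of_nonneg_left (hc e) (eN_nonneg _)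
  linarith

lemma minF_close {c : ℝ} {q q' : ι → (Fin d → ℝ)} (hc : ∀ e, eN (q' e - q e) ≤ c)
    (y : Fin d → ℝ) : minF y q - eN y * c ≤ minF y q' := by
  obtain ⟨e, he⟩ := exists_minF y q'
  rw [he]
  have h1 : dot y (q' e) = dot y (q e) - dot y (q e - q' e) := by
    rw [← dot_sub_right]; congr 1; abel
  rw [h1]
  have h2 : minF y q ≤ dot y (q e) := minF_le_dot y q (subset_convexHull ℝ _ ⟨e, rfl⟩)
  have h3 : dot y (q e - q' e) ≤ eN y * c := by
    calc dot y (q e - q' e) ≤ eN y * eN (q e - q' e) := dot_le_eN _ _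
      _ ≤ eN y * c := by
          rw [eN_sub_symm]
          exact mul_le_mul_of_nonneg_left (hc e) (eN_nonneg _)
  linarith

end E2
section F
variable {d : ℕ}

lemma extremePoints_mono' {A Q : Set (Fin d → ℝ)} {v : Fin d → ℝ}
    (hv : v ∈ Set.extremePoints ℝ Q) (hvA : v ∈ A) (hAQ : A ⊆ Q) :
    v ∈ Set.extremePoints ℝ A := by
  rw [mem_extremePoints] at hv ⊢
  exact ⟨hvA, fun x hx y hy hseg => hv.2 x (hAQ hx) y (hAQ hy) hseg⟩

lemma polytope_convexHull_extremePoints {V : Finset (Fin d → ℝ)} {C : Set (Fin d → ℝ)}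
    (hC : C = convexHull ℝ (V : Set (Fin d → ℝ))) :
    convexHull ℝ (Set.extremePoints ℝ C) = C := by
  have hcomp : IsCompact C := hC ▸ (V.finite_toSet.isCompact_convexHull ℝ)
  have hconv : Convex ℝ C := hC ▸ convex_convexHull ℝ _
  have hsub : Set.extremePoints ℝ C ⊆ (V : Set (Fin d → ℝ)) := by
    rw [hC]; exact extremePoints_convexHull_subset
  have hfin : (Set.extremePoints ℝ C).Finite := V.finite_toSet.subset hsub
  have hcl : IsClosed (convexHull ℝ (Set.extremePoints ℝ C)) :=
    (hfin.isCompact_convexHull ℝ).isClosed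
  conv_rhs => rw [← closure_convexHull_extremePoints hcomp hconv]
  exact (IsClosed.closure_eq hcl).symm

lemma attain_ne_of_max {y v : Fin d → ℝ} {s : Finset (Fin d → ℝ)} {c : Fin d → ℝ} {M : ℝ}
    (hc : c ∈ convexHull ℝ (s : Set (Fin d → ℝ))) (hM : ∀ p ∈ s, dot y p ≤ M)
    (hcM : dot y c = M) (hvc : c ≠ v) : ∃ p ∈ s, p ≠ v ∧ dot y p = M := by
  by_contra hcon
  push_neg at hcon
  rw [Finset.convexHull_eq] at hc
  obtain ⟨wt, hw0, hw1, hwc⟩ := hc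
  rw [Finset.centerMass_eq_of_sum_1 _ _ hw1] at hwc
  simp only [id] at hwc
  have hdot : dot y c = ∑ p ∈ s, wt p * dot y p := by
    rw [← hwc, dot_sum_right]
    exact Finset.sum_congr rfl fun p _ => dot_smul_right y (wt p) p
  have hzero : ∑ p ∈ s, wt p * (M - dot y p) = 0 := by
    have h1 : ∑ p ∈ s, wt p * (M - dot y p)
        = (∑ p ∈ s, wt p) * M - ∑ p ∈ s, wt p * dot y p := by
      rw [Finset.sum_mul, ← Finset.sum_sub_distrib]
      exact Finset.sum_congr rfl fun p _ => by ring
    rw [h1, hw1, ← hdot, hcM]; ring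
  have hterm : ∀ p ∈ s, wt p * (M - dot y p) = 0 :=
    (Finset.sum_eq_zero_iff_of_nonneg
      (fun p hp => mul_nonneg (hw0 p hp) (by linarith [hM p hp]))).mp hzero
  have hpv : ∀ p ∈ s, wt p ≠ 0 → p = v := by
    intro p hp hwp
    have h2 := hterm p hp
    have hMp : dot y p = M := by
      rcases mul_eq_zero.mp h2 with h | h
      · exact absurd h hwp
      · linarith
    by_contra hne
    exact hcon p hp hne hMp
  have hcv : c = v := by
    rw [← hwc]
    have h3 : ∀ p ∈ s, wt p • p = wt p • v := by
      intro p hp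
      by_cases hwp : wt p = 0
      · rw [hwp, zero_smul, zero_smul]
      · rw [hpv p hp hwp]
    rw [Finset.sum_congr rfl h3, ← Finset.sum_smul, hw1, one_smul]
  exact hvc hcv

end F
set_option maxHeartbeats 2000000 in
/-- every full-dimensional polytope contains a lattice reduced
full-dimensional polytope of the same lattice width with at most as many
vertices. -/
theorem exists_reduction_of_polytope {d : ℕ} (P L : Set (Fin d → ℝ))
    (hP : IsConvexBody P) (hpoly : IsPolytope P) (hL : IsLattice L) :
    ∃ Q : Set (Fin d → ℝ), Q ⊆ P ∧ IsConvexBody Q ∧ IsPolytope Q ∧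
      IsLatticeReduced Q L ∧ latticeWidth Q L = latticeWidth P L ∧
      (Set.extremePoints ℝ Q).ncard ≤ (Set.extremePoints ℝ P).ncard := by
  classical
  obtain ⟨hPconv, hPcomp, hPint⟩ := hP
  have hPne : P.Nonempty := hPint.mono interior_subset
  by_cases hd : d = 0
  · subst hd
    refine ⟨P, subset_rfl, ⟨hPconv, hPcomp, hPint⟩, hpoly,
      ⟨⟨hPconv, hPcomp, hPint⟩, ?_⟩, rfl, le_refl _⟩
    intro C' hC' hC'P _
    obtain ⟨x, hxP, hxC'⟩ := Set.exists_of_ssubset hC'P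
    have hC'ne : C'.Nonempty := hC'.2.2.mono interior_subset
    obtain ⟨c, hc⟩ := hC'ne
    exact hxC' ((Subsingleton.elim c x) ▸ hc)
  have hd1 : 0 < d := Nat.pos_of_ne_zero hd
  haveI : Nonempty (Fin d) := ⟨⟨0, hd1⟩⟩
  obtain ⟨B, hB⟩ := hL
  obtain ⟨Db, hdot⟩ := exists_dualBasis B
  obtain ⟨VP, hVP⟩ := hpoly
  set w := latticeWidth P L with hwdef
  -- positivity of the lattice width of P
  obtain ⟨ρP, hρP0, hρP⟩ := exists_width_ball hPcomp hPint
  obtain ⟨m₀, hm₀0, hm₀⟩ := exists_min_norm_dual B Db hB hdot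
  set j0 : Fin d := Classical.arbitrary _
  have hy₀dual : Db j0 ∈ dualLattice L := Db_mem_dual B Db hB hdot j0
  have hy₀ne : Db j0 ≠ 0 := Db.ne_zero j0
  have hw_pos : 0 < w := by
    have h1 : ρP * m₀ ≤ w := by
      apply le_latticeWidth hy₀dual hy₀ne
      intro y hy hyne
      calc ρP * m₀ ≤ ρP * eN y := mul_le_mul_of_nonneg_left (hm₀ y hy hyne) hρP0.le
        _ ≤ widthDir P y := hρP y
    nlinarith
  -- the index type: extreme points of P
  set E := Set.extremePoints ℝ P with hE
  have hEfin : E.Finite := VP.finite_toSet.subset (by rw [hE, hVP]; exact extremePoints_convexHull_subset)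
  have hEne : E.Nonempty := hPcomp.extremePoints_nonempty hPne
  haveI : Fintype E := hEfin.fintype
  haveI : Nonempty E := hEne.to_subtype
  have hPE : convexHull ℝ E = P := polytope_convexHull_extremePoints hVP
  -- the constraint set
  set K : Set (↥E → (Fin d → ℝ)) :=
    {q | (∀ e, q e ∈ P) ∧ ∀ y ∈ dualLattice L, y ≠ 0 → w ≤ maxF y q - minF y q} with hK
  have hKclosed : IsClosed K := by
    have hKeq : K = (Set.pi Set.univ fun _ : ↥E => P) ∩
        ⋂ (y : Fin d → ℝ) (_ : y ∈ dualLattice L) (_ : y ≠ 0),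
          {q : ↥E → Fin d → ℝ | w ≤ maxF y q - minF y q} := by
      ext q
      simp only [hK, Set.mem_setOf_eq, Set.mem_inter_iff, Set.mem_pi, Set.mem_univ,
        true_implies, Set.mem_iInter]
    rw [hKeq]
    exact (isClosed_set_pi fun i _ => hPcomp.isClosed).inter
      (isClosed_iInter fun y => isClosed_iInter fun _ => isClosed_iInter fun _ =>
        isClosed_le continuous_const ((continuous_maxF y).sub (continuous_minF y)))
  have hKcomp : IsCompact K := by
    apply IsCompact.of_isClosed_subset (isCompact_univ_pi fun _ : ↥E => hPcomp) hKclosed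
    intro q hq
    rw [Set.mem_univ_pi]
    exact hq.1
  have hKne : K.Nonempty := by
    refine ⟨fun e => (e : Fin d → ℝ), ?_, ?_⟩
    · exact fun e => extremePoints_subset e.2
    · intro y hy hyne
      have hr : Set.range (fun e : ↥E => (e : Fin d → ℝ)) = E := Subtype.range_coe
      have h1 : widthDir P y = maxF y (fun e : ↥E => (e : Fin d → ℝ))
          - minF y (fun e : ↥E => (e : Fin d → ℝ)) := by
        rw [← widthDir_polytope, hr, hPE]
      rw [← h1]
      exact latticeWidth_le hPcomp hPne hy hyne
  -- minimize
  obtain ⟨qm, hqmK, hqmmin⟩ := hKcomp.exists_isMinOn hKne Vfun_continuous.continuousOn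
  set Q := convexHull ℝ (Set.range qm) with hQdef
  have hQsub : Q ⊆ P := convexHull_min (by rintro x ⟨e, rfl⟩; exact hqmK.1 e) hPconv
  have hQcomp : IsCompact Q := (Set.finite_range qm).isCompact_convexHull ℝ
  have hQconv : Convex ℝ Q := convex_convexHull ℝ _
  have hQne : Q.Nonempty :=
    ⟨qm (Classical.arbitrary _), subset_convexHull ℝ _ ⟨_, rfl⟩⟩
  have hWy : ∀ y, widthDir Q y = maxF y qm - minF y qm := fun y => widthDir_polytope y qm
  have hwidQ : ∀ y ∈ dualLattice L, y ≠ 0 → w ≤ widthDir Q y := by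
    intro y hy hyne
    rw [hWy y]
    exact hqmK.2 y hy hyne
  have hQint : (interior Q).Nonempty :=
    interior_nonempty_of_width B Db hB hdot hQcomp hQconv hQne hw_pos hwidQ
  have hlwQ : latticeWidth Q L = w := by
    apply le_antisymm
    · exact latticeWidth_mono hQcomp hQne hPcomp hPne hQsub hy₀dual hy₀ne
    · exact le_latticeWidth hy₀dual hy₀ne hwidQ
  have hQpoly : IsPolytope Q := by
    refine ⟨Finset.univ.image qm, ?_⟩
    rw [Finset.coe_image, Finset.coe_univ, Set.image_univ]
  have hQextsub : Set.extremePoints ℝ Q ⊆ Set.range qm := extremePoints_convexHull_subset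
  have hQE : convexHull ℝ (Set.extremePoints ℝ Q) = Q := by
    apply polytope_convexHull_extremePoints (V := Finset.univ.image qm)
    rw [Finset.coe_image, Finset.coe_univ, Set.image_univ]
  have hcount : (Set.extremePoints ℝ Q).ncard ≤ (Set.extremePoints ℝ P).ncard := by
    calc (Set.extremePoints ℝ Q).ncard ≤ (Set.range qm).ncard :=
          Set.ncard_le_ncard hQextsub (Set.finite_range qm)
      _ = (qm '' Set.univ).ncard := by rw [Set.image_univ]
      _ ≤ (Set.univ : Set ↥E).ncard := Set.ncard_image_le Set.finite_univ
      _ = (Set.extremePoints ℝ P).ncard := by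
          rw [Set.ncard_univ, Nat.card_coe_set_eq]
  -- the main claim: Q is lattice reduced
  refine ⟨Q, hQsub, ⟨hQconv, hQcomp, hQint⟩, hQpoly, ⟨⟨hQconv, hQcomp, hQint⟩, ?_⟩, by
    rw [hlwQ], hcount⟩
  intro C' hC' hC'Q heqw
  obtain ⟨hC'conv, hC'comp, hC'int⟩ := hC'
  have hC'ne : C'.Nonempty := hC'int.mono interior_subset
  have hC'sub : C' ⊆ Q := hC'Q.subset
  have hwidC' : ∀ y ∈ dualLattice L, y ≠ 0 → w ≤ widthDir C' y := by
    intro y hy hyne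
    have h1 := latticeWidth_le (L := L) hC'comp hC'ne hy hyne
    rw [heqw, hlwQ] at h1
    exact h1
  -- an extreme point of Q outside C'
  obtain ⟨v, hvext, hvC'⟩ : ∃ v ∈ Set.extremePoints ℝ Q, v ∉ C' := by
    by_contra hcon
    push_neg at hcon
    have hsub2 : Q ⊆ C' := by
      rw [← hQE]
      exact convexHull_min hcon hC'conv
    exact hC'Q.not_subset hsub2
  have hvQ : v ∈ Q := extremePoints_subset hvext
  obtain ⟨z, hzC'⟩ := hC'int.mono interior_subset
  have hzQ : z ∈ Q := hC'sub hzC'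
  have hzv : z ≠ v := fun h => hvC' (h ▸ hzC')
  -- quantities
  obtain ⟨ρ, hρ0, hρ⟩ := exists_width_ball hQcomp hQint
  obtain ⟨R, hRnn, hR⟩ := exists_eN_bound hPcomp hPne
  set D2 := eN (z - v) with hD2def
  have hD20 : 0 < D2 := eN_pos (sub_ne_zero.mpr hzv)
  set R0 : ℝ := 2 * (w + 1) / ρ with hR0def
  -- choosing the perturbation size t
  set τ : (Fin d → ℝ) → ℝ := fun y =>
    if w < maxF y qm - minF y qm then (maxF y qm - minF y qm - w) / (2 * D2 * eN y + 1)
    else 1 with hτdef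
  set Y0 := (dualLattice_finite B Db hB hdot (L := L) R0).toFinset with hY0def
  set tlist := insert (0 : Fin d → ℝ) Y0 with htlistdef
  have htlistne : tlist.Nonempty := Finset.insert_nonempty _ _
  set t1 := tlist.inf' htlistne τ with ht1def
  have ht1pos : 0 < t1 := by
    rw [ht1def, Finset.lt_inf'_iff]
    intro y _
    simp only [hτdef]
    split_ifs with h
    · have h1 : (0:ℝ) < 2 * D2 * eN y + 1 := by nlinarith [eN_nonneg y, hD20]
      have h2 : 0 < maxF y qm - minF y qm - w := by linarith
      exact div_pos h2 h1
    · norm_num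
  set tt := min t1 (min 1 (ρ / (4 * D2 + 1))) with httdef
  have httpos : 0 < tt := by
    apply lt_min ht1pos
    apply lt_min one_pos
    exact div_pos hρ0 (by nlinarith [hD20])
  set t := tt / 2 with htdef
  have ht0 : 0 < t := by positivity
  have htle1 : t ≤ 1 := by
    have h1 : tt ≤ 1 := le_trans (min_le_right _ _) (min_le_left _ _)
    linarith
  have h2t_t1 : 2 * t ≤ t1 := by
    have := min_le_left t1 (min 1 (ρ / (4 * D2 + 1)))
    rw [htdef]; linarith
  have h2t_ρ : 2 * t * (2 * D2) ≤ ρ / 2 := by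
    have h1 : tt ≤ ρ / (4 * D2 + 1) := le_trans (min_le_right _ _) (min_le_right _ _)
    have h2 : 2 * t = tt := by rw [htdef]; ring
    rw [h2]
    rw [le_div_iff₀ (by nlinarith [hD20] : (0:ℝ) < 4 * D2 + 1)] at h1
    nlinarith [httpos.le]
  -- the perturbed tuple
  set vt := v + t • (z - v) with hvtdef
  have hvtQ : vt ∈ Q := hQconv.add_smul_sub_mem hvQ hzQ ⟨ht0.le, htle1⟩
  have hvtne : vt ≠ v := by
    intro h
    have h1 : t • (z - v) = 0 := by
      have := congrArg (fun x => x - v) h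
      simpa [hvtdef] using this
    rcases smul_eq_zero.mp h1 with h2 | h2
    · exact absurd h2 (ne_of_gt ht0)
    · exact hzv (sub_eq_zero.mp h2)
  set qt : ↥E → (Fin d → ℝ) := fun e => if qm e = v then vt else qm e with hqtdef
  have hqtQ : ∀ e, qt e ∈ Q := by
    intro e
    simp only [hqtdef]
    split_ifs with h
    · exact hvtQ
    · exact subset_convexHull ℝ _ ⟨e, rfl⟩
  have hQtQ : convexHull ℝ (Set.range qt) ⊆ Q :=
    convexHull_min (by rintro x ⟨e, rfl⟩; exact hqtQ e) hQconv
  have hclose : ∀ e, eN (qt e - qm e) ≤ t * D2 := by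
    intro e
    simp only [hqtdef]
    split_ifs with h
    · rw [h, hvtdef]
      have h1 : v + t • (z - v) - v = t • (z - v) := by abel
      rw [h1, eN_smul, abs_of_pos ht0, hD2def]
    · rw [sub_self]
      rw [show eN (0 : Fin d → ℝ) = 0 from eN_eq_zero.mpr rfl]
      exact mul_nonneg ht0.le hD20.le
  have hclose' : ∀ e, eN (qm e - qt e) ≤ t * D2 := by
    intro e
    rw [eN_sub_symm]
    exact hclose e
  -- qt satisfies the constraints
  have hqtK : qt ∈ K := by
    refine ⟨fun e => hQsub (hqtQ e), ?_⟩
    intro y hy hyne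
    have hWylQ : w ≤ maxF y qm - minF y qm := hqmK.2 y hy hyne
    by_cases hbig : R0 ≤ eN y
    · -- large directions
      have h1 : maxF y qm ≤ maxF y qt + eN y * (t * D2) := maxF_close hclose' y
      have h4 : minF y qt - eN y * (t * D2) ≤ minF y qm := minF_close hclose' y
      have h6 : ρ * eN y ≤ maxF y qm - minF y qm := by
        rw [← hWy y]; exact hρ y
      have h7 : 2 * (eN y * (t * D2)) ≤ ρ / 2 * eN y := by
        have h8 : 2 * t * (2 * D2) * eN y ≤ ρ / 2 * eN y :=
          mul_le_mul_of_nonneg_right h2t_ρ (eN_nonneg y)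
        nlinarith [eN_nonneg y]
      have h9 : ρ / 2 * R0 = w + 1 := by
        rw [hR0def]
        field_simp
      have h10 : ρ / 2 * R0 ≤ ρ / 2 * eN y :=
        mul_le_mul_of_nonneg_left hbig (by linarith : (0:ℝ) ≤ ρ / 2)
      nlinarith [eN_nonneg y]
    · -- small directions
      push_neg at hbig
      have hyY0 : y ∈ tlist := by
        rw [htlistdef, Finset.mem_insert]
        right
        rw [hY0def, Set.Finite.mem_toFinset]
        exact ⟨hy, hbig.le⟩
      by_cases htight : w < maxF y qm - minF y qm
      · -- slack direction: use smallness of t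
        have hτy : τ y = (maxF y qm - minF y qm - w) / (2 * D2 * eN y + 1) := by
          simp only [hτdef]; rw [if_pos htight]
        have h2tτ : 2 * t ≤ τ y := le_trans h2t_t1 (Finset.inf'_le τ hyY0)
        have h1 : maxF y qm ≤ maxF y qt + eN y * (t * D2) := maxF_close hclose' y
        have h5 : minF y qt - eN y * (t * D2) ≤ minF y qm := minF_close hclose' y
        have hA : (0:ℝ) ≤ D2 * eN y := mul_nonneg hD20.le (eN_nonneg y)
        have hden : (0:ℝ) < 2 * D2 * eN y + 1 := by nlinarith [eN_nonneg y, hD20]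
        have hkey : 2 * (eN y * (t * D2)) ≤ maxF y qm - minF y qm - w := by
          have h6 : 2 * t * (D2 * eN y) ≤ τ y * (D2 * eN y) :=
            mul_le_mul_of_nonneg_right h2tτ hA
          have h7 : τ y * (D2 * eN y) ≤ (maxF y qm - minF y qm - w) / 2 := by
            rw [hτy, div_mul_eq_mul_div, div_le_div_iff₀ hden (by norm_num)]
            nlinarith
          nlinarith
        linarith
      · -- tight direction: exact preservation
        push_neg at htight
        have hWyeq : maxF y qm - minF y qm = w := le_antisymm htight hWylQ
        -- max and min are attained on C'
        obtain ⟨a, haC', b, hbC', hamax, hbmin, hwideq⟩ := widthDir_spec hC'comp hC'ne y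
        have haQ : a ∈ Q := hC'sub haC'
        have hbQ : b ∈ Q := hC'sub hbC'
        have hub : dot y a ≤ maxF y qm := dot_le_maxF y qm haQ
        have hlb : minF y qm ≤ dot y b := minF_le_dot y qm hbQ
        have hwC' := hwidC' y hy hyne
        rw [hwideq] at hwC'
        have hamax' : dot y a = maxF y qm := by linarith
        have hbmin' : dot y b = minF y qm := by linarith
        have hane : a ≠ v := fun h => hvC' (h ▸ haC')
        have hbne : b ≠ v := fun h => hvC' (h ▸ hbC')
        -- find tuple points other than v attaining max resp. min
        have hsQ : convexHull ℝ ((Finset.univ.image qm : Finset (Fin d → ℝ)) :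
            Set (Fin d → ℝ)) = Q := by
          rw [Finset.coe_image, Finset.coe_univ, Set.image_univ]
        obtain ⟨p1, hp1mem, hp1ne, hp1M⟩ := attain_ne_of_max (v := v)
          (hsQ ▸ haQ)
          (by
            intro p hp
            rw [Finset.mem_image] at hp
            obtain ⟨e, _, rfl⟩ := hp
            exact dot_le_maxF y qm (subset_convexHull ℝ _ ⟨e, rfl⟩))
          hamax' hane
        obtain ⟨p2, hp2mem, hp2ne, hp2M⟩ := attain_ne_of_max (y := -y) (v := v)
          (hsQ ▸ hbQ)
          (by
            intro p hp
            rw [Finset.mem_image] at hp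
            obtain ⟨e, _, rfl⟩ := hp
            rw [dot_neg_left, neg_le_neg_iff]
            exact minF_le_dot y qm (subset_convexHull ℝ _ ⟨e, rfl⟩))
          (by rw [dot_neg_left, hbmin'])
          hbne
        rw [Finset.mem_image] at hp1mem hp2mem
        obtain ⟨e1, _, he1⟩ := hp1mem
        obtain ⟨e2, _, he2⟩ := hp2mem
        have hp2M' : dot y p2 = minF y qm := by
          have := hp2M
          rw [dot_neg_left] at this
          linarith [this]
        -- maxF preserved
        have hmax_eq : maxF y qt = maxF y qm := by
          apply le_antisymm
          · rw [maxF]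
            apply Finset.sup'_le
            intro e _
            have := hqtQ e
            exact dot_le_maxF y qm (hQtQ (subset_convexHull ℝ _ ⟨e, rfl⟩))
          · have hqte1 : qt e1 = qm e1 := by
              rw [hqtdef]
              dsimp only
              rw [if_neg]
              rw [he1]; exact hp1ne
            calc maxF y qm = dot y (qt e1) := by rw [hqte1, he1, hp1M]
              _ ≤ maxF y qt := by
                  rw [maxF]
                  exact Finset.le_sup' (fun e => dot y (qt e)) (Finset.mem_univ e1)
        have hmin_eq : minF y qt = minF y qm := by
          apply le_antisymm
          · have hqte2 : qt e2 = qm e2 := by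
              rw [hqtdef]
              dsimp only
              rw [if_neg]
              rw [he2]; exact hp2ne
            calc minF y qt ≤ dot y (qt e2) := by
                  rw [minF]
                  exact Finset.inf'_le (fun e => dot y (qt e)) (Finset.mem_univ e2)
              _ = minF y qm := by rw [hqte2, he2, hp2M']
          · rw [minF]
            apply Finset.le_inf'
            intro e _
            exact minF_le_dot y qm (hQtQ (subset_convexHull ℝ _ ⟨e, rfl⟩))
        rw [hmax_eq, hmin_eq, hWyeq]
  -- v is not in the perturbed hull
  have hvqt : ∀ e, qt e ≠ v := by
    intro e
    simp only [hqtdef]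
    split_ifs with h
    · exact hvtne
    · exact h
  have hvQt : v ∉ convexHull ℝ (Set.range qt) := by
    intro hvin
    have hvext' : v ∈ Set.extremePoints ℝ (convexHull ℝ (Set.range qt)) :=
      extremePoints_mono' hvext hvin hQtQ
    have : v ∈ Set.range qt := extremePoints_convexHull_subset hvext'
    obtain ⟨e, he⟩ := this
    exact hvqt e he
  -- strict decrease of the functional: contradiction
  have hRq : ∀ e, eN (qm e) ≤ R := fun e => hR _ (hqmK.1 e)
  have hRqt : ∀ e, eN (qt e) ≤ R := fun e => hR _ (hQsub (hqtQ e))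
  obtain ⟨n, hn⟩ := exists_strict_dir hRq hRqt hRnn hvQ hvQt
  have hle : ∀ n, maxF (dirSeq d n) qt ≤ maxF (dirSeq d n) qm := by
    intro n
    rw [maxF]
    apply Finset.sup'_le
    intro e _
    exact dot_le_maxF _ qm (hQtQ (subset_convexHull ℝ _ ⟨e, rfl⟩))
  have hVlt : Vfun qt < Vfun qm := Vfun_lt hle ⟨n, hn⟩
  have hVge : Vfun qm ≤ Vfun qt := hqmmin hqtK
  linarith
end
end

section
/- Let S ⊂ ℝ^d be a d-simplex that is lattice complete with respect to a full-dimensional lattice Λ. Then the lattice diameter directions of S span all of ℝ^d. -/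
open scoped Pointwise

noncomputable section

namespace CSAux

open Set Finset

variable {d : ℕ}

/-- Linear part of the `i`-th barycentric coordinate. -/
def lw (P : AffineBasis (Fin (d+1)) ℝ (Fin d → ℝ)) (i : Fin (d+1)) (u : Fin d → ℝ) : ℝ :=
  (P.coord i).linear u

/-- The "facet norm" controlling chord lengths in the simplex. -/
def Phi (P : AffineBasis (Fin (d+1)) ℝ (Fin d → ℝ)) (u : Fin d → ℝ) : ℝ :=
  ∑ i, max 0 (-(lw P i u))

lemma coord_add_smul (P : AffineBasis (Fin (d+1)) ℝ (Fin d → ℝ)) (i : Fin (d+1))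
    (x u : Fin d → ℝ) (t : ℝ) :
    P.coord i (x + t • u) = P.coord i x + t * lw P i u := by
  have h := (P.coord i).map_vadd x (t • u)
  simp only [vadd_eq_add, map_smul, smul_eq_mul] at h
  rw [add_comm x (t • u)]
  rw [h]
  unfold lw
  ring

lemma lw_neg (P : AffineBasis (Fin (d+1)) ℝ (Fin d → ℝ)) (i : Fin (d+1)) (u : Fin d → ℝ) :
    lw P i (-u) = -(lw P i u) := by simp [lw]

lemma lw_smul (P : AffineBasis (Fin (d+1)) ℝ (Fin d → ℝ)) (i : Fin (d+1)) (t : ℝ)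
    (u : Fin d → ℝ) : lw P i (t • u) = t * lw P i u := by
  simp [lw, map_smul]

lemma sum_lw (P : AffineBasis (Fin (d+1)) ℝ (Fin d → ℝ)) (u : Fin d → ℝ) :
    ∑ i, lw P i u = 0 := by
  have h0 := P.sum_coord_apply_eq_one (0 : Fin d → ℝ)
  have h1 := P.sum_coord_apply_eq_one ((0 : Fin d → ℝ) + (1:ℝ) • u)
  simp only [coord_add_smul, one_mul] at h1
  rw [Finset.sum_add_distrib, h0] at h1
  linarith

lemma Phi_nonneg (P : AffineBasis (Fin (d+1)) ℝ (Fin d → ℝ)) (u : Fin d → ℝ) :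
    0 ≤ Phi P u :=
  Finset.sum_nonneg fun i _ => le_max_left _ _

lemma term_le_Phi (P : AffineBasis (Fin (d+1)) ℝ (Fin d → ℝ)) (u : Fin d → ℝ) (i : Fin (d+1)) :
    max 0 (-(lw P i u)) ≤ Phi P u := by
  unfold Phi
  exact Finset.single_le_sum (f := fun j => max 0 (-(lw P j u)))
    (fun j _ => le_max_left _ _) (Finset.mem_univ i)

lemma Phi_smul (P : AffineBasis (Fin (d+1)) ℝ (Fin d → ℝ)) {t : ℝ} (ht : 0 ≤ t)
    (u : Fin d → ℝ) : Phi P (t • u) = t * Phi P u := by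
  unfold Phi
  rw [Finset.mul_sum]
  refine Finset.sum_congr rfl fun i _ => ?_
  rw [lw_smul, mul_max_of_nonneg _ _ ht, mul_zero, mul_neg]

lemma Phi_neg (P : AffineBasis (Fin (d+1)) ℝ (Fin d → ℝ)) (u : Fin d → ℝ) :
    Phi P (-u) = Phi P u := by
  have key : ∀ a : ℝ, max 0 a = max 0 (-a) + a := by
    intro a
    rcases le_total a 0 with h | h
    · rw [max_eq_left h, max_eq_right (by linarith)]; ring
    · rw [max_eq_right h, max_eq_left (by linarith)]; ring
  unfold Phi
  calc ∑ i, max 0 (-(lw P i (-u))) = ∑ i, (max 0 (-(lw P i u)) + lw P i u) := by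
        refine Finset.sum_congr rfl fun i _ => ?_
        rw [lw_neg, neg_neg]; exact key _
    _ = Phi P u := by rw [Finset.sum_add_distrib, sum_lw]; simp [Phi]

lemma eq_zero_of_lw_eq_zero (P : AffineBasis (Fin (d+1)) ℝ (Fin d → ℝ)) {u : Fin d → ℝ}
    (h : ∀ i, lw P i u = 0) : u = 0 := by
  have hc : ∀ i, P.coord i u = P.coord i 0 := by
    intro i
    have h2 : P.coord i ((0 : Fin d → ℝ) + (1:ℝ) • u) = P.coord i 0 + 1 * lw P i u :=
      coord_add_smul P i 0 u 1
    simp only [h i, mul_zero, add_zero] at h2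
    simpa using h2
  exact P.ext_elem hc

lemma Phi_pos (P : AffineBasis (Fin (d+1)) ℝ (Fin d → ℝ)) {u : Fin d → ℝ} (hu : u ≠ 0) :
    0 < Phi P u := by
  rcases lt_or_eq_of_le (Phi_nonneg P u) with h | h
  · exact h
  exfalso
  apply hu
  apply eq_zero_of_lw_eq_zero P
  have hterm : ∀ i ∈ Finset.univ, max 0 (-(lw P i u)) = 0 := by
    rw [← Finset.sum_eq_zero_iff_of_nonneg (fun i _ => le_max_left _ _)]
    exact h.symm
  have hge : ∀ i, 0 ≤ lw P i u := by
    intro i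
    have := hterm i (Finset.mem_univ i)
    have h2 : -(lw P i u) ≤ 0 := by
      by_contra hcon
      push_neg at hcon
      rw [max_eq_right hcon.le] at this
      linarith
    linarith
  intro i
  have hsum := sum_lw P u
  have := (Finset.sum_eq_zero_iff_of_nonneg (fun j _ => hge j)).1 hsum i (Finset.mem_univ i)
  exact this

lemma mem_simplex_iff (P : AffineBasis (Fin (d+1)) ℝ (Fin d → ℝ)) (x : Fin d → ℝ) :
    x ∈ convexHull ℝ (Set.range ⇑P) ↔ ∀ i, 0 ≤ P.coord i x := by
  rw [P.convexHull_eq_nonneg_coord]; exact Iff.rfl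

/-- Chord criterion: the simplex contains a segment `[a, a + t • u]` iff `t * Phi u ≤ 1`. -/
lemma chord_iff (P : AffineBasis (Fin (d+1)) ℝ (Fin d → ℝ)) {t : ℝ} (ht : 0 ≤ t)
    (u : Fin d → ℝ) :
    (∃ a, segment ℝ a (a + t • u) ⊆ convexHull ℝ (Set.range ⇑P)) ↔ t * Phi P u ≤ 1 := by
  constructor
  · rintro ⟨a, hseg⟩
    have ha := (mem_simplex_iff P a).1 (hseg (left_mem_segment ℝ _ _))
    have hb := (mem_simplex_iff P _).1 (hseg (right_mem_segment ℝ _ _))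
    have key : ∀ i, t * max 0 (-(lw P i u)) ≤ P.coord i a := by
      intro i
      have hb' := hb i
      rw [coord_add_smul] at hb'
      rcases le_total (lw P i u) 0 with h | h
      · rw [max_eq_right (by linarith)]
        nlinarith [ha i]
      · rw [max_eq_left (by linarith)]
        simpa using ha i
    calc t * Phi P u = ∑ i, t * max 0 (-(lw P i u)) := by rw [Phi, Finset.mul_sum]
      _ ≤ ∑ i, P.coord i a := Finset.sum_le_sum fun i _ => key i
      _ = 1 := P.sum_coord_apply_eq_one a
  · intro hPhi
    classical
    set q : Fin (d+1) → ℝ :=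
      fun i => t * max 0 (-(lw P i u)) + (if i = 0 then 1 - t * Phi P u else 0) with hq
    have hq0 : ∀ i, 0 ≤ q i := by
      intro i
      apply add_nonneg (mul_nonneg ht (le_max_left _ _))
      split <;> simp [hPhi, sub_nonneg]
    have hqsum : ∑ i, q i = 1 := by
      rw [hq, Finset.sum_add_distrib, ← Finset.mul_sum]
      rw [Finset.sum_ite_eq' Finset.univ (0 : Fin (d+1)) (fun _ => 1 - t * Phi P u)]
      simp [Phi]
    set a : Fin d → ℝ := ∑ i, q i • ⇑P i with ha
    have hcoord : ∀ j, P.coord j a = q j := by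
      intro j
      have h1 := P.coord_apply_combination_of_mem (Finset.mem_univ j) hqsum
      rwa [Finset.univ.affineCombination_eq_linear_combination _ _ hqsum] at h1
    refine ⟨a, (convex_convexHull ℝ _).segment_subset ?_ ?_⟩
    · rw [mem_simplex_iff]
      intro i
      rw [hcoord i]
      exact hq0 i
    · rw [mem_simplex_iff]
      intro i
      rw [coord_add_smul, hcoord i]
      have : -lw P i u ≤ max 0 (-(lw P i u)) := le_max_right _ _
      have h2 : t * (-(lw P i u)) ≤ t * max 0 (-(lw P i u)) :=
        mul_le_mul_of_nonneg_left this ht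
      have h3 : (0:ℝ) ≤ if i = 0 then 1 - t * Phi P u else 0 := by
        split <;> simp [hPhi, sub_nonneg]
      simp only [hq]
      nlinarith
  
section Lattice

variable (B : Module.Basis (Fin d) ℝ (Fin d → ℝ))

/-- The lattice generated by `B`. -/
def Lset : Set (Fin d → ℝ) :=
  Set.range (fun z : Fin d → ℤ => ∑ i, (z i : ℝ) • B i)

lemma basis_mem_Lset (j : Fin d) : B j ∈ Lset B := by
  refine ⟨Pi.single j 1, ?_⟩
  show ∑ i, ((Pi.single j (1:ℤ) : Fin d → ℤ) i : ℝ) • B i = B j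
  have : ∀ i, ((Pi.single j (1:ℤ) : Fin d → ℤ) i : ℝ) • B i
      = if i = j then B j else 0 := by
    intro i
    rcases eq_or_ne i j with rfl | h
    · simp
    · simp [Pi.single_apply, h]
  rw [Finset.sum_congr rfl (fun i _ => this i)]
  simp

lemma neg_mem_Lset {v : Fin d → ℝ} (hv : v ∈ Lset B) : -v ∈ Lset B := by
  obtain ⟨z, rfl⟩ := hv
  refine ⟨-z, ?_⟩
  show ∑ i, (((-z) i : ℤ) : ℝ) • B i = -∑ i, ((z i : ℤ) : ℝ) • B i
  rw [← Finset.sum_neg_distrib]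
  refine Finset.sum_congr rfl fun i _ => ?_
  simp

/-- Finiteness of lattice vectors with bounded `Phi`. -/
lemma finite_low_Phi (P : AffineBasis (Fin (d+1)) ℝ (Fin d → ℝ)) (R : ℝ) :
    {v | v ∈ Lset B ∧ Phi P v ≤ R}.Finite := by
  classical
  set R₀ : ℝ := max R 0 with hR₀
  -- the linear map collecting the `lw` values
  set W : (Fin d → ℝ) →ₗ[ℝ] (Fin (d+1) → ℝ) :=
    LinearMap.pi (fun i => (P.coord i).linear) with hW
  have hWinj : LinearMap.ker W = ⊥ := by
    rw [LinearMap.ker_eq_bot']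
    intro u hu
    apply eq_zero_of_lw_eq_zero P
    intro i
    have := congrFun hu i
    simpa [hW, lw] using this
  obtain ⟨K, hK, hKa⟩ := W.exists_antilipschitzWith hWinj
  have hsymminj : LinearMap.ker (B.equivFun.symm.toLinearMap
      : (Fin d → ℝ) →ₗ[ℝ] (Fin d → ℝ)) = ⊥ := LinearEquiv.ker _
  obtain ⟨K', hK', hKa'⟩ := LinearMap.exists_antilipschitzWith _ hsymminj
  -- bound on ‖v‖ for v in the set
  have hnorm : ∀ v, v ∈ Lset B → Phi P v ≤ R → ‖v‖ ≤ K * R₀ := by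
    intro v _ hv
    have hlow : ∀ i, -(lw P i v) ≤ R₀ := by
      intro i
      have h1 : max 0 (-(lw P i v)) ≤ R := le_trans (term_le_Phi P v i) hv
      calc -(lw P i v) ≤ max 0 (-(lw P i v)) := le_max_right _ _
        _ ≤ R := h1
        _ ≤ R₀ := le_max_left _ _
    have hup : ∀ i, lw P i v ≤ R₀ := by
      intro i
      have hsum := sum_lw P v
      have h1 : lw P i v = -∑ j ∈ Finset.univ.erase i, lw P j v := by
        rw [← Finset.add_sum_erase _ _ (Finset.mem_univ i)] at hsum
        linarith
      rw [h1]
      have h2 : ∑ j ∈ Finset.univ.erase i, -(lw P j v) ≤ ∑ j ∈ Finset.univ.erase i,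
          max 0 (-(lw P j v)) := Finset.sum_le_sum fun j _ => le_max_right _ _
      have h3 : ∑ j ∈ Finset.univ.erase i, max 0 (-(lw P j v)) ≤ Phi P v := by
        unfold Phi
        exact Finset.sum_le_sum_of_subset_of_nonneg (Finset.subset_univ _)
          (fun j _ _ => le_max_left _ _)
      have h4 : R ≤ R₀ := le_max_left _ _
      have h5 : -∑ j ∈ Finset.univ.erase i, lw P j v
          = ∑ j ∈ Finset.univ.erase i, -(lw P j v) := by
        rw [Finset.sum_neg_distrib]
      rw [h5]
      linarith
    have hWv : ‖W v‖ ≤ R₀ := by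
      rw [pi_norm_le_iff_of_nonneg (le_max_right R 0)]
      intro i
      have hWi : W v i = lw P i v := rfl
      rw [hWi, Real.norm_eq_abs, abs_le]
      constructor
      · linarith [hlow i]
      · exact hup i
    have := hKa.le_mul_dist v 0
    rw [dist_zero_right, map_zero, dist_zero_right] at this
    calc ‖v‖ ≤ K * ‖W v‖ := this
      _ ≤ K * R₀ := by
        have : (0:ℝ) ≤ (K:ℝ) := K.coe_nonneg
        nlinarith
  -- integer coordinates are bounded
  set N : ℤ := ⌈(K':ℝ) * (K * R₀)⌉ with hN
  have hsub : {v | v ∈ Lset B ∧ Phi P v ≤ R} ⊆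
      (fun z : Fin d → ℤ => ∑ i, (z i : ℝ) • B i) ''
        (Set.Icc (fun _ => -N) (fun _ => N)) := by
    rintro v ⟨⟨z, rfl⟩, hv⟩
    refine ⟨z, ?_, rfl⟩
    set v : Fin d → ℝ := ∑ i, (z i : ℝ) • B i with hvdef
    have hveq : B.equivFun.symm (fun i => (z i : ℝ)) = v := by
      rw [B.equivFun_symm_apply]
    have hzb : ‖(fun i => (z i : ℝ))‖ ≤ (K':ℝ) * (K * R₀) := by
      have := hKa'.le_mul_dist (fun i => (z i : ℝ)) 0
      rw [dist_zero_right, map_zero, dist_zero_right] at this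
      simp only [LinearEquiv.coe_toLinearMap] at this
      rw [hveq] at this
      have h2 : ‖v‖ ≤ K * R₀ := hnorm v ⟨z, rfl⟩ hv
      calc ‖(fun i => (z i : ℝ))‖ ≤ K' * ‖v‖ := this
        _ ≤ (K':ℝ) * (K * R₀) := by
          have : (0:ℝ) ≤ (K':ℝ) := K'.coe_nonneg
          nlinarith
    constructor <;> intro i
    · have h1 : |(z i : ℝ)| ≤ (K':ℝ) * (K * R₀) := by
        have := norm_le_pi_norm (fun j => ((z j : ℝ))) i
        rw [Real.norm_eq_abs] at this
        exact le_trans this hzb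
      have h2 : -((K':ℝ) * (K * R₀)) ≤ (z i : ℝ) := by
        rw [abs_le] at h1; exact h1.1
      have h3 : ((-N : ℤ) : ℝ) ≤ (z i : ℝ) := by
        push_cast
        calc -(N:ℝ) ≤ -((K':ℝ) * (K * R₀)) := by
              have := Int.le_ceil ((K':ℝ) * (K * R₀)); rw [hN]; linarith
          _ ≤ (z i : ℝ) := h2
      exact_mod_cast h3
    · have h1 : |(z i : ℝ)| ≤ (K':ℝ) * (K * R₀) := by
        have := norm_le_pi_norm (fun j => ((z j : ℝ))) i
        rw [Real.norm_eq_abs] at this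
        exact le_trans this hzb
      have h2 : (z i : ℝ) ≤ (K':ℝ) * (K * R₀) := by
        rw [abs_le] at h1; exact h1.2
      have h3 : (z i : ℝ) ≤ ((N : ℤ) : ℝ) := le_trans h2 (Int.le_ceil _)
      exact_mod_cast h3
  exact Set.Finite.subset ((Set.finite_Icc _ _).image _) hsub

end Lattice

/-- The per-coordinate "gain" function in the LP estimate. -/
def Gq (b w : ℝ) : ℝ := if 0 < w then b else if w < 0 then 0 else max 0 b

lemma key1 {α t b w : ℝ} (hα : 0 ≤ α) (ht : 0 ≤ t) :
    t * max 0 (-w) + α * Gq b w ≤ max (α * b) (-(t * w)) := by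
  rcases lt_trichotomy w 0 with h | h | h
  · rw [Gq, if_neg (by linarith), if_pos h, mul_zero, add_zero,
      max_eq_right (by linarith : (0:ℝ) ≤ -w)]
    calc t * -w = -(t * w) := by ring
      _ ≤ max (α * b) (-(t * w)) := le_max_right _ _
  · subst h
    rw [Gq, if_neg (by linarith), if_neg (by linarith)]
    rw [mul_max_of_nonneg _ _ hα, mul_zero]
    simp [max_comm]
  · rw [Gq, if_pos h, max_eq_left (by linarith : -w ≤ (0:ℝ)), mul_zero, zero_add]
    exact le_max_left _ _

lemma key2 {α t b w : ℝ} (hα : 0 ≤ α) (ht : 0 ≤ t) :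
    t * max 0 (-w) + α * Gq b (-w) ≤ max 0 (α * b - t * w) := by
  rcases lt_trichotomy w 0 with h | h | h
  · rw [Gq, if_pos (by linarith : (0:ℝ) < -w),
      max_eq_right (by linarith : (0:ℝ) ≤ -w)]
    calc t * -w + α * b = α * b - t * w := by ring
      _ ≤ max 0 (α * b - t * w) := le_max_right _ _
  · subst h
    rw [Gq, if_neg (by simp), if_neg (by simp)]
    rw [mul_max_of_nonneg _ _ hα, mul_zero]
    simp
  · rw [Gq, if_neg (by linarith), if_pos (by linarith : -w < 0), mul_zero, add_zero,
      max_eq_left (by linarith : -w ≤ (0:ℝ)), mul_zero]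
    exact le_max_left _ _

section MinLattice

variable (B : Module.Basis (Fin d) ℝ (Fin d → ℝ)) (P : AffineBasis (Fin (d+1)) ℝ (Fin d → ℝ))

lemma exists_phi_min (hd : 0 < d) :
    ∃ m, m ∈ Lset B ∧ m ≠ 0 ∧ ∀ v ∈ Lset B, v ≠ 0 → Phi P m ≤ Phi P v := by
  classical
  set i0 : Fin d := ⟨0, hd⟩
  set A : Set (Fin d → ℝ) :=
    {v | (v ∈ Lset B ∧ Phi P v ≤ Phi P (B i0)) ∧ v ≠ 0} with hA
  have hAfin : A.Finite := by
    apply Set.Finite.subset (finite_low_Phi B P (Phi P (B i0)))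
    rintro v ⟨⟨h1, h2⟩, _⟩
    exact ⟨h1, h2⟩
  have hAne : A.Nonempty := ⟨B i0, ⟨⟨basis_mem_Lset B i0, le_refl _⟩, B.ne_zero i0⟩⟩
  obtain ⟨m, hm, hmin⟩ := Set.exists_min_image A (Phi P) hAfin hAne
  refine ⟨m, hm.1.1, hm.2, ?_⟩
  intro v hv hv0
  rcases le_or_gt (Phi P v) (Phi P (B i0)) with h | h
  · exact hmin v ⟨⟨hv, h⟩, hv0⟩
  · calc Phi P m ≤ Phi P (B i0) := hm.1.2
      _ ≤ Phi P v := h.le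

lemma exists_phi_gap {m : Fin d → ℝ} (hm : m ∈ Lset B) (hm0 : m ≠ 0)
    (hmin : ∀ v ∈ Lset B, v ≠ 0 → Phi P m ≤ Phi P v) :
    ∃ δ : ℝ, 0 < δ ∧ ∀ v ∈ Lset B, v ≠ 0 → Phi P v ≠ Phi P m → Phi P m + δ ≤ Phi P v := by
  classical
  set A2 : Set (Fin d → ℝ) :=
    {v | (v ∈ Lset B ∧ Phi P v ≤ Phi P m + 1) ∧ v ≠ 0 ∧ Phi P v ≠ Phi P m} with hA2
  have hA2fin : A2.Finite := by
    apply Set.Finite.subset (finite_low_Phi B P (Phi P m + 1))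
    rintro v ⟨⟨h1, h2⟩, _⟩
    exact ⟨h1, h2⟩
  rcases A2.eq_empty_or_nonempty with hE | hNE
  · refine ⟨1, one_pos, ?_⟩
    intro v hv hv0 hvne
    by_contra hcon
    push_neg at hcon
    have : v ∈ A2 := ⟨⟨hv, by linarith⟩, hv0, hvne⟩
    rw [hE] at this
    exact this
  · obtain ⟨m2, hm2, hm2min⟩ := Set.exists_min_image A2 (Phi P) hA2fin hNE
    have hm2gt : Phi P m < Phi P m2 := by
      rcases lt_or_eq_of_le (hmin m2 hm2.1.1 hm2.2.1) with h | h
      · exact h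
      · exact absurd h.symm hm2.2.2
    refine ⟨min (Phi P m2 - Phi P m) 1, by simp [hm2gt], ?_⟩
    intro v hv hv0 hvne
    rcases le_or_gt (Phi P v) (Phi P m + 1) with h | h
    · have : v ∈ A2 := ⟨⟨hv, h⟩, hv0, hvne⟩
      have h2 := hm2min v this
      have h3 : min (Phi P m2 - Phi P m) 1 ≤ Phi P m2 - Phi P m := min_le_left _ _
      linarith
    · have h3 : min (Phi P m2 - Phi P m) 1 ≤ 1 := min_le_right _ _
      linarith

lemma prim_of_phi_min {m v : Fin d → ℝ}
    (hmin : ∀ w ∈ Lset B, w ≠ 0 → Phi P m ≤ Phi P w)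
    (hv : v ∈ Lset B) (hv0 : v ≠ 0) (hveq : Phi P v = Phi P m) :
    IsPrimitiveVec (Lset B) v := by
  refine ⟨hv, hv0, ?_⟩
  intro t ht0 ht1 hmem
  have h1 : t • v ≠ 0 := smul_ne_zero (ne_of_gt ht0) hv0
  have h2 := hmin (t • v) hmem h1
  rw [Phi_smul P ht0.le, hveq] at h2
  have h3 : 0 < Phi P m := by
    have := Phi_pos P hv0
    rw [hveq] at this
    exact this
  nlinarith

end MinLattice

end CSAux

set_option maxHeartbeats 3000000

/-- the diameter directions of a lattice complete `d`-simplex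
span all of `ℝ^d`. -/
theorem complete_simplex_diameter_directions_span {d : ℕ}
    (S L : Set (Fin d → ℝ)) (hL : IsLattice L)
    (hsimplex : ∃ v : Fin (d + 1) → (Fin d → ℝ),
      AffineIndependent ℝ v ∧ S = convexHull ℝ (Set.range v))
    (hcomp : IsLatticeComplete S L) :
    Submodule.span ℝ {v | IsDiameterDirection S L v} = ⊤ := by
  classical
  by_contra hspan
  rcases Nat.eq_zero_or_pos d with rfl | hd
  · -- trivial case d = 0
    apply hspan
    rw [eq_top_iff]
    intro w _
    have hw : w = 0 := funext fun i => i.elim0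
    rw [hw]; exact Submodule.zero_mem _
  obtain ⟨B, hLB⟩ := hL
  have hLL : L = CSAux.Lset B := hLB
  obtain ⟨vv, hvv, hS⟩ := hsimplex
  have htot : affineSpan ℝ (Set.range vv) = ⊤ := by
    rw [hvv.affineSpan_eq_top_iff_card_eq_finrank_add_one]
    simp [Module.finrank_fintype_fun_eq_card]
  set P : AffineBasis (Fin (d+1)) ℝ (Fin d → ℝ) := ⟨vv, hvv, htot⟩ with hPdef
  have hSP : S = convexHull ℝ (Set.range ⇑P) := by rw [hS]; rfl
  -- minimal Phi over nonzero lattice vectors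
  obtain ⟨m, hmL, hm0, hmin⟩ := CSAux.exists_phi_min B P hd
  set Pm : ℝ := CSAux.Phi P m with hPmdef
  have hPm : 0 < Pm := CSAux.Phi_pos P hm0
  set D : ℝ := 1 / Pm with hDdef
  have hD0 : 0 ≤ D := by positivity
  have hDmul : D * Pm = 1 := by rw [hDdef]; field_simp
  obtain ⟨δ, hδ, hgap⟩ := CSAux.exists_phi_gap B P hmL hm0 hmin
  have hgap' : ∀ v ∈ CSAux.Lset B, v ≠ 0 → CSAux.Phi P v ≠ Pm → Pm + δ ≤ CSAux.Phi P v :=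
    fun v hv hv0 hne => hgap v hv hv0 hne
  -- the diameter chord for m
  obtain ⟨a₀, ha₀⟩ := (CSAux.chord_iff P hD0 m).2 (le_of_eq hDmul)
  have ha₀S : segment ℝ a₀ (a₀ + D • m) ⊆ S := by rw [hSP]; exact ha₀
  have hmprimL : IsPrimitiveVec L m := by
    rw [hLL]; exact CSAux.prim_of_phi_min B P hmin hmL hm0 rfl
  -- latticeDiam S = D
  have hTS : latticeDiam S L = D := by
    unfold latticeDiam
    apply IsGreatest.csSup_eq
    constructor
    · exact ⟨hD0, a₀, m, hmprimL, ha₀S⟩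
    · rintro t ⟨ht0, a, v, hvprim, hseg⟩
      have hvL : v ∈ CSAux.Lset B := by rw [← hLL]; exact hvprim.1
      have h1 : t * CSAux.Phi P v ≤ 1 := by
        apply (CSAux.chord_iff P ht0 v).1
        exact ⟨a, by rw [← hSP]; exact hseg⟩
      have h2 : Pm ≤ CSAux.Phi P v := hmin v hvL hvprim.2.1
      rw [hDdef, le_div_iff₀ hPm]
      nlinarith
  -- a functional vanishing on all diameter directions
  have hlt : Submodule.span ℝ {v | IsDiameterDirection S L v} < ⊤ := lt_top_iff_ne_top.2 hspan
  obtain ⟨f, hf0, hfbot⟩ := Submodule.exists_dual_map_eq_bot_of_lt_top hlt inferInstance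
  have hfV : ∀ v, v ∈ CSAux.Lset B → v ≠ 0 → CSAux.Phi P v = Pm → f v = 0 := by
    intro v hv hv0 hveq
    have hdd : IsDiameterDirection S L v := by
      refine ⟨by rw [hLL]; exact CSAux.prim_of_phi_min B P hmin hv hv0 hveq, ?_⟩
      rw [hTS]
      have hchord : D * CSAux.Phi P v ≤ 1 := by rw [hveq]; exact le_of_eq hDmul
      obtain ⟨a, ha⟩ := (CSAux.chord_iff P hD0 v).2 hchord
      exact ⟨a, by rw [hSP]; exact ha⟩
    have hmem : f v ∈ Submodule.map f (Submodule.span ℝ {v | IsDiameterDirection S L v}) :=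
      Submodule.mem_map_of_mem (Submodule.subset_span hdd)
    rw [hfbot] at hmem
    simpa using hmem
  -- coordinates of f on the vertices
  set φ : Fin (d+1) → ℝ := fun i => f (⇑P i) with hφdef
  set c : ℝ := (∑ i, φ i) / ((d:ℝ) + 1) with hcdef
  set ψ : Fin (d+1) → ℝ := fun i => φ i - c with hψdef
  have hdpos : (0:ℝ) < (d:ℝ) + 1 := by positivity
  have hψsum : ∑ i, ψ i = 0 := by
    simp only [hψdef]
    rw [Finset.sum_sub_distrib, Finset.sum_const, Finset.card_univ, Fintype.card_fin,
      nsmul_eq_mul, hcdef]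
    push_cast
    field_simp
    ring
  have hflw : ∀ u, f u = ∑ i, CSAux.lw P i u * φ i := by
    intro u
    have h1 := P.linear_combination_coord_eq_self u
    have hfu : f u = ∑ i, P.coord i u * φ i := by
      conv_lhs => rw [← h1]
      rw [map_sum]
      exact Finset.sum_congr rfl fun i _ => by rw [map_smul, smul_eq_mul]
    have hf0' : (0:ℝ) = ∑ i, P.coord i 0 * φ i := by
      have h0 := P.linear_combination_coord_eq_self (0 : Fin d → ℝ)
      have : f (0 : Fin d → ℝ) = ∑ i, P.coord i 0 * φ i := by
        conv_lhs => rw [← h0]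
        rw [map_sum]
        exact Finset.sum_congr rfl fun i _ => by rw [map_smul, smul_eq_mul]
      rw [← this, map_zero]
    have hcu : ∀ i, P.coord i u = P.coord i 0 + CSAux.lw P i u := by
      intro i
      have h2 := CSAux.coord_add_smul P i 0 u 1
      simpa using h2
    rw [hfu]
    calc ∑ i, P.coord i u * φ i
        = ∑ i, (P.coord i 0 * φ i + CSAux.lw P i u * φ i) := by
          exact Finset.sum_congr rfl fun i _ => by rw [hcu i]; ring
      _ = ∑ i, P.coord i 0 * φ i + ∑ i, CSAux.lw P i u * φ i := Finset.sum_add_distrib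
      _ = ∑ i, CSAux.lw P i u * φ i := by rw [← hf0']; ring
  have hfψ : ∀ u, f u = ∑ i, CSAux.lw P i u * ψ i := by
    intro u
    rw [hflw u]
    have hexp : ∑ i, CSAux.lw P i u * ψ i
        = ∑ i, CSAux.lw P i u * φ i - c * ∑ i, CSAux.lw P i u := by
      rw [Finset.mul_sum, ← Finset.sum_sub_distrib]
      exact Finset.sum_congr rfl fun i _ => by simp only [hψdef]; ring
    rw [hexp, CSAux.sum_lw]
    ring
  have hψne : ∃ k0, ψ k0 ≠ 0 := by
    by_contra hcon
    push_neg at hcon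
    apply hf0
    apply LinearMap.ext
    intro u
    rw [hfψ u]
    simp [hcon]
  -- maximum of ψ
  obtain ⟨k, -, hMk⟩ := Finset.exists_max_image Finset.univ ψ ⟨0, Finset.mem_univ 0⟩
  set M : ℝ := ψ k with hMdef
  have hM : ∀ j, ψ j ≤ M := fun j => hMk j (Finset.mem_univ j)
  have hMpos : 0 < M := by
    rcases lt_or_ge 0 M with h | h
    · exact h
    · exfalso
      obtain ⟨k0, hk0⟩ := hψne
      have hall : ∀ i ∈ Finset.univ, ψ i ≤ 0 := fun i _ => le_trans (hM i) h
      exact hk0 ((Finset.sum_eq_zero_iff_of_nonpos hall).1 hψsum k0 (Finset.mem_univ k0))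
  -- base weights
  set bs : Fin (d+1) → ℝ := fun i => (1 - ψ i / M) / ((d:ℝ) + 1) with hbsdef
  have hbs0 : ∀ i, 0 ≤ bs i := by
    intro i
    apply div_nonneg _ hdpos.le
    have h1 : ψ i / M ≤ 1 := by rw [div_le_one hMpos]; exact hM i
    linarith
  have hbssum : ∑ i, bs i = 1 := by
    simp only [hbsdef]
    rw [← Finset.sum_div]
    have h1 : ∑ i, (1 - ψ i / M) = ((d:ℝ)+1) := by
      rw [Finset.sum_sub_distrib, Finset.sum_const, Finset.card_univ, Fintype.card_fin,
        ← Finset.sum_div, hψsum]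
      push_cast
      simp
    rw [h1, div_self hdpos.ne']
  have hbsk : bs k = 0 := by
    simp only [hbsdef]
    rw [← hMdef, div_self hMpos.ne']
    simp
  -- key lemma: for each Phi-minimizer the "good mass" is positive
  set gfn : (Fin d → ℝ) → ℝ := fun v => ∑ i, (if 0 ≤ CSAux.lw P i v then bs i else 0)
    with hgfndef
  have hkeyLemma : ∀ v, v ∈ CSAux.Lset B → v ≠ 0 → CSAux.Phi P v = Pm → 0 < gfn v := by
    intro v hv hv0 hveq
    have hfψv : ∑ i, CSAux.lw P i v * ψ i = 0 := by
      rw [← hfψ v]; exact hfV v hv hv0 hveq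
    by_contra hcon
    push_neg at hcon
    have hterms_nonneg : ∀ i ∈ Finset.univ,
        0 ≤ (if 0 ≤ CSAux.lw P i v then bs i else 0) := by
      intro i _
      split
      · exact hbs0 i
      · exact le_refl 0
    have hg0 : gfn v = 0 :=
      le_antisymm hcon (Finset.sum_nonneg hterms_nonneg)
    have hterm0 := (Finset.sum_eq_zero_iff_of_nonneg hterms_nonneg).1 hg0
    have hψM : ∀ i, 0 ≤ CSAux.lw P i v → ψ i = M := by
      intro i hi
      have h1 := hterm0 i (Finset.mem_univ i)
      rw [if_pos hi] at h1
      simp only [hbsdef] at h1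
      have h1' : 1 - ψ i / M = 0 := by
        by_contra hne2
        exact (div_ne_zero hne2 hdpos.ne') h1
      have h3 : ψ i / M = 1 := by linarith
      field_simp [hMpos.ne'] at h3
      linarith
    have hA0 : ∑ i, CSAux.lw P i v * (M - ψ i) = 0 := by
      have h1 : ∑ i, CSAux.lw P i v * (M - ψ i)
          = M * (∑ i, CSAux.lw P i v) - ∑ i, CSAux.lw P i v * ψ i := by
        rw [Finset.mul_sum, ← Finset.sum_sub_distrib]
        exact Finset.sum_congr rfl fun i _ => by ring
      rw [h1, CSAux.sum_lw, hfψv]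
      ring
    have hA_np : ∀ i ∈ Finset.univ, CSAux.lw P i v * (M - ψ i) ≤ 0 := by
      intro i _
      rcases le_or_gt 0 (CSAux.lw P i v) with h | h
      · rw [hψM i h]; simp
      · exact mul_nonpos_of_nonpos_of_nonneg h.le (by linarith [hM i])
    have hAeach := (Finset.sum_eq_zero_iff_of_nonpos hA_np).1 hA0
    have hψMall : ∀ i, ψ i = M := by
      intro i
      rcases le_or_gt 0 (CSAux.lw P i v) with h | h
      · exact hψM i h
      · have h1 := hAeach i (Finset.mem_univ i)
        rcases mul_eq_zero.1 h1 with h' | h'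
        · exact absurd h' (ne_of_lt h)
        · linarith
    have hsM : ∑ i, ψ i = ((d:ℝ)+1) * M := by
      rw [Finset.sum_congr rfl (fun i _ => hψMall i), Finset.sum_const, Finset.card_univ,
        Fintype.card_fin, nsmul_eq_mul]
      push_cast
      ring
    rw [hψsum] at hsM
    nlinarith
  -- the finite set of minimizers and the uniform bound
  set VV : Set (Fin d → ℝ) := {v | v ∈ CSAux.Lset B ∧ v ≠ 0 ∧ CSAux.Phi P v = Pm} with hVVdef
  have hVVfin : VV.Finite := by
    apply Set.Finite.subset (CSAux.finite_low_Phi B P Pm)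
    rintro v ⟨h1, _, h3⟩
    exact ⟨h1, le_of_eq h3⟩
  have hVVne : VV.Nonempty := ⟨m, hmL, hm0, rfl⟩
  obtain ⟨v₀, hv₀, hv₀min⟩ := Set.exists_min_image VV gfn hVVfin hVVne
  set gstar : ℝ := gfn v₀ with hgstardef
  have hgstar : 0 < gstar := hkeyLemma v₀ hv₀.1 hv₀.2.1 hv₀.2.2
  -- the perturbation size
  set T1 : ℝ := ∑ i, |ψ i| with hT1def
  have hT1 : 0 < T1 := by
    obtain ⟨k0, hk0⟩ := hψne
    have h1 : |ψ k0| ≤ T1 := by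
      rw [hT1def]
      exact Finset.single_le_sum (f := fun i => |ψ i|) (fun i _ => abs_nonneg _)
        (Finset.mem_univ k0)
    have h2 := abs_pos.2 hk0
    linarith
  set η : ℝ := min gstar (δ / Pm) / T1 with hηdef
  have hηpos : 0 < η := div_pos (lt_min hgstar (div_pos hδ hPm)) hT1
  have hηT1 : η * T1 = min gstar (δ / Pm) := by
    rw [hηdef]
    exact div_mul_cancel₀ (min gstar (δ / Pm)) hT1.ne'
  -- the perturbed weights and the new point x
  set b : Fin (d+1) → ℝ := fun i => bs i - η * ψ i with hbdef
  have hbsum1 : ∑ i, b i = 1 := by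
    simp only [hbdef]
    rw [Finset.sum_sub_distrib, hbssum, ← Finset.mul_sum, hψsum, mul_zero, sub_zero]
  have hbk : b k < 0 := by
    have h1 : b k = bs k - η * ψ k := rfl
    rw [h1, hbsk, ← hMdef]
    have := mul_pos hηpos hMpos
    linarith
  set x : Fin d → ℝ := ∑ i, b i • ⇑P i with hxdef
  have hcoordx : ∀ j, P.coord j x = b j := by
    intro j
    have h1 := P.coord_apply_combination_of_mem (Finset.mem_univ j) hbsum1
    rwa [Finset.univ.affineCombination_eq_linear_combination _ _ hbsum1] at h1
  have hxS : x ∉ S := by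
    rw [hSP, CSAux.mem_simplex_iff]
    push_neg
    exact ⟨k, by rw [hcoordx k]; exact hbk⟩
  set C' : Set (Fin d → ℝ) := convexHull ℝ (insert x S) with hC'def
  have hSC' : S ⊆ C' := (Set.subset_insert x S).trans (subset_convexHull ℝ _)
  have hxC' : x ∈ C' := subset_convexHull ℝ _ (Set.mem_insert _ _)
  have hSne : S.Nonempty := ⟨vv 0, by rw [hS]; exact subset_convexHull ℝ _ ⟨0, rfl⟩⟩
  -- representation of points of C'
  have hrepr : ∀ y ∈ C', ∃ s : ℝ, 0 ≤ s ∧ s ≤ 1 ∧ ∀ i, s * b i ≤ P.coord i y := by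
    intro y hy
    rw [hC'def, convexHull_insert hSne, mem_convexJoin] at hy
    obtain ⟨x', hx', z, hz, hyseg⟩ := hy
    rw [Set.mem_singleton_iff] at hx'
    subst hx'
    have hconvS : Convex ℝ S := by rw [hSP]; exact convex_convexHull ℝ _
    have hzS : z ∈ S := by rwa [hconvS.convexHull_eq] at hz
    rw [segment_eq_image] at hyseg
    obtain ⟨θ, hθ, hyeq⟩ := hyseg
    refine ⟨1 - θ, by linarith [hθ.2], by linarith [hθ.1], ?_⟩
    intro i
    have hcombo := Convex.combo_affine_apply (𝕜 := ℝ) (f := P.coord i) (x := x) (y := z)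
      (a := 1 - θ) (b := θ) (by ring)
    have hyeq' : (1 - θ) • x + θ • z = y := by simpa using hyeq
    rw [hyeq'] at hcombo
    have hz0 : 0 ≤ P.coord i z := by
      rw [hSP] at hzS
      exact (CSAux.mem_simplex_iff P z).1 hzS i
    rw [hcombo, hcoordx i]
    have h2 : 0 ≤ θ * P.coord i z := mul_nonneg hθ.1 hz0
    simp only [smul_eq_mul]
    nlinarith
  -- the gain sums
  set GS : (Fin d → ℝ) → ℝ := fun u => ∑ i, CSAux.Gq (b i) (CSAux.lw P i u) with hGSdef
  have hb_lb : ∀ i, -(η * |ψ i|) ≤ b i := by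
    intro i
    have h1 : η * ψ i ≤ η * |ψ i| := mul_le_mul_of_nonneg_left (le_abs_self _) hηpos.le
    have h2 := hbs0 i
    have h3 : b i = bs i - η * ψ i := rfl
    linarith
  have hGq_lb : ∀ i u, -(η * |ψ i|) ≤ CSAux.Gq (b i) (CSAux.lw P i u) := by
    intro i u
    have hnn : 0 ≤ η * |ψ i| := mul_nonneg hηpos.le (abs_nonneg _)
    unfold CSAux.Gq
    split
    · exact hb_lb i
    split
    · linarith
    · have := le_max_left 0 (b i)
      linarith
  have hGS_lb : ∀ u, -(η * T1) ≤ GS u := by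
    intro u
    have h1 := Finset.sum_le_sum (fun i (_ : i ∈ Finset.univ) => hGq_lb i u)
    have h2 : ∑ i, -(η * |ψ i|) = -(η * T1) := by
      rw [hT1def, Finset.mul_sum, ← Finset.sum_neg_distrib]
    rw [h2] at h1
    exact h1
  have hGS_V : ∀ v, v ∈ CSAux.Lset B → v ≠ 0 → CSAux.Phi P v = Pm → 0 ≤ GS v := by
    intro v hv hv0 hveq
    have hper : ∀ i ∈ Finset.univ, (if 0 ≤ CSAux.lw P i v then bs i else 0) - η * |ψ i|
        ≤ CSAux.Gq (b i) (CSAux.lw P i v) := by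
      intro i _
      have hψabs : η * ψ i ≤ η * |ψ i| := mul_le_mul_of_nonneg_left (le_abs_self _) hηpos.le
      have hbi : b i = bs i - η * ψ i := rfl
      have hnn : 0 ≤ η * |ψ i| := mul_nonneg hηpos.le (abs_nonneg _)
      unfold CSAux.Gq
      by_cases h1 : 0 < CSAux.lw P i v
      · rw [if_pos h1, if_pos h1.le]
        linarith
      · rw [if_neg h1]
        by_cases h2 : CSAux.lw P i v < 0
        · rw [if_pos h2, if_neg (by linarith)]
          linarith
        · have h3 : 0 ≤ CSAux.lw P i v := by linarith [lt_or_ge (CSAux.lw P i v) 0]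
          rw [if_neg h2, if_pos h3]
          have := le_max_right 0 (b i)
          linarith [le_max_right (0:ℝ) (b i)]
    have h1 := Finset.sum_le_sum hper
    have h2 : ∑ i, ((if 0 ≤ CSAux.lw P i v then bs i else 0) - η * |ψ i|)
        = gfn v - η * T1 := by
      rw [Finset.sum_sub_distrib, ← Finset.mul_sum, ← hT1def]
    rw [h2] at h1
    have h3 : gstar ≤ gfn v := hv₀min v ⟨hv, hv0, hveq⟩
    have h4 : η * T1 ≤ gstar := by rw [hηT1]; exact min_le_left _ _
    have h5 : GS v = ∑ i, CSAux.Gq (b i) (CSAux.lw P i v) := rfl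
    linarith
  -- the master chord bound in C'
  have hmaster : ∀ (t : ℝ) (u y : Fin d → ℝ), 0 ≤ t →
      segment ℝ y (y + t • u) ⊆ C' →
      t * CSAux.Phi P u ≤ 1 - min (min (GS u) (GS (-u))) 0 := by
    intro t u y ht hseg
    obtain ⟨s, hs0, hs1, hsb⟩ := hrepr _ (hseg (left_mem_segment ℝ _ _))
    obtain ⟨s', hs'0, hs'1, hs'b⟩ := hrepr _ (hseg (right_mem_segment ℝ _ _))
    have hsum1 : ∑ i, P.coord i y = 1 := P.sum_coord_apply_eq_one y
    have hcy' : ∀ i, P.coord i (y + t • u) = P.coord i y + t * CSAux.lw P i u :=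
      fun i => CSAux.coord_add_smul P i y u t
    have hminmax : ∀ g : ℝ, min (min (GS u) (GS (-u))) 0 ≤ g →
        ∀ β : ℝ, 0 ≤ β → β ≤ 1 → g = GS u ∨ g = GS (-u) →
          min (min (GS u) (GS (-u))) 0 ≤ β * g := by
      intro g hg β hβ0 hβ1 hcase
      rcases le_or_gt 0 g with h | h
      · calc min (min (GS u) (GS (-u))) 0 ≤ 0 := min_le_right _ _
          _ ≤ β * g := mul_nonneg hβ0 h
      · have : g ≤ β * g := by nlinarith
        linarith
    rcases le_total s' s with hss | hss
    · -- case s' ≤ s : use key1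
      have hper : ∀ i ∈ Finset.univ,
          s' * b i + (t * max 0 (-(CSAux.lw P i u))
            + (s - s') * CSAux.Gq (b i) (CSAux.lw P i u)) ≤ P.coord i y := by
        intro i _
        have h1 := hsb i
        have h2 := hs'b i
        rw [hcy' i] at h2
        have hkey := CSAux.key1 (α := s - s') (t := t) (b := b i) (w := CSAux.lw P i u)
          (by linarith) ht
        have hmax : max ((s - s') * b i) (-(t * CSAux.lw P i u)) ≤ P.coord i y - s' * b i := by
          apply max_le
          · nlinarith
          · linarith
        linarith
      have hsum2 := Finset.sum_le_sum hper
      rw [hsum1] at hsum2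
      have hexp : ∑ i, (s' * b i + (t * max 0 (-(CSAux.lw P i u))
            + (s - s') * CSAux.Gq (b i) (CSAux.lw P i u)))
          = s' * 1 + (t * CSAux.Phi P u + (s - s') * GS u) := by
        rw [Finset.sum_add_distrib, Finset.sum_add_distrib, ← Finset.mul_sum, ← Finset.mul_sum,
          ← Finset.mul_sum, hbsum1]
        rfl
      rw [hexp] at hsum2
      have hmg : min (min (GS u) (GS (-u))) 0 ≤ (s - s') * GS u := by
        apply hminmax (GS u) (le_trans (min_le_left _ _) (min_le_left _ _)) (s - s')
          (by linarith) (by linarith) (Or.inl rfl)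
      linarith
    · -- case s ≤ s' : use key2
      have hper : ∀ i ∈ Finset.univ,
          s * b i + (t * max 0 (-(CSAux.lw P i u))
            + (s' - s) * CSAux.Gq (b i) (-(CSAux.lw P i u))) ≤ P.coord i y := by
        intro i _
        have h1 := hsb i
        have h2 := hs'b i
        rw [hcy' i] at h2
        have hkey := CSAux.key2 (α := s' - s) (t := t) (b := b i) (w := CSAux.lw P i u)
          (by linarith) ht
        have hmax : max 0 ((s' - s) * b i - t * CSAux.lw P i u) ≤ P.coord i y - s * b i := by
          apply max_le
          · linarith
          · linarith
        linarith
      have hsum2 := Finset.sum_le_sum hper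
      rw [hsum1] at hsum2
      have hGSneg : ∑ i, CSAux.Gq (b i) (-(CSAux.lw P i u)) = GS (-u) := by
        rw [hGSdef]
        exact Finset.sum_congr rfl fun i _ => by rw [CSAux.lw_neg]
      have hexp : ∑ i, (s * b i + (t * max 0 (-(CSAux.lw P i u))
            + (s' - s) * CSAux.Gq (b i) (-(CSAux.lw P i u))))
          = s * 1 + (t * CSAux.Phi P u + (s' - s) * GS (-u)) := by
        rw [Finset.sum_add_distrib, Finset.sum_add_distrib, ← Finset.mul_sum, ← Finset.mul_sum,
          ← Finset.mul_sum, hbsum1, hGSneg]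
        rfl
      rw [hexp] at hsum2
      have hmg : min (min (GS u) (GS (-u))) 0 ≤ (s' - s) * GS (-u) := by
        apply hminmax (GS (-u)) (le_trans (min_le_left _ _) (min_le_right _ _)) (s' - s)
          (by linarith) (by linarith) (Or.inr rfl)
      linarith
  -- latticeDiam C' = D
  have hTC' : latticeDiam C' L = D := by
    unfold latticeDiam
    apply IsGreatest.csSup_eq
    constructor
    · exact ⟨hD0, a₀, m, hmprimL, fun p hp => hSC' (ha₀S hp)⟩
    · rintro t ⟨ht0, y, u, huprim, hseg⟩
      have huL : u ∈ CSAux.Lset B := by rw [← hLL]; exact huprim.1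
      have hu0 := huprim.2.1
      have hbound := hmaster t u y ht0 hseg
      rcases eq_or_ne (CSAux.Phi P u) Pm with hueq | hune
      · have hGu : 0 ≤ GS u := hGS_V u huL hu0 hueq
        have hGnu : 0 ≤ GS (-u) := by
          apply hGS_V (-u) (CSAux.neg_mem_Lset B huL) (neg_ne_zero.2 hu0)
          rw [CSAux.Phi_neg]; exact hueq
        have hminpos : (0:ℝ) ≤ min (min (GS u) (GS (-u))) 0 :=
          le_min (le_min hGu hGnu) le_rfl
        have h1 : t * Pm ≤ 1 := by rw [← hueq]; linarith
        rw [hDdef, le_div_iff₀ hPm]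
        linarith
      · have hgap2 := hgap' u huL hu0 hune
        have h4 : -(η * T1) ≤ min (min (GS u) (GS (-u))) 0 := by
          apply le_min (le_min (hGS_lb u) (hGS_lb (-u)))
          have : 0 ≤ η * T1 := mul_nonneg hηpos.le hT1.le
          linarith
        have h1 : t * CSAux.Phi P u ≤ 1 + η * T1 := by linarith
        have h5 : η * T1 ≤ δ / Pm := by rw [hηT1]; exact min_le_right _ _
        have h6 : t * (Pm + δ) ≤ t * CSAux.Phi P u := mul_le_mul_of_nonneg_left hgap2 ht0
        have h7 : t * (Pm + δ) ≤ (Pm + δ) / Pm := by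
          have he : (1:ℝ) + δ / Pm = (Pm + δ) / Pm := by field_simp
          linarith
        have h8 : 0 < Pm + δ := by linarith
        rw [hDdef, le_div_iff₀ hPm]
        have h9 : (t * Pm) * (Pm + δ) ≤ 1 * (Pm + δ) := by
          have h10 := mul_le_mul_of_nonneg_right h7 hPm.le
          rw [div_mul_cancel₀ _ hPm.ne'] at h10
          nlinarith
        exact le_of_mul_le_mul_right (by linarith) h8
  -- C' is a convex body strictly containing S
  have hC'eq : C' = convexHull ℝ (insert x (Set.range ⇑P)) := by
    apply Set.Subset.antisymm
    · rw [hC'def]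
      apply convexHull_min _ (convex_convexHull ℝ _)
      intro y hy
      rcases hy with rfl | hyS
      · exact subset_convexHull ℝ _ (Set.mem_insert _ _)
      · rw [hSP] at hyS
        exact convexHull_mono (Set.subset_insert _ _) hyS
    · apply convexHull_mono
      intro y hy
      rcases hy with rfl | hyR
      · exact Set.mem_insert _ _
      · exact Set.mem_insert_of_mem _ (by rw [hSP]; exact subset_convexHull ℝ _ hyR)
  have hC'body : IsConvexBody C' := by
    refine ⟨convex_convexHull ℝ _, ?_, ?_⟩
    · rw [hC'eq]
      exact ((Set.finite_range ⇑P).insert x).isCompact_convexHull (𝕜 := ℝ)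
    · exact Set.Nonempty.mono (interior_mono hSC') hcomp.1.2.2
  have hss : S ⊂ C' := (Set.ssubset_iff_of_subset hSC').2 ⟨x, hxC', hxS⟩
  exact hcomp.2 C' hC'body hss (by rw [hTC', hTS])
end
end
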